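/- arXiv:1103.5179 — 4 statements merged into one kernel-verified Lean document; each statement's English description precedes it below -/
import Mathlib

section
/- Let W be a finite Coxeter group with Coxeter arrangement A, B a W-stable arrangement disjoint from A, and C = A ∪ B. For every chamber b of B, the isotropy subgroup W_b = {w ∈ W : wb = b} acts freely and transitively on the fiber φ_B^{-1}(b), i.e., on the set of chambers of C contained in b. -/
open Set

variable {E : Type*} [NormedAddCommGroup E] [InnerProductSpace ℝ E] [FiniteDimensional ℝ E]

/-- A linear hyperplane (through the origin). -/
def IsLinearHyperplane (H : Set E) : Prop :=
  ∃ f : E →ₗ[ℝ] ℝ, f ≠ 0 ∧ H = {x | f x = 0}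

/-- An affine hyperplane. -/
def IsAffineHyperplane (H : Set E) : Prop :=
  ∃ (f : E →ₗ[ℝ] ℝ) (c : ℝ), f ≠ 0 ∧ H = {x | f x = c}

/-- A hyperplane arrangement: a finite set of affine hyperplanes. -/
def IsArrangement (𝒜 : Set (Set E)) : Prop :=
  𝒜.Finite ∧ ∀ H ∈ 𝒜, IsAffineHyperplane H

/-- The chambers of an arrangement: the connected components of the complement of the
union of its hyperplanes. -/
def chambers (𝒜 : Set (Set E)) : Set (Set E) :=
  {c | ∃ x ∈ (⋃₀ 𝒜)ᶜ, c = connectedComponentIn (⋃₀ 𝒜)ᶜ x}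

/-- An orthogonal transformation is a reflection if its fixed-point set is a hyperplane. -/
def IsReflection (w : E ≃ₗᵢ[ℝ] E) : Prop :=
  IsLinearHyperplane {x | w x = x}

/-- The Coxeter arrangement of `W`: the set of all reflecting hyperplanes of `W`. -/
def coxeterArrangement (W : Subgroup (E ≃ₗᵢ[ℝ] E)) : Set (Set E) :=
  {H | ∃ w ∈ W, IsReflection w ∧ H = {x | w x = x}}

/-- `W` is a reflection (Coxeter) group: it is generated by its reflections. -/
def IsReflectionGroup (W : Subgroup (E ≃ₗᵢ[ℝ] E)) : Prop :=
  W = Subgroup.closure {w : E ≃ₗᵢ[ℝ] E | w ∈ W ∧ IsReflection w}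

/-- `ℬ` is stable under the natural action of `W`. -/
def WStable (W : Subgroup (E ≃ₗᵢ[ℝ] E)) (ℬ : Set (Set E)) : Prop :=
  ∀ w ∈ W, ∀ H ∈ ℬ, (⇑w) '' H ∈ ℬ

set_option linter.unusedSectionVars false
set_option linter.unusedVariables false
open RealInnerProductSpace

noncomputable def srefL (α : E) : E →ₗ[ℝ] E where
  toFun := fun x => x - (2 * ⟪α, x⟫ / ⟪α, α⟫) • α
  map_add' := by
    intro x y; simp [inner_add_right, mul_add, add_div, add_smul]; abel
  map_smul' := by
    intro c x
    simp only [real_inner_smul_right, RingHom.id_apply, smul_sub, smul_smul]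
    congr 1
    ring_nf

lemma srefL_apply (α x : E) : srefL α x = x - (2 * ⟪α, x⟫ / ⟪α, α⟫) • α := rfl

lemma srefL_invol (α : E) (x : E) : srefL α (srefL α x) = x := by
  rcases eq_or_ne α 0 with h | h
  · simp [srefL_apply, h]
  · have hne : ⟪α, α⟫ ≠ 0 := by
      simpa using (inner_self_ne_zero (𝕜 := ℝ)).mpr h
    simp only [srefL_apply, inner_sub_right, real_inner_smul_right]
    have : (2 * (⟪α, x⟫ - 2 * ⟪α, x⟫ / ⟪α, α⟫ * ⟪α, α⟫) / ⟪α, α⟫) = -(2 * ⟪α, x⟫ / ⟪α, α⟫) := by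
      field_simp; ring
    rw [this]
    module

lemma srefL_norm (α : E) (x : E) : ‖srefL α x‖ = ‖x‖ := by
  rcases eq_or_ne α 0 with h | h
  · simp [srefL_apply, h]
  · have hne : ⟪α, α⟫ ≠ 0 := by simpa using (inner_self_ne_zero (𝕜 := ℝ)).mpr h
    have key : ‖x - (2 * ⟪α, x⟫ / ⟪α, α⟫) • α‖ ^ 2 = ‖x‖ ^ 2 := by
      rw [norm_sub_sq_real]
      simp only [real_inner_smul_right, norm_smul, mul_pow, Real.norm_eq_abs, sq_abs]
      rw [← real_inner_self_eq_norm_sq, real_inner_comm x α]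
      rw [show (‖α‖:ℝ)^2 = ⟪α, α⟫ from (real_inner_self_eq_norm_sq α).symm]
      field_simp
      ring
    have h1 : (0:ℝ) ≤ ‖x - (2 * ⟪α, x⟫ / ⟪α, α⟫) • α‖ := norm_nonneg _
    have h2 : (0:ℝ) ≤ ‖x‖ := norm_nonneg _
    show ‖x - (2 * ⟪α, x⟫ / ⟪α, α⟫) • α‖ = ‖x‖
    nlinarith [key]

/-- reflection in the hyperplane orthogonal to α (identity if α = 0) -/
noncomputable def sref (α : E) : E ≃ₗᵢ[ℝ] E :=
  { LinearEquiv.ofInvolutive (srefL α) (srefL_invol α) with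
    norm_map' := srefL_norm α }

lemma sref_apply (α x : E) : sref α x = x - (2 * ⟪α, x⟫ / ⟪α, α⟫) • α := rfl

lemma sref_apply_unit {α : E} (h : ‖α‖ = 1) (x : E) : sref α x = x - (2 * ⟪α, x⟫) • α := by
  rw [sref_apply]
  have : ⟪α, α⟫ = 1 := by rw [real_inner_self_eq_norm_sq, h]; norm_num
  rw [this, div_one]

lemma sref_sq (α : E) : sref α * sref α = 1 := by
  ext x; exact srefL_invol α x

lemma sref_inv (α : E) : (sref α)⁻¹ = sref α := by
  rw [eq_comm, eq_inv_iff_mul_eq_one, sref_sq]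

lemma sref_smul {c : ℝ} (hc : c ≠ 0) (α : E) : sref (c • α) = sref α := by
  ext x
  rcases eq_or_ne α 0 with h | h
  · simp [h, sref_apply]
  · have hne : ⟪α, α⟫ ≠ 0 := by simpa using (inner_self_ne_zero (𝕜 := ℝ)).mpr h
    have hs : (2 * (c * ⟪α, x⟫) / (c * (c * ⟪α, α⟫))) * c = 2 * ⟪α, x⟫ / ⟪α, α⟫ := by
      field_simp
    rw [sref_apply, sref_apply, real_inner_smul_left, real_inner_smul_left,
      real_inner_smul_right, smul_smul, hs]

lemma sref_neg (α : E) : sref (-α) = sref α := by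
  have := sref_smul (c := -1) (by norm_num) α
  simpa using this

lemma sref_conj (u : E ≃ₗᵢ[ℝ] E) (α : E) : u * sref α * u⁻¹ = sref (u α) := by
  ext x
  have h1 : ⟪u α, u (u⁻¹ x)⟫ = ⟪α, u⁻¹ x⟫ := LinearIsometryEquiv.inner_map_map u α _
  simp only [LinearIsometryEquiv.coe_mul, Function.comp_apply, sref_apply]
  rw [LinearIsometryEquiv.inner_map_map u α α]
  rw [show ⟪u α, x⟫ = ⟪α, u⁻¹ x⟫ by
    rw [← LinearIsometryEquiv.inner_map_map u α (u⁻¹ x)]; simp]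
  simp [map_sub, map_smul]

lemma sref_apply_self (α : E) (h : α ≠ 0) : sref α α = -α := by
  have hne : ⟪α, α⟫ ≠ 0 := by simpa using (inner_self_ne_zero (𝕜 := ℝ)).mpr h
  rw [sref_apply]
  rw [mul_div_assoc, div_self hne, mul_one, two_smul]
  abel

lemma sref_fix_iff {α : E} (h : α ≠ 0) (x : E) : sref α x = x ↔ ⟪α, x⟫ = 0 := by
  have hne : ⟪α, α⟫ ≠ 0 := by simpa using (inner_self_ne_zero (𝕜 := ℝ)).mpr h
  rw [sref_apply, sub_eq_self, smul_eq_zero]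
  constructor
  · rintro (hc | hc)
    · have h2 := (div_eq_zero_iff.mp hc).resolve_right hne
      linarith
    · exact absurd hc h
  · intro hz; left; rw [hz]; ring_nf

lemma isReflection_sref {α : E} (h : α ≠ 0) : IsReflection (sref α) := by
  refine ⟨(innerSL ℝ α).toLinearMap, ?_, ?_⟩
  · intro hz
    have h2 : ⟪α, α⟫ = 0 := by
      have := LinearMap.congr_fun hz α
      simpa using this
    have h3 : ⟪α, α⟫ ≠ 0 := by simpa using (inner_self_ne_zero (𝕜 := ℝ)).mpr h
    exact h3 h2
  · ext x
    simpa using sref_fix_iff h x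

/-- structure theorem: every "reflection" is an `sref` for a unit normal -/
theorem reflection_structure {w : E ≃ₗᵢ[ℝ] E} (hw : IsReflection w) :
    ∃ α : E, ‖α‖ = 1 ∧ w = sref α ∧ {x | w x = x} = {x | ⟪α, x⟫ = 0} := by
  obtain ⟨f, hf0, hf⟩ := hw
  set K := LinearMap.ker f with hK
  have hKset : {x | w x = x} = (K : Set E) := by
    rw [hf]; ext x; simp [hK, LinearMap.mem_ker]
  -- existence of nonzero orthogonal vector
  have hKne : K ≠ ⊤ := fun h => hf0 (LinearMap.ker_eq_top.mp h)
  have hKorth : Kᗮ ≠ ⊥ := by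
    intro h
    exact hKne (Submodule.orthogonal_eq_bot_iff.mp h)
  obtain ⟨n, hnK, hn0⟩ := Submodule.exists_mem_ne_zero_of_ne_bot hKorth
  have hfn : f n ≠ 0 := by
    intro h
    have : n ∈ K := LinearMap.mem_ker.mpr h
    have : ⟪n, n⟫ = 0 := hnK n this
    exact hn0 (by simpa using (inner_self_eq_zero (𝕜 := ℝ)).mp this)
  -- decomposition: x - (f x / f n) • n ∈ K
  have hdec : ∀ x : E, x - (f x / f n) • n ∈ K := by
    intro x
    simp [hK, LinearMap.mem_ker, map_sub, map_smul, div_mul_cancel₀, hfn]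
  have hwfix : ∀ x ∈ K, w x = x := by
    intro x hx
    have : x ∈ {x | w x = x} := by rw [hKset]; exact hx
    exact this
  -- w n ∈ Kᗮ
  have hnx : ∀ x ∈ K, ⟪n, x⟫ = 0 := by
    intro x hx
    rw [real_inner_comm]
    exact (Submodule.mem_orthogonal K n).mp hnK x hx
  have hwn_orth : w n ∈ Kᗮ := by
    rw [Submodule.mem_orthogonal]
    intro x hx
    have h1 : ⟪w x, w n⟫ = ⟪x, n⟫ := LinearIsometryEquiv.inner_map_map w x n
    rw [hwfix x hx] at h1
    rw [h1, real_inner_comm]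
    exact hnx x hx
  -- Kᗮ is spanned by n
  have hspan : ∀ m ∈ Kᗮ, m = (f m / f n) • n := by
    intro m hm
    have h1 : m - (f m / f n) • n ∈ K := hdec m
    have h2 : m - (f m / f n) • n ∈ Kᗮ :=
      Submodule.sub_mem _ hm (Submodule.smul_mem _ _ hnK)
    have h3 : ⟪m - (f m / f n) • n, m - (f m / f n) • n⟫ = 0 :=
      (Submodule.mem_orthogonal K _).mp h2 _ h1
    have h4 : m - (f m / f n) • n = 0 := (inner_self_eq_zero (𝕜 := ℝ)).mp h3
    exact sub_eq_zero.mp h4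
  set t := f (w n) / f n with ht
  have hwn : w n = t • n := hspan _ hwn_orth
  have ht2 : t = 1 ∨ t = -1 := by
    have h1 : ‖w n‖ = ‖n‖ := w.norm_map n
    rw [hwn, norm_smul, Real.norm_eq_abs] at h1
    have hn' : ‖n‖ ≠ 0 := norm_ne_zero_iff.mpr hn0
    have habs : |t| = 1 := by
      have := mul_right_cancel₀ hn' (h1.trans (one_mul ‖n‖).symm)
      exact this
    exact (abs_eq (by norm_num : (0:ℝ) ≤ 1)).mp habs
  obtain ⟨v, hv⟩ : ∃ v, f v ≠ 0 := by
    by_contra hall; push_neg at hall; exact hf0 (LinearMap.ext fun x => hall x)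
  have hvH : w v ≠ v := by
    intro h
    have : v ∈ {x | w x = x} := h
    rw [hf] at this
    exact hv this
  have htm1 : t = -1 := by
    rcases ht2 with h | h
    · exfalso
      apply hvH
      have hk := hdec v
      have hv1 : w v = w ((v - (f v / f n) • n) + (f v / f n) • n) := by
        congr 1
        abel
      rw [map_add, map_smul, hwfix _ hk, hwn, h, one_smul] at hv1
      rw [hv1]
      abel
    · exact h
  -- key inner product formula
  have hinner : ∀ x : E, ⟪n, x⟫ = (f x / f n) * ⟪n, n⟫ := by
    intro x
    have h1 : ⟪n, x - (f x / f n) • n⟫ = 0 := hnx _ (hdec x)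
    rw [inner_sub_right, real_inner_smul_right] at h1
    linarith
  have hw_eq : w = sref n := by
    ext x
    have hk := hdec x
    have h1 : w x = (x - (f x / f n) • n) + (f x / f n) • (t • n) := by
      have hv1 : w x = w ((x - (f x / f n) • n) + (f x / f n) • n) := by
        congr 1
        abel
      rw [map_add, map_smul, hwfix _ hk, hwn] at hv1
      exact hv1
    have hnn : ⟪n, n⟫ ≠ 0 := by simpa using (inner_self_ne_zero (𝕜 := ℝ)).mpr hn0
    rw [h1, htm1, sref_apply, hinner x]
    have heq : 2 * (f x / f n * ⟪n, n⟫) / ⟪n, n⟫ = 2 * (f x / f n) := by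
      field_simp
    rw [heq]
    module
  refine ⟨‖n‖⁻¹ • n, ?_, ?_, ?_⟩
  · rw [norm_smul, Real.norm_eq_abs, abs_inv, abs_norm]
    field_simp [norm_ne_zero_iff.mpr hn0]
  · rw [hw_eq, sref_smul (inv_ne_zero (norm_ne_zero_iff.mpr hn0))]
  · rw [hKset]
    ext x
    simp only [SetLike.mem_coe, mem_setOf_eq, real_inner_smul_left]
    have hnn : ⟪n, n⟫ ≠ 0 := by simpa using (inner_self_ne_zero (𝕜 := ℝ)).mpr hn0
    constructor
    · intro hx
      rw [hnx x hx, mul_zero]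
    · intro hx
      have h0 : ⟪n, x⟫ = 0 := by
        have hn' : (‖n‖:ℝ)⁻¹ ≠ 0 := inv_ne_zero (norm_ne_zero_iff.mpr hn0)
        rcases mul_eq_zero.mp hx with h | h
        · exact absurd h hn'
        · exact h
      have := hinner x
      rw [h0] at this
      have h5 : (f x / f n) * ⟪n, n⟫ = 0 := by linarith
      have h6 : f x / f n = 0 := (mul_eq_zero.mp h5).resolve_right hnn
      have hfx : f x = 0 := (div_eq_zero_iff.mp h6).resolve_right hfn
      simpa [hK, LinearMap.mem_ker] using hfx

-- === Part 3 : affine functionals for hyperplanes, sign classes, chambers ===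

lemma exists_ne_zero_of_linearMap_ne {f : E →ₗ[ℝ] ℝ} (hf : f ≠ 0) : ∃ v, f v ≠ 0 := by
  by_contra hall
  push_neg at hall
  exact hf (LinearMap.ext fun x => hall x)

/-- two affine functionals with the same hyperplane zero-set are proportional -/
lemma prop_aff {f f' : E →ₗ[ℝ] ℝ} {c c' : ℝ} (hf : f ≠ 0)
    (h : {x : E | f x = c} = {x : E | f' x = c'}) :
    ∃ l : ℝ, l ≠ 0 ∧ ∀ x, f' x - c' = l * (f x - c) := by
  obtain ⟨v, hv⟩ := exists_ne_zero_of_linearMap_ne hf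
  set x₀ : E := (c / f v) • v with hx₀
  have hfx₀ : f x₀ = c := by
    rw [hx₀, map_smul, smul_eq_mul]
    field_simp
  have hx₀' : f' x₀ = c' := by
    have : x₀ ∈ {x : E | f x = c} := hfx₀
    rw [h] at this
    exact this
  have hker : ∀ u, f u = 0 → f' u = 0 := by
    intro u hu
    have h1 : f (x₀ + u) = c := by rw [map_add, hfx₀, hu, add_zero]
    have h2 : (x₀ + u) ∈ {x : E | f' x = c'} := h ▸ h1
    have h3 : f' x₀ + f' u = c' := by rw [← map_add]; exact h2
    rw [hx₀'] at h3
    linarith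
  set l : ℝ := f' v / f v with hl
  have hprop : ∀ x, f' x = l * f x := by
    intro x
    have h1 : f (x - (f x / f v) • v) = 0 := by
      rw [map_sub, map_smul, smul_eq_mul]
      field_simp
      ring
    have h2 := hker _ h1
    rw [map_sub, map_smul, smul_eq_mul] at h2
    have : f' x = (f x / f v) * f' v := by linarith
    rw [this, hl]
    field_simp
  refine ⟨l, ?_, ?_⟩
  · intro hl0
    have hz : ∀ x, f' x = 0 := fun x => by rw [hprop x, hl0, zero_mul]
    have hc0 : c' = 0 := by rw [← hx₀']; exact hz x₀
    have huniv : {x : E | f x = c} = univ := by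
      rw [h]
      ext x
      simp [hz x, hc0]
    have h5 : f (x₀ + v) = c := by
      have : (x₀ + v) ∈ {x : E | f x = c} := by rw [huniv]; trivial
      exact this
    rw [map_add, hfx₀] at h5
    have : f v = 0 := by linarith
    exact hv this
  · intro x
    rw [hprop x, ← hx₀', hprop x₀, hfx₀]
    ring

/-- chosen affine functional data for a hyperplane -/
noncomputable def hypF (H : Set E) : (E →ₗ[ℝ] ℝ) × ℝ :=
  letI := Classical.dec (IsAffineHyperplane H)
  if h : IsAffineHyperplane H then (h.choose, h.choose_spec.choose) else 0

lemma hypF_spec {H : Set E} (h : IsAffineHyperplane H) :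
    (hypF H).1 ≠ 0 ∧ H = {x | (hypF H).1 x = (hypF H).2} := by
  rw [hypF, dif_pos h]
  exact ⟨h.choose_spec.choose_spec.1, h.choose_spec.choose_spec.2⟩

/-- the signed affine function attached to a hyperplane -/
noncomputable def gg (H : Set E) (x : E) : ℝ := (hypF H).1 x - (hypF H).2

lemma gg_cont (H : Set E) : Continuous (gg H) :=
  ((hypF H).1.continuous_of_finiteDimensional).sub continuous_const

lemma gg_eq_zero_iff {H : Set E} (h : IsAffineHyperplane H) {x : E} :
    gg H x = 0 ↔ x ∈ H := by
  rw [gg, sub_eq_zero]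
  conv_rhs => rw [(hypF_spec h).2]
  exact Iff.rfl

lemma gg_affine (H : Set E) (x y : E) (a b : ℝ) (hab : a + b = 1) :
    gg H (a • x + b • y) = a * gg H x + b * gg H y := by
  simp only [gg, map_add, map_smul, smul_eq_mul]
  have h2 : (hypF H).2 = (a + b) * (hypF H).2 := by rw [hab, one_mul]
  nlinarith [h2]

/-- the sign class of a point relative to an arrangement -/
def SC (𝒜 : Set (Set E)) (x : E) : Set E := {z | ∀ H ∈ 𝒜, 0 < gg H z * gg H x}

lemma not_mem_sUnion_iff {𝒜 : Set (Set E)} {x : E} :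
    x ∈ (⋃₀ 𝒜)ᶜ ↔ ∀ H ∈ 𝒜, x ∉ H := by
  simp [mem_sUnion]

lemma gg_ne_zero {𝒜 : Set (Set E)} (hA : IsArrangement 𝒜) {x : E}
    (hx : x ∈ (⋃₀ 𝒜)ᶜ) {H : Set E} (hH : H ∈ 𝒜) : gg H x ≠ 0 := by
  intro h0
  exact (not_mem_sUnion_iff.mp hx H hH) ((gg_eq_zero_iff (hA.2 H hH)).mp h0)

lemma mem_SC_self {𝒜 : Set (Set E)} (hA : IsArrangement 𝒜) {x : E}
    (hx : x ∈ (⋃₀ 𝒜)ᶜ) : x ∈ SC 𝒜 x := fun H hH =>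
  mul_self_pos.mpr (gg_ne_zero hA hx hH)

lemma SC_subset_compl {𝒜 : Set (Set E)} (hA : IsArrangement 𝒜) (x : E) :
    SC 𝒜 x ⊆ (⋃₀ 𝒜)ᶜ := by
  intro z hz
  rw [not_mem_sUnion_iff]
  intro H hH hzH
  have h1 := hz H hH
  rw [(gg_eq_zero_iff (hA.2 H hH)).mpr hzH] at h1
  simp at h1

lemma sgn_trans {a b c : ℝ} (h : 0 < a * b) (h2 : 0 < c * a) : 0 < c * b := by
  have ha : a ≠ 0 := fun h0 => by simp [h0] at h
  nlinarith [mul_pos h h2, sq_nonneg a]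

lemma SC_eq_of_mem {𝒜 : Set (Set E)} {x z : E} (hz : z ∈ SC 𝒜 x) :
    SC 𝒜 z = SC 𝒜 x := by
  ext w
  constructor
  · intro hw H hH
    exact sgn_trans (mul_comm (gg H z) (gg H x) ▸ hz H hH) (hw H hH)
  · intro hw H hH
    exact sgn_trans (by rw [mul_comm]; exact hz H hH) (hw H hH)

lemma convex_SC (𝒜 : Set (Set E)) (x : E) : Convex ℝ (SC 𝒜 x) := by
  intro z₁ h₁ z₂ h₂ a b ha hb hab
  intro H hH
  have h3 := h₁ H hH
  have h4 := h₂ H hH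
  rw [gg_affine H z₁ z₂ a b hab, add_mul]
  have hmin : 0 < min (gg H z₁ * gg H x) (gg H z₂ * gg H x) := lt_min h3 h4
  nlinarith [mul_nonneg ha (sub_nonneg.mpr (min_le_left (gg H z₁ * gg H x) (gg H z₂ * gg H x))),
    mul_nonneg hb (sub_nonneg.mpr (min_le_right (gg H z₁ * gg H x) (gg H z₂ * gg H x)))]

lemma SC_eq_Inter (𝒜 : Set (Set E)) (x : E) :
    SC 𝒜 x = ⋂ H ∈ 𝒜, {z | 0 < gg H z * gg H x} := by
  ext z
  simp [SC]

lemma isOpen_SC {𝒜 : Set (Set E)} (hA : IsArrangement 𝒜) (x : E) :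
    IsOpen (SC 𝒜 x) := by
  rw [SC_eq_Inter]
  exact hA.1.isOpen_biInter fun H _ =>
    isOpen_lt continuous_const ((gg_cont H).mul continuous_const)

/-- chambers are sign classes -/
theorem connCompIn_eq_SC {𝒜 : Set (Set E)} (hA : IsArrangement 𝒜) {x : E}
    (hx : x ∈ (⋃₀ 𝒜)ᶜ) :
    connectedComponentIn (⋃₀ 𝒜)ᶜ x = SC 𝒜 x := by
  apply Subset.antisymm
  · intro z hz
    have hzc : z ∈ (⋃₀ 𝒜)ᶜ := connectedComponentIn_subset _ _ hz
    intro H hH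
    by_contra hcon
    push_neg at hcon
    have hgz := gg_ne_zero hA hzc hH
    have hgx := gg_ne_zero hA hx hH
    have hpre : IsPreconnected (connectedComponentIn (⋃₀ 𝒜)ᶜ x) :=
      isPreconnected_connectedComponentIn
    have hxmem : x ∈ connectedComponentIn (⋃₀ 𝒜)ᶜ x := mem_connectedComponentIn hx
    have hcont : ContinuousOn (gg H) (connectedComponentIn (⋃₀ 𝒜)ᶜ x) :=
      (gg_cont H).continuousOn
    rcases mul_nonpos_iff.mp hcon with ⟨h1, h2⟩ | ⟨h1, h2⟩
    · -- 0 ≤ gg z, gg x ≤ 0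
      have : (0:ℝ) ∈ Icc (gg H x) (gg H z) := ⟨h2, h1⟩
      obtain ⟨y, hy, hy0⟩ := hpre.intermediate_value hxmem hz hcont this
      have : y ∈ H := (gg_eq_zero_iff (hA.2 H hH)).mp hy0
      exact (not_mem_sUnion_iff.mp (connectedComponentIn_subset _ _ hy) H hH) this
    · have : (0:ℝ) ∈ Icc (gg H z) (gg H x) := ⟨h1, h2⟩
      obtain ⟨y, hy, hy0⟩ := hpre.intermediate_value hz hxmem hcont this
      have : y ∈ H := (gg_eq_zero_iff (hA.2 H hH)).mp hy0
      exact (not_mem_sUnion_iff.mp (connectedComponentIn_subset _ _ hy) H hH) this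
  · exact ((convex_SC 𝒜 x).isPreconnected).subset_connectedComponentIn
      (mem_SC_self hA hx) (SC_subset_compl hA x)

theorem chambers_iff {𝒜 : Set (Set E)} (hA : IsArrangement 𝒜) {c : Set E} :
    c ∈ chambers 𝒜 ↔ ∃ x, x ∈ (⋃₀ 𝒜)ᶜ ∧ c = SC 𝒜 x := by
  constructor
  · rintro ⟨x, hx, rfl⟩
    exact ⟨x, hx, connCompIn_eq_SC hA hx⟩
  · rintro ⟨x, hx, rfl⟩
    exact ⟨x, hx, (connCompIn_eq_SC hA hx).symm⟩

lemma closure_SC_subset {𝒜 : Set (Set E)} (x : E) :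
    closure (SC 𝒜 x) ⊆ {z | ∀ H ∈ 𝒜, 0 ≤ gg H z * gg H x} := by
  have : {z : E | ∀ H ∈ 𝒜, 0 ≤ gg H z * gg H x} = ⋂ H ∈ 𝒜, {z | 0 ≤ gg H z * gg H x} := by
    ext z; simp
  rw [this]
  apply closure_minimal
  · intro z hz
    simp only [mem_iInter, mem_setOf_eq]
    exact fun H hH => (hz H hH).le
  · exact isClosed_biInter fun H _ =>
      isClosed_le continuous_const ((gg_cont H).mul continuous_const)

lemma mem_SC_of_closure {𝒜 : Set (Set E)} (hA : IsArrangement 𝒜) {x z : E}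
    (hx : x ∈ (⋃₀ 𝒜)ᶜ) (hz : z ∈ (⋃₀ 𝒜)ᶜ) (h : z ∈ closure (SC 𝒜 x)) :
    z ∈ SC 𝒜 x := by
  intro H hH
  have h1 := closure_SC_subset x h H hH
  have h2 := mul_ne_zero (gg_ne_zero hA hz hH) (gg_ne_zero hA hx hH)
  exact lt_of_le_of_ne h1 (Ne.symm h2)

lemma chambers_eq_of_mem {𝒜 : Set (Set E)} (hA : IsArrangement 𝒜) {c₁ c₂ : Set E}
    (h₁ : c₁ ∈ chambers 𝒜) (h₂ : c₂ ∈ chambers 𝒜) {p : E} (hp₁ : p ∈ c₁) (hp₂ : p ∈ c₂) :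
    c₁ = c₂ := by
  obtain ⟨x₁, hx₁, rfl⟩ := (chambers_iff hA).mp h₁
  obtain ⟨x₂, hx₂, rfl⟩ := (chambers_iff hA).mp h₂
  rw [← SC_eq_of_mem hp₁, ← SC_eq_of_mem hp₂]

-- === Part 4 : isometries acting on arrangements and chambers ===

lemma image_affineHyperplane (u : E ≃ₗᵢ[ℝ] E) {K : Set E} (hK : IsAffineHyperplane K) :
    IsAffineHyperplane ((⇑u) '' K) := by
  obtain ⟨f, c, hf, rfl⟩ := hK
  refine ⟨f.comp (u.symm.toLinearEquiv : E →ₗ[ℝ] E), c, ?_, ?_⟩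
  · intro h0
    apply hf
    ext x
    have := LinearMap.congr_fun h0 (u x)
    simpa using this
  · ext x
    simp only [mem_image, mem_setOf_eq, LinearMap.coe_comp, Function.comp_apply]
    constructor
    · rintro ⟨z, hz, rfl⟩
      simpa using hz
    · intro hx
      exact ⟨u.symm x, by simpa using hx, by simp⟩

lemma gg_comp (u : E ≃ₗᵢ[ℝ] E) {K : Set E} (hK : IsAffineHyperplane K) :
    ∃ l : ℝ, l ≠ 0 ∧ ∀ z, gg ((⇑u) '' K) (u z) = l * gg K z := by
  have hK' : IsAffineHyperplane ((⇑u) '' K) := image_affineHyperplane u hK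
  obtain ⟨hf, hKeq⟩ := hypF_spec hK
  obtain ⟨hf', hKeq'⟩ := hypF_spec hK'
  set F : E →ₗ[ℝ] ℝ := (hypF ((⇑u) '' K)).1.comp (u.toLinearEquiv : E →ₗ[ℝ] E) with hF
  have hsets : {x : E | (hypF K).1 x = (hypF K).2} = {x : E | F x = (hypF ((⇑u) '' K)).2} := by
    rw [← hKeq]
    ext x
    simp only [mem_setOf_eq, hF, LinearMap.coe_comp, Function.comp_apply]
    constructor
    · intro hx
      have : u x ∈ (⇑u) '' K := mem_image_of_mem _ hx
      rw [hKeq'] at this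
      simpa using this
    · intro hx
      have : u x ∈ {x | (hypF ((⇑u) '' K)).1 x = (hypF ((⇑u) '' K)).2} := by simpa using hx
      rw [← hKeq'] at this
      obtain ⟨z, hz, hzz⟩ := this
      rwa [← u.injective hzz]
  obtain ⟨l, hl, hprop⟩ := prop_aff hf hsets
  exact ⟨l, hl, fun z => by
    have := hprop z
    simpa [gg, hF] using this⟩

lemma image_mem_compl {𝒜 : Set (Set E)} (u : E ≃ₗᵢ[ℝ] E)
    (hst' : ∀ K ∈ 𝒜, (⇑u⁻¹) '' K ∈ 𝒜) {x : E} (hx : x ∈ (⋃₀ 𝒜)ᶜ) :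
    u x ∈ (⋃₀ 𝒜)ᶜ := by
  rw [not_mem_sUnion_iff] at hx ⊢
  intro K hK hmem
  apply hx _ (hst' K hK)
  exact ⟨u x, hmem, by simp⟩

lemma image_image_inv (u : E ≃ₗᵢ[ℝ] E) (K : Set E) : (⇑u) '' ((⇑u⁻¹) '' K) = K := by
  rw [← image_comp]
  simp [Function.comp_def]

lemma SC_image_subset {𝒜 : Set (Set E)} (hA : IsArrangement 𝒜) (u : E ≃ₗᵢ[ℝ] E)
    (hst' : ∀ K ∈ 𝒜, (⇑u⁻¹) '' K ∈ 𝒜) (x : E) :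
    (⇑u) '' SC 𝒜 x ⊆ SC 𝒜 (u x) := by
  rintro - ⟨z, hz, rfl⟩
  intro K' hK'
  set K : Set E := (⇑u⁻¹) '' K' with hKdef
  have hKmem : K ∈ 𝒜 := hst' K' hK'
  have himg : (⇑u) '' K = K' := by rw [hKdef, image_image_inv]
  obtain ⟨l, hl, hprop⟩ := gg_comp u (hA.2 K hKmem)
  rw [himg] at hprop
  rw [hprop z, hprop x]
  have h5 := hz K hKmem
  nlinarith [mul_pos (mul_self_pos.mpr hl) h5]

lemma SC_image {𝒜 : Set (Set E)} (hA : IsArrangement 𝒜) (u : E ≃ₗᵢ[ℝ] E)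
    (hst : ∀ K ∈ 𝒜, (⇑u) '' K ∈ 𝒜) (hst' : ∀ K ∈ 𝒜, (⇑u⁻¹) '' K ∈ 𝒜) (x : E) :
    (⇑u) '' SC 𝒜 x = SC 𝒜 (u x) := by
  apply Subset.antisymm (SC_image_subset hA u hst' x)
  intro y hy
  have h2 : (⇑u⁻¹) '' SC 𝒜 (u x) ⊆ SC 𝒜 (u⁻¹ (u x)) := by
    apply SC_image_subset hA u⁻¹ _ (u x)
    intro K hK
    have := hst K hK
    simpa using this
  have h3 : u⁻¹ y ∈ SC 𝒜 (u⁻¹ (u x)) := h2 (mem_image_of_mem _ hy)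
  have h4 : u⁻¹ (u x) = x := by simp
  rw [h4] at h3
  exact ⟨u⁻¹ y, h3, by simp⟩

lemma exists_pos_iff_SC {𝒜 : Set (Set E)} (hA : IsArrangement 𝒜) {x : E}
    (hx : x ∈ (⋃₀ 𝒜)ᶜ) {H : Set E} (hH : H ∈ 𝒜) :
    (∃ z ∈ SC 𝒜 x, 0 < gg H z) ↔ 0 < gg H x := by
  constructor
  · rintro ⟨z, hz, hgz⟩
    have h1 := hz H hH
    nlinarith
  · intro hgx
    exact ⟨x, mem_SC_self hA hx, hgx⟩

lemma chambers_finite {𝒜 : Set (Set E)} (hA : IsArrangement 𝒜) :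
    (chambers 𝒜).Finite := by
  set F : Set E → Set (Set E) := fun c => {H | H ∈ 𝒜 ∧ ∃ z ∈ c, 0 < gg H z} with hF
  apply Set.Finite.of_finite_image (f := F)
  · apply Set.Finite.subset (hA.1.finite_subsets)
    rintro - ⟨c, _, rfl⟩
    intro H hH
    exact hH.1
  · intro c₁ h₁ c₂ h₂ heq
    obtain ⟨x₁, hx₁, rfl⟩ := (chambers_iff hA).mp h₁
    obtain ⟨x₂, hx₂, rfl⟩ := (chambers_iff hA).mp h₂
    have hsign : ∀ H ∈ 𝒜, 0 < gg H x₂ * gg H x₁ := by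
      intro H hH
      have e1 : (H ∈ F (SC 𝒜 x₁)) ↔ 0 < gg H x₁ := by
        simp only [hF, mem_setOf_eq]
        constructor
        · rintro ⟨-, hz⟩
          exact (exists_pos_iff_SC hA hx₁ hH).mp hz
        · intro h
          exact ⟨hH, (exists_pos_iff_SC hA hx₁ hH).mpr h⟩
      have e2 : (H ∈ F (SC 𝒜 x₂)) ↔ 0 < gg H x₂ := by
        simp only [hF, mem_setOf_eq]
        constructor
        · rintro ⟨-, hz⟩
          exact (exists_pos_iff_SC hA hx₂ hH).mp hz
        · intro h
          exact ⟨hH, (exists_pos_iff_SC hA hx₂ hH).mpr h⟩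
      have hg1 := gg_ne_zero hA hx₁ hH
      have hg2 := gg_ne_zero hA hx₂ hH
      by_cases hc : 0 < gg H x₁
      · have : H ∈ F (SC 𝒜 x₁) := e1.mpr hc
        rw [heq] at this
        have := e2.mp this
        positivity
      · have hneg1 : gg H x₁ < 0 := lt_of_le_of_ne (le_of_not_gt hc) hg1
        have : H ∉ F (SC 𝒜 x₂) := by
          rw [← heq]
          intro hmem
          exact hc (e1.mp hmem)
        have hneg2 : gg H x₂ < 0 := lt_of_le_of_ne (le_of_not_gt (fun h => this (e2.mpr h))) hg2
        exact mul_pos_of_neg_of_neg hneg2 hneg1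
    exact (SC_eq_of_mem (show x₂ ∈ SC 𝒜 x₁ from hsign)).symm

-- === Part 5 : roots of a reflection group ===

variable (W : Subgroup (E ≃ₗᵢ[ℝ] E))

/-- the unit roots of W -/
def Rts : Set E := {α | ‖α‖ = 1 ∧ sref α ∈ W}

variable {W}

lemma Rts_ne_zero {α : E} (h : α ∈ Rts W) : α ≠ 0 := by
  intro h0
  have h1 := h.1
  rw [h0, norm_zero] at h1
  exact one_ne_zero h1.symm

lemma Rts_neg {α : E} (h : α ∈ Rts W) : -α ∈ Rts W :=
  ⟨by rw [norm_neg]; exact h.1, by rw [sref_neg]; exact h.2⟩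

lemma Rts_smul_mem {α : E} (h : α ∈ Rts W) {u : E ≃ₗᵢ[ℝ] E} (hu : u ∈ W) :
    u α ∈ Rts W := by
  refine ⟨by rw [u.norm_map]; exact h.1, ?_⟩
  rw [← sref_conj]
  exact mul_mem (mul_mem hu h.2) (inv_mem hu)

lemma coxeterArrangement_iff {H : Set E} :
    H ∈ coxeterArrangement W ↔ ∃ α ∈ Rts W, H = {x | ⟪α, x⟫ = 0} := by
  constructor
  · rintro ⟨w, hwW, hrefl, rfl⟩
    obtain ⟨α, hα1, hweq, hfix⟩ := reflection_structure hrefl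
    exact ⟨α, ⟨hα1, hweq ▸ hwW⟩, hfix⟩
  · rintro ⟨α, hα, rfl⟩
    have hα0 : α ≠ 0 := Rts_ne_zero hα
    refine ⟨sref α, hα.2, isReflection_sref hα0, ?_⟩
    ext x
    simp only [mem_setOf_eq]
    rw [sref_fix_iff hα0]

lemma generic_inner_ne_zero {y : E} (hy : y ∈ (⋃₀ coxeterArrangement W)ᶜ)
    {α : E} (hα : α ∈ Rts W) : ⟪α, y⟫ ≠ 0 := by
  intro h0
  apply not_mem_sUnion_iff.mp hy {x | ⟪α, x⟫ = 0}
  · exact coxeterArrangement_iff.mpr ⟨α, hα, rfl⟩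
  · exact h0

lemma W_le_closure_sref (hW : IsReflectionGroup W) :
    (W : Set (E ≃ₗᵢ[ℝ] E)) ⊆ (Subgroup.closure {u | ∃ α ∈ Rts W, u = sref α} : Subgroup _) := by
  intro w hw
  rw [hW] at hw
  refine Subgroup.closure_mono ?_ hw
  rintro u ⟨huW, hurefl⟩
  obtain ⟨α, hα1, hueq, -⟩ := reflection_structure hurefl
  exact ⟨α, ⟨hα1, hueq ▸ huW⟩, hueq⟩

lemma unit_normal_pm {α α' : E} (hα : ‖α‖ = 1) (hα' : ‖α'‖ = 1)
    (h : {x : E | ⟪α, x⟫ = 0} = {x : E | ⟪α', x⟫ = 0}) : α' = α ∨ α' = -α := by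
  have hα0 : α ≠ 0 := by intro h0; rw [h0] at hα; simp at hα
  have hf : (innerSL ℝ α).toLinearMap ≠ 0 := by
    intro h0
    have := LinearMap.congr_fun h0 α
    simp only [LinearMap.zero_apply, ContinuousLinearMap.coe_coe, innerSL_apply_apply] at this
    have h2 : ⟪α, α⟫ = 0 := by simpa using this
    have h3 : ⟪α, α⟫ ≠ 0 := by simpa using (inner_self_ne_zero (𝕜 := ℝ)).mpr hα0
    exact h3 h2
  have hsets : {x : E | (innerSL ℝ α).toLinearMap x = 0} =
      {x : E | (innerSL ℝ α').toLinearMap x = 0} := by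
    simpa using h
  obtain ⟨l, hl, hprop⟩ := prop_aff hf hsets
  have hprop' : ∀ x, ⟪α' - l • α, x⟫ = 0 := by
    intro x
    have h4 := hprop x
    simp only [sub_zero, ContinuousLinearMap.coe_coe, innerSL_apply_apply] at h4
    rw [inner_sub_left, real_inner_smul_left]
    linarith [h4]
  have heq : α' = l • α := by
    have := hprop' (α' - l • α)
    have h2 := (inner_self_eq_zero (𝕜 := ℝ)).mp this
    linear_combination (norm := module) h2
  have : |l| = 1 := by
    have h1 : ‖α'‖ = ‖l • α‖ := by rw [heq]
    rw [hα', norm_smul, Real.norm_eq_abs, hα, mul_one] at h1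
    exact h1.symm
  rcases (abs_eq (by norm_num : (0:ℝ) ≤ 1)).mp this with h1 | h1
  · left; rw [heq, h1, one_smul]
  · right; rw [heq, h1]; module

lemma sref_inj_aux {α α' : E} (hα : α ∈ Rts W) (hα' : α' ∈ Rts W)
    (h : sref α = sref α') : α' = α ∨ α' = -α := by
  have h1 : {x : E | ⟪α, x⟫ = 0} = {x : E | ⟪α', x⟫ = 0} := by
    ext x
    simp only [mem_setOf_eq]
    rw [← sref_fix_iff (Rts_ne_zero hα), ← sref_fix_iff (Rts_ne_zero hα'), h]
  exact unit_normal_pm hα.1 hα'.1 h1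

-- === Part 6a : positive roots, simple subsystem ===

def Pos (W : Subgroup (E ≃ₗᵢ[ℝ] E)) (y : E) : Set E := {α | α ∈ Rts W ∧ 0 < ⟪α, y⟫}

lemma Pos_finite {W : Subgroup (E ≃ₗᵢ[ℝ] E)} (hWfin : (W : Set (E ≃ₗᵢ[ℝ] E)).Finite)
    (y : E) : (Pos W y).Finite := by
  apply Set.Finite.of_finite_image (f := sref)
  · apply hWfin.subset
    rintro - ⟨α, hα, rfl⟩
    exact hα.1.2
  · intro α hα α' hα' heq
    rcases sref_inj_aux hα.1 hα'.1 heq with h | h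
    · exact h.symm
    · exfalso
      have h1 := hα.2
      have h2 := hα'.2
      rw [h] at h2
      rw [inner_neg_left] at h2
      linarith

lemma Rts_finite {W : Subgroup (E ≃ₗᵢ[ℝ] E)} (hWfin : (W : Set (E ≃ₗᵢ[ℝ] E)).Finite)
    {y : E} (hy : ∀ α ∈ Rts W, ⟪α, y⟫ ≠ 0) : (Rts W).Finite := by
  apply ((Pos_finite hWfin y).union ((Pos_finite hWfin y).image Neg.neg)).subset
  intro α hα
  rcases lt_or_gt_of_ne (hy α hα) with h | h
  · right
    exact ⟨-α, ⟨Rts_neg hα, by rw [inner_neg_left]; linarith⟩, by simp⟩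
  · left
    exact ⟨hα, h⟩

/-- membership in the conical hull of a finite set -/
def CP (S : Finset E) (β : E) : Prop :=
  ∃ t : E → ℝ, (∀ γ ∈ S, 0 ≤ t γ) ∧ ∑ γ ∈ S, t γ • γ = β

lemma CP_self {S : Finset E} {β : E} (hβ : β ∈ S) : CP S β := by
  classical
  refine ⟨fun γ => if γ = β then 1 else 0, fun γ _ => by simp only; split <;> norm_num, ?_⟩
  have h1 : ∀ γ ∈ S, (if γ = β then (1:ℝ) else 0) • γ = if γ = β then γ else 0 := by
    intro γ _
    split <;> simp
  rw [Finset.sum_congr rfl h1, Finset.sum_ite_eq' S β (fun γ => γ)]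
  simp [hβ]

lemma exists_min_card {P : Finset E → Prop} (h : ∃ S, P S) :
    ∃ S, P S ∧ ∀ T, P T → S.card ≤ T.card := by
  classical
  have hex : ∃ n, ∃ S, P S ∧ S.card = n := ⟨h.choose.card, h.choose, h.choose_spec, rfl⟩
  obtain ⟨S, hS, hcard⟩ := Nat.find_spec hex
  exact ⟨S, hS, fun T hT => by
    rw [hcard]
    exact Nat.find_le ⟨T, hT, rfl⟩⟩

lemma exists_simple_system {W : Subgroup (E ≃ₗᵢ[ℝ] E)}
    (hWfin : (W : Set (E ≃ₗᵢ[ℝ] E)).Finite) (y : E) :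
    ∃ Δ : Finset E, (↑Δ ⊆ Pos W y ∧ ∀ β ∈ Pos W y, CP Δ β) ∧
      ∀ T : Finset E, (↑T ⊆ Pos W y ∧ ∀ β ∈ Pos W y, CP T β) → Δ.card ≤ T.card := by
  apply exists_min_card
  refine ⟨(Pos_finite hWfin y).toFinset, ?_, ?_⟩
  · intro α hα
    simpa using hα
  · intro β hβ
    exact CP_self (by simpa using hβ)

section SimpleSystem

variable [DecidableEq E] {W : Subgroup (E ≃ₗᵢ[ℝ] E)} {y : E} {Δ : Finset E}

/-- a simple root is not in the cone of the others -/
lemma not_CP_erase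
    (hsub : ↑Δ ⊆ Pos W y) (hcone : ∀ β ∈ Pos W y, CP Δ β)
    (hmin : ∀ T : Finset E, (↑T ⊆ Pos W y ∧ ∀ β ∈ Pos W y, CP T β) → Δ.card ≤ T.card)
    {α : E} (hα : α ∈ Δ) : ¬ CP (Δ.erase α) α := by
  classical
  rintro ⟨c, hc, hcsum⟩
  have herase : ∀ β ∈ Pos W y, CP (Δ.erase α) β := by
    intro β hβ
    obtain ⟨t, ht, htsum⟩ := hcone β hβ
    refine ⟨fun γ => t γ + t α * c γ, ?_, ?_⟩
    · intro γ hγ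
      have h1 := ht γ (Finset.mem_of_mem_erase hγ)
      have h2 := hc γ hγ
      have h3 := ht α hα
      positivity
    · have h4 : ∑ γ ∈ Δ.erase α, (t γ + t α * c γ) • γ =
          ∑ γ ∈ Δ.erase α, t γ • γ + t α • ∑ γ ∈ Δ.erase α, c γ • γ := by
        rw [Finset.smul_sum, ← Finset.sum_add_distrib]
        apply Finset.sum_congr rfl
        intro γ _
        rw [add_smul, smul_smul]
      rw [h4, hcsum, ← htsum]
      rw [← Finset.sum_erase_add Δ _ hα]
  have := hmin (Δ.erase α) ⟨fun γ hγ => hsub (Finset.mem_of_mem_erase hγ), herase⟩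
  have hlt := Finset.card_erase_lt_of_mem hα
  omega

/-- key lemma: a simple reflection permutes the other positive roots -/
lemma simple_perm (hy : ∀ α ∈ Rts W, ⟪α, y⟫ ≠ 0)
    (hsub : ↑Δ ⊆ Pos W y) (hcone : ∀ β ∈ Pos W y, CP Δ β)
    (hmin : ∀ T : Finset E, (↑T ⊆ Pos W y ∧ ∀ β ∈ Pos W y, CP T β) → Δ.card ≤ T.card)
    {α β : E} (hα : α ∈ Δ) (hβ : β ∈ Pos W y) (hne : β ≠ α) :
    sref α β ∈ Pos W y := by
  classical
  have hαPos : α ∈ Pos W y := hsub hα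
  have hαunit : ‖α‖ = 1 := hαPos.1.1
  have hα0 : α ≠ 0 := Rts_ne_zero hαPos.1
  have hβRts : sref α β ∈ Rts W := Rts_smul_mem hβ.1 hαPos.1.2
  by_contra hcon
  -- then -sref α β is positive
  have hneg : -(sref α β) ∈ Pos W y := by
    refine ⟨Rts_neg hβRts, ?_⟩
    have h1 : ⟪sref α β, y⟫ ≠ 0 := hy _ hβRts
    rw [inner_neg_left]
    rcases lt_or_gt_of_ne h1 with h | h
    · linarith
    · exact absurd ⟨hβRts, h⟩ hcon
  obtain ⟨t, ht, htsum⟩ := hcone β hβ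
  obtain ⟨d, hd, hdsum⟩ := hcone _ hneg
  have hrefl : sref α β = β - (2 * ⟪α, β⟫) • α := sref_apply_unit hαunit β
  set s : E → ℝ := fun γ => t γ + d γ with hs
  have hssum : ∑ γ ∈ Δ, s γ • γ = (2 * ⟪α, β⟫) • α := by
    have h2 : ∑ γ ∈ Δ, s γ • γ = ∑ γ ∈ Δ, t γ • γ + ∑ γ ∈ Δ, d γ • γ := by
      rw [← Finset.sum_add_distrib]
      apply Finset.sum_congr rfl
      intro γ _
      rw [hs, add_smul]
    rw [h2, htsum, hdsum, hrefl]
    abel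
  set r : ℝ := 2 * ⟪α, β⟫ - s α with hr
  have hesum : ∑ γ ∈ Δ.erase α, s γ • γ = r • α := by
    have h3 := Finset.sum_erase_add Δ (fun γ => s γ • γ) hα
    rw [hssum] at h3
    rw [hr, sub_smul]
    rw [← h3]
    abel
  have hq : ∑ γ ∈ Δ.erase α, s γ * ⟪γ, y⟫ = r * ⟪α, y⟫ := by
    have := congrArg (fun v => ⟪v, y⟫) hesum
    simpa [sum_inner, real_inner_smul_left] using this
  have hqnonneg : 0 ≤ ∑ γ ∈ Δ.erase α, s γ * ⟪γ, y⟫ := by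
    apply Finset.sum_nonneg
    intro γ hγ
    have hγPos := hsub (Finset.mem_of_mem_erase hγ)
    have h5 := ht γ (Finset.mem_of_mem_erase hγ)
    have h6 := hd γ (Finset.mem_of_mem_erase hγ)
    have := hγPos.2
    positivity
  rcases le_or_gt r 0 with hrle | hrpos
  · -- all coefficients vanish, so β = α, contradiction
    have hq0 : ∑ γ ∈ Δ.erase α, s γ * ⟪γ, y⟫ = 0 := by
      have h7 : r * ⟪α, y⟫ ≤ 0 := mul_nonpos_of_nonpos_of_nonneg hrle hαPos.2.le
      linarith [hq ▸ hqnonneg]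
    have hall : ∀ γ ∈ Δ.erase α, s γ * ⟪γ, y⟫ = 0 := by
      apply (Finset.sum_eq_zero_iff_of_nonneg ?_).mp hq0
      intro γ hγ
      have hγPos := hsub (Finset.mem_of_mem_erase hγ)
      have h5 := ht γ (Finset.mem_of_mem_erase hγ)
      have h6 := hd γ (Finset.mem_of_mem_erase hγ)
      have := hγPos.2
      positivity
    have htzero : ∀ γ ∈ Δ.erase α, t γ = 0 := by
      intro γ hγ
      have hγPos := hsub (Finset.mem_of_mem_erase hγ)
      have h8 := hall γ hγ
      have h9 : s γ = 0 := by
        rcases mul_eq_zero.mp h8 with h | h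
        · exact h
        · exact absurd h (ne_of_gt hγPos.2)
      have h5 := ht γ (Finset.mem_of_mem_erase hγ)
      have h6 := hd γ (Finset.mem_of_mem_erase hγ)
      rw [hs] at h9
      simp only at h9
      linarith
    have hβα : β = t α • α := by
      rw [← htsum, ← Finset.sum_erase_add Δ _ hα]
      have : ∑ γ ∈ Δ.erase α, t γ • γ = 0 := by
        apply Finset.sum_eq_zero
        intro γ hγ
        rw [htzero γ hγ, zero_smul]
      rw [this, zero_add]
    have htα : t α = 1 := by
      have h10 : ‖β‖ = 1 := hβ.1.1
      rw [hβα, norm_smul, Real.norm_eq_abs, hαunit, mul_one] at h10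
      have h11 := ht α hα
      rw [abs_of_nonneg h11] at h10
      exact h10
    rw [htα, one_smul] at hβα
    exact hne hβα
  · -- α is in the cone of the other simple roots: contradiction
    apply not_CP_erase hsub hcone hmin hα
    refine ⟨fun γ => s γ / r, ?_, ?_⟩
    · intro γ hγ
      have h5 := ht γ (Finset.mem_of_mem_erase hγ)
      have h6 := hd γ (Finset.mem_of_mem_erase hγ)
      have : 0 ≤ s γ := by rw [hs]; simp only; linarith
      positivity
    · show ∑ γ ∈ Δ.erase α, (s γ / r) • γ = α
      have h12 : ∑ γ ∈ Δ.erase α, (s γ / r) • γ = (r⁻¹ : ℝ) • ∑ γ ∈ Δ.erase α, s γ • γ := by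
        rw [Finset.smul_sum]
        apply Finset.sum_congr rfl
        intro γ _
        rw [smul_smul, div_eq_inv_mul]
      rw [h12, hesum, smul_smul, inv_mul_cancel₀ (ne_of_gt hrpos), one_smul]

end SimpleSystem

-- === Part 6b : generation by simple reflections and the main freeness theorem ===

section SimpleGen

variable [DecidableEq E] {W : Subgroup (E ≃ₗᵢ[ℝ] E)} {y : E} {Δ : Finset E}

/-- the subgroup generated by the simple reflections -/
def Wsimp (Δ : Finset E) : Subgroup (E ≃ₗᵢ[ℝ] E) := Subgroup.closure (sref '' ↑Δ)

lemma sref_pos_mem_Wsimp (hWfin : (W : Set (E ≃ₗᵢ[ℝ] E)).Finite)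
    (hy : ∀ α ∈ Rts W, ⟪α, y⟫ ≠ 0)
    (hsub : ↑Δ ⊆ Pos W y) (hcone : ∀ β ∈ Pos W y, CP Δ β)
    (hmin : ∀ T : Finset E, (↑T ⊆ Pos W y ∧ ∀ β ∈ Pos W y, CP T β) → Δ.card ≤ T.card)
    {β : E} (hβ : β ∈ Pos W y) : sref β ∈ Wsimp Δ := by
  classical
  set S : Set E := {γ | γ ∈ Pos W y ∧ ∃ u ∈ Wsimp Δ, γ = u β} with hS
  have hSfin : S.Finite := (Pos_finite hWfin y).subset fun γ hγ => hγ.1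
  have hSne : S.Nonempty := ⟨β, hβ, 1, one_mem _, by simp⟩
  obtain ⟨γ₀, hγ₀S, hγ₀min⟩ := Set.exists_min_image S (fun γ => ⟪γ, y⟫) hSfin hSne
  obtain ⟨hγ₀Pos, u, huW, huβ⟩ := hγ₀S
  by_cases hγ₀Δ : γ₀ ∈ Δ
  · -- done : conjugate back
    have h1 : sref γ₀ ∈ Wsimp Δ := Subgroup.subset_closure ⟨γ₀, hγ₀Δ, rfl⟩
    have h2 : sref γ₀ = u * sref β * u⁻¹ := by rw [huβ, sref_conj]
    have h3 : sref β = u⁻¹ * sref γ₀ * u := by rw [h2]; group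
    rw [h3]
    exact mul_mem (mul_mem (inv_mem huW) h1) huW
  · exfalso
    obtain ⟨t, ht, htsum⟩ := hcone γ₀ hγ₀Pos
    have hunit : ‖γ₀‖ = 1 := hγ₀Pos.1.1
    have h1 : ⟪γ₀, γ₀⟫ = 1 := by
      rw [real_inner_self_eq_norm_sq, hunit]; norm_num
    have h2 : ∑ γ ∈ Δ, t γ * ⟪γ, γ₀⟫ = 1 := by
      have := congrArg (fun v => ⟪v, γ₀⟫) htsum
      simpa [sum_inner, real_inner_smul_left, h1, hunit] using this
    have h3 : ∃ δ ∈ Δ, 0 < t δ * ⟪δ, γ₀⟫ := by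
      by_contra hall
      push_neg at hall
      have : ∑ γ ∈ Δ, t γ * ⟪γ, γ₀⟫ ≤ 0 := Finset.sum_nonpos hall
      linarith
    obtain ⟨δ, hδΔ, hδpos⟩ := h3
    have hδinner : 0 < ⟪δ, γ₀⟫ := by
      rcases le_or_gt ⟪δ, γ₀⟫ 0 with h | h
      · exfalso
        have := ht δ hδΔ
        nlinarith
      · exact h
    have hδPos := hsub hδΔ
    have hne : γ₀ ≠ δ := fun h => hγ₀Δ (h ▸ hδΔ)
    have hγ' : sref δ γ₀ ∈ Pos W y := simple_perm hy hsub hcone hmin hδΔ hγ₀Pos hne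
    have hγ'S : sref δ γ₀ ∈ S := by
      refine ⟨hγ', sref δ * u, ?_, ?_⟩
      · exact mul_mem (Subgroup.subset_closure ⟨δ, hδΔ, rfl⟩) huW
      · rw [LinearIsometryEquiv.coe_mul, Function.comp_apply, ← huβ]
    have hlt : ⟪sref δ γ₀, y⟫ < ⟪γ₀, y⟫ := by
      rw [sref_apply_unit hδPos.1.1, inner_sub_left, real_inner_smul_left]
      have h5 := hδPos.2
      nlinarith
    exact absurd (hγ₀min _ hγ'S) (not_le.mpr hlt)

lemma W_subset_Wsimp (hW : IsReflectionGroup W)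
    (hWfin : (W : Set (E ≃ₗᵢ[ℝ] E)).Finite)
    (hy : ∀ α ∈ Rts W, ⟪α, y⟫ ≠ 0)
    (hsub : ↑Δ ⊆ Pos W y) (hcone : ∀ β ∈ Pos W y, CP Δ β)
    (hmin : ∀ T : Finset E, (↑T ⊆ Pos W y ∧ ∀ β ∈ Pos W y, CP T β) → Δ.card ≤ T.card) :
    (W : Set (E ≃ₗᵢ[ℝ] E)) ⊆ (Wsimp Δ : Set (E ≃ₗᵢ[ℝ] E)) := by
  intro w hw
  have h1 := W_le_closure_sref hW hw
  have h2 : Subgroup.closure {u : E ≃ₗᵢ[ℝ] E | ∃ α ∈ Rts W, u = sref α} ≤ Wsimp Δ := by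
    rw [Subgroup.closure_le]
    rintro - ⟨α, hα, rfl⟩
    rcases lt_or_gt_of_ne (hy α hα) with h | h
    · have : -α ∈ Pos W y := ⟨Rts_neg hα, by rw [inner_neg_left]; linarith⟩
      have h4 := sref_pos_mem_Wsimp hWfin hy hsub hcone hmin this
      rwa [sref_neg] at h4
    · exact sref_pos_mem_Wsimp hWfin hy hsub hcone hmin ⟨hα, h⟩
  exact h2 h1

lemma mem_Wsimp_list {u : E ≃ₗᵢ[ℝ] E} (hu : u ∈ Wsimp Δ) :
    ∃ L : List E, (∀ δ ∈ L, δ ∈ Δ) ∧ (L.map sref).prod = u := by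
  have hrev : ∀ L : List E, ((L.map sref).prod)⁻¹ = ((L.reverse.map sref)).prod := by
    intro L
    induction L with
    | nil => simp
    | cons δ M ih =>
      rw [List.map_cons, List.prod_cons, mul_inv_rev, ih, List.reverse_cons, List.map_append,
        List.prod_append, List.map_singleton, List.prod_singleton, sref_inv]
  induction hu using Subgroup.closure_induction with
  | mem x hx =>
    obtain ⟨δ, hδ, rfl⟩ := hx
    exact ⟨[δ], by simpa using hδ, by simp⟩
  | one => exact ⟨[], by simp, by simp⟩
  | mul x z hx hz ihx ihz =>
    obtain ⟨L₁, h₁, rfl⟩ := ihx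
    obtain ⟨L₂, h₂, rfl⟩ := ihz
    refine ⟨L₁ ++ L₂, ?_, by rw [List.map_append, List.prod_append]⟩
    intro δ hδ
    rcases List.mem_append.mp hδ with h | h
    · exact h₁ δ h
    · exact h₂ δ h
  | inv x hx ihx =>
    obtain ⟨L, hL, rfl⟩ := ihx
    refine ⟨L.reverse, ?_, (hrev L).symm⟩
    intro δ hδ
    exact hL δ (List.mem_reverse.mp hδ)

lemma scan_lemma (hy : ∀ α ∈ Rts W, ⟪α, y⟫ ≠ 0)
    (hsub : ↑Δ ⊆ Pos W y) (hcone : ∀ β ∈ Pos W y, CP Δ β)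
    (hmin : ∀ T : Finset E, (↑T ⊆ Pos W y ∧ ∀ β ∈ Pos W y, CP T β) → Δ.card ≤ T.card)
    (M : List E) :
    ∀ β : E, (∀ δ ∈ M, δ ∈ Δ) → β ∈ Pos W y → ((M.map sref).prod) β ∉ Pos W y →
    ∃ M₁ γ M₂, M = M₁ ++ γ :: M₂ ∧ γ ∈ Δ ∧ ((M₂.map sref).prod) β = γ := by
  induction M using List.reverseRecOn with
  | nil =>
    intro β _ hβ hnot
    exfalso
    apply hnot
    simpa using hβ
  | append_singleton M' γ' ih =>
    intro β hroots hβ hnot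
    have hγ'Δ : γ' ∈ Δ := hroots γ' (by simp)
    have hM'roots : ∀ δ ∈ M', δ ∈ Δ := fun δ hδ => hroots δ (by simp [hδ])
    have hsplit : (((M' ++ [γ']).map sref).prod) β = ((M'.map sref).prod) (sref γ' β) := by
      rw [List.map_append, List.prod_append, List.map_singleton, List.prod_singleton,
        LinearIsometryEquiv.coe_mul, Function.comp_apply]
    by_cases hβ' : sref γ' β ∈ Pos W y
    · rw [hsplit] at hnot
      obtain ⟨M₁, γ, M₂, heq, hγΔ, hval⟩ := ih (sref γ' β) hM'roots hβ' hnot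
      refine ⟨M₁, γ, M₂ ++ [γ'], by rw [heq]; simp, hγΔ, ?_⟩
      rw [List.map_append, List.prod_append, List.map_singleton, List.prod_singleton,
        LinearIsometryEquiv.coe_mul, Function.comp_apply]
      exact hval
    · -- first flip here: β must be γ'
      have hββ : β = γ' := by
        by_contra hne
        exact hβ' (simple_perm hy hsub hcone hmin hγ'Δ hβ hne)
      exact ⟨M', γ', [], rfl, hγ'Δ, by simpa using hββ⟩

lemma list_pos_one (hy : ∀ α ∈ Rts W, ⟪α, y⟫ ≠ 0)
    (hsub : ↑Δ ⊆ Pos W y) (hcone : ∀ β ∈ Pos W y, CP Δ β)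
    (hmin : ∀ T : Finset E, (↑T ⊆ Pos W y ∧ ∀ β ∈ Pos W y, CP T β) → Δ.card ≤ T.card)
    (n : ℕ) :
    ∀ L : List E, L.length = n → (∀ δ ∈ L, δ ∈ Δ) →
      (∀ α ∈ Pos W y, ((L.map sref).prod) α ∈ Pos W y) → (L.map sref).prod = 1 := by
  induction n using Nat.strong_induction_on with
  | _ n ih =>
  intro L hlen hroots hpos
  rcases List.eq_nil_or_concat L with rfl | ⟨M, δ, hcat⟩
  · simp
  rw [List.concat_eq_append] at hcat
  subst hcat
  have hδΔ : δ ∈ Δ := hroots δ (by simp)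
  have hδPos : δ ∈ Pos W y := hsub hδΔ
  have hMroots : ∀ γ ∈ M, γ ∈ Δ := fun γ hγ => hroots γ (by simp [hγ])
  set u := ((M ++ [δ]).map sref).prod with hu
  set PM := (M.map sref).prod with hPM
  have husplit : u = PM * sref δ := by
    rw [hu, List.map_append, List.prod_append, List.map_singleton, List.prod_singleton]
  have huδ : u δ ∈ Pos W y := hpos δ hδPos
  have huδval : u δ = -(PM δ) := by
    rw [husplit, LinearIsometryEquiv.coe_mul, Function.comp_apply,
      sref_apply_self δ (Rts_ne_zero hδPos.1), map_neg]
  have hPMδ : PM δ ∉ Pos W y := by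
    intro h
    have h1 := h.2
    have h2 := huδ.2
    rw [huδval, inner_neg_left] at h2
    linarith
  obtain ⟨M₁, γ, M₂, heq, hγΔ, hval⟩ :=
    scan_lemma hy hsub hcone hmin M δ hMroots hδPos hPMδ
  set Q := (M₂.map sref).prod with hQ
  have hconj : sref γ = Q * sref δ * Q⁻¹ := by
    rw [← hval, sref_conj]
  have hPMsplit : PM = (M₁.map sref).prod * (sref γ * Q) := by
    rw [hPM, heq, List.map_append, List.prod_append, List.map_cons, List.prod_cons]
  have hushort : u = ((M₁ ++ M₂).map sref).prod := by
    rw [List.map_append, List.prod_append, husplit, hPMsplit, hconj]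
    have h9 : (M₁.map sref).prod * (Q * sref δ * Q⁻¹ * Q) * sref δ =
        (M₁.map sref).prod * Q * (sref δ * sref δ) := by group
    rw [h9, sref_sq, mul_one]
  have hlenM : (M₁ ++ M₂).length < n := by
    rw [heq] at hlen
    simp only [List.length_append, List.length_cons, List.length_singleton] at hlen ⊢
    omega
  have hroots' : ∀ δ' ∈ M₁ ++ M₂, δ' ∈ Δ := by
    intro δ' hδ'
    rcases List.mem_append.mp hδ' with h | h
    · exact hMroots δ' (heq ▸ List.mem_append.mpr (Or.inl h))
    · exact hMroots δ' (heq ▸ List.mem_append.mpr (Or.inr (List.mem_cons_of_mem γ h)))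
  have hpos' : ∀ α ∈ Pos W y, (((M₁ ++ M₂).map sref).prod) α ∈ Pos W y := by
    intro α hα
    rw [← hushort]
    exact hpos α hα
  have hfin := ih (M₁ ++ M₂).length hlenM (M₁ ++ M₂) rfl hroots' hpos'
  show ((M ++ [δ]).map sref).prod = 1
  rw [← hu, hushort]
  exact hfin

/-- core freeness theorem: an element of W fixing a generic point is the identity -/
theorem fix_generic_eq_one {W : Subgroup (E ≃ₗᵢ[ℝ] E)}
    (hWfin : (W : Set (E ≃ₗᵢ[ℝ] E)).Finite) (hW : IsReflectionGroup W)
    {y : E} (hy' : y ∈ (⋃₀ coxeterArrangement W)ᶜ)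
    {u : E ≃ₗᵢ[ℝ] E} (huW : u ∈ W) (hfix : u y = y) : u = 1 := by
  classical
  have hy : ∀ α ∈ Rts W, ⟪α, y⟫ ≠ 0 := fun α hα => generic_inner_ne_zero hy' hα
  obtain ⟨Δ, ⟨hsub, hcone⟩, hmin⟩ := exists_simple_system hWfin y
  have hu : u ∈ Wsimp Δ := W_subset_Wsimp hW hWfin hy hsub hcone hmin huW
  obtain ⟨L, hroots, hprod⟩ := mem_Wsimp_list hu
  have hpos : ∀ α ∈ Pos W y, ((L.map sref).prod) α ∈ Pos W y := by
    intro α hα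
    rw [hprod]
    refine ⟨Rts_smul_mem hα.1 huW, ?_⟩
    have h1 : ⟪u α, y⟫ = ⟪α, y⟫ := by
      conv_lhs => rw [← hfix]
      exact LinearIsometryEquiv.inner_map_map u α y
    rw [h1]
    exact hα.2
  have := list_pos_one hy hsub hcone hmin L.length L rfl hroots hpos
  rw [hprod] at this
  exact this

end SimpleGen

-- === Part 7 : barycenter fixed point and freeness glue ===

lemma pow_image_mem {w : E ≃ₗᵢ[ℝ] E} {c : Set E} (hwc : (⇑w) '' c = c) {x : E} (hx : x ∈ c) :
    ∀ k : ℕ, (w ^ k) x ∈ c := by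
  intro k
  induction k with
  | zero => simpa using hx
  | succ k ih =>
    have h1 : (w ^ (k+1)) x = w ((w ^ k) x) := by
      rw [pow_succ', LinearIsometryEquiv.coe_mul, Function.comp_apply]
    rw [h1, ← hwc]
    exact mem_image_of_mem _ ih

lemma exists_fixed_point_of_image_eq
    {W : Subgroup (E ≃ₗᵢ[ℝ] E)} (hWfin : (W : Set (E ≃ₗᵢ[ℝ] E)).Finite)
    {w : E ≃ₗᵢ[ℝ] E} (hw : w ∈ W) {c : Set E} (hconv : Convex ℝ c)
    (hne : c.Nonempty) (hwc : (⇑w) '' c = c) :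
    ∃ y ∈ c, w y = y := by
  classical
  obtain ⟨x, hx⟩ := hne
  have : Finite ↥W := hWfin.to_subtype
  set ω : ↥W := ⟨w, hw⟩ with hω
  set n : ℕ := orderOf ω with hn
  have hnpos : 0 < n := orderOf_pos ω
  have hωn : ω ^ n = 1 := pow_orderOf_eq_one ω
  have hwn : w ^ n = 1 := by
    have := congrArg (Subtype.val) hωn
    simpa using this
  set y : E := (n : ℝ)⁻¹ • ∑ k ∈ Finset.range n, (w ^ k) x with hy
  have hn0 : (n : ℝ) ≠ 0 := (Nat.cast_pos.mpr hnpos).ne'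
  refine ⟨y, ?_, ?_⟩
  · have h1 : y = ∑ k ∈ Finset.range n, (n : ℝ)⁻¹ • (w ^ k) x := by
      rw [hy, Finset.smul_sum]
    rw [h1]
    apply hconv.sum_mem
    · intro k _
      positivity
    · rw [Finset.sum_const, Finset.card_range, nsmul_eq_mul]
      field_simp
    · intro k _
      exact pow_image_mem hwc hx k
  · rw [hy, map_smul, map_sum]
    congr 1
    have hstep : ∀ k, w ((w ^ k) x) = (w ^ (k+1)) x := by
      intro k
      rw [pow_succ', LinearIsometryEquiv.coe_mul, Function.comp_apply]
    rw [Finset.sum_congr rfl (fun k _ => hstep k)]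
    have e1 := Finset.sum_range_succ' (fun k => (w ^ k) x) n
    have e2 := Finset.sum_range_succ (fun k => (w ^ k) x) n
    have e3 : ∑ k ∈ Finset.range n, (w ^ (k+1)) x + (w ^ 0) x
        = ∑ k ∈ Finset.range n, (w ^ k) x + (w ^ n) x := e1.symm.trans e2
    have h2 : (w ^ n) x = x := by rw [hwn]; rfl
    have h3 : (w ^ 0) x = x := by rfl
    rw [h2, h3] at e3
    exact add_right_cancel e3

/-- freeness: an element of W mapping a chamber of C to itself is the identity -/
theorem freeness_core
    {W : Subgroup (E ≃ₗᵢ[ℝ] E)} (hWfin : (W : Set (E ≃ₗᵢ[ℝ] E)).Finite)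
    (hW : IsReflectionGroup W) {𝒞 : Set (Set E)} (h𝒞 : IsArrangement 𝒞)
    (hsubA : coxeterArrangement W ⊆ 𝒞)
    {w : E ≃ₗᵢ[ℝ] E} (hw : w ∈ W) {c : Set E} (hc : c ∈ chambers 𝒞)
    (hwc : (⇑w) '' c = c) : w = 1 := by
  classical
  obtain ⟨x, hx, rfl⟩ := (chambers_iff h𝒞).mp hc
  obtain ⟨y, hyc, hyfix⟩ := exists_fixed_point_of_image_eq hWfin hw
    (convex_SC 𝒞 x) ⟨x, mem_SC_self h𝒞 hx⟩ hwc
  have hycompl : y ∈ (⋃₀ 𝒞)ᶜ := SC_subset_compl h𝒞 x hyc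
  have hyA : y ∈ (⋃₀ coxeterArrangement W)ᶜ := by
    intro hmem
    apply hycompl
    obtain ⟨H, hH, hyH⟩ := hmem
    exact ⟨H, hsubA hH, hyH⟩
  exact fix_generic_eq_one hWfin hW hyA hw hyfix

-- === Part 8 : connectivity of a chamber minus the codimension-2 locus ===

lemma linearMap_eq_zero_of_ball {L : E →ₗ[ℝ] ℝ} {d : ℝ} {u : E} {ε : ℝ} (hε : 0 < ε)
    (h : ∀ v, v ∈ Metric.ball u ε → L v = d) : L = 0 := by
  have hv0 : ∀ v : E, ‖v‖ < ε → L v = 0 := by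
    intro v hv
    have h1 : L (u + v) = d := h _ (by
      simp only [Metric.mem_ball, dist_eq_norm]
      simpa using hv)
    have h2 : L u = d := h _ (by simp [Metric.mem_ball, hε])
    rw [map_add] at h1
    linarith
  ext x
  rcases eq_or_ne x 0 with rfl | hx
  · simp
  · have hnx : 0 < ‖x‖ := norm_pos_iff.mpr hx
    have h3 : ‖(ε / (2 * ‖x‖)) • x‖ < ε := by
      rw [norm_smul, Real.norm_eq_abs, abs_of_pos (by positivity)]
      rw [div_mul_eq_mul_div, mul_comm]
      rw [div_lt_iff₀ (by positivity)]
      nlinarith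
    have h4 := hv0 _ h3
    rw [map_smul, smul_eq_mul] at h4
    have h5 : ε / (2 * ‖x‖) ≠ 0 := by positivity
    simpa [h5] using h4

/-- a nonempty open set cannot be covered by finitely many affine hyperplanes -/
lemma exists_avoid_fin (G : Finset (Set E)) :
    ∀ U : Set E, IsOpen U → U.Nonempty →
      (∀ A ∈ G, ∃ (L : E →ₗ[ℝ] ℝ) (d : ℝ), L ≠ 0 ∧ A = {z | L z = d}) →
      ∃ z ∈ U, ∀ A ∈ G, z ∉ A := by
  classical
  induction G using Finset.induction_on with
  | empty =>
    intro U _ hUne _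
    obtain ⟨z, hz⟩ := hUne
    exact ⟨z, hz, fun A hA => absurd hA (by simp)⟩
  | @insert A G' hA ih =>
    intro U hUopen hUne hhyp
    obtain ⟨L, d, hL, hAeq⟩ := hhyp A (Finset.mem_insert_self A G')
    set U' := U ∩ {z | L z ≠ d} with hU'
    have hU'open : IsOpen U' :=
      hUopen.inter ((isClosed_eq (L.continuous_of_finiteDimensional) continuous_const).isOpen_compl)
    have hU'ne : U'.Nonempty := by
      by_contra hcon
      rw [not_nonempty_iff_eq_empty] at hcon
      have hsub : U ⊆ {z | L z = d} := by
        intro u hu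
        by_contra hu2
        have hmem : u ∈ U' := ⟨hu, hu2⟩
        rw [hcon] at hmem
        exact notMem_empty u hmem
      obtain ⟨u, hu⟩ := hUne
      obtain ⟨ε, hε, hball⟩ := Metric.isOpen_iff.mp hUopen u hu
      exact hL (linearMap_eq_zero_of_ball hε (fun v hv => hsub (hball hv)))
    obtain ⟨z, hzU', hz⟩ := ih U' hU'open hU'ne
      (fun B hB => hhyp B (Finset.mem_insert_of_mem hB))
    refine ⟨z, hzU'.1, ?_⟩
    intro B hB
    rcases Finset.mem_insert.mp hB with rfl | hB'
    · rw [hAeq]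
      exact hzU'.2
    · exact hz B hB'

lemma exists_avoid {G : Set (Set E)} (hGfin : G.Finite) (U : Set E) (hUopen : IsOpen U)
    (hUne : U.Nonempty)
    (hhyp : ∀ A ∈ G, ∃ (L : E →ₗ[ℝ] ℝ) (d : ℝ), L ≠ 0 ∧ A = {z | L z = d}) :
    ∃ z ∈ U, ∀ A ∈ G, z ∉ A := by
  obtain ⟨z, hzU, hz⟩ := exists_avoid_fin hGfin.toFinset U hUopen hUne
    (fun A hA => hhyp A (by simpa using hA))
  exact ⟨z, hzU, fun A hA => hz A (by simpa using hA)⟩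

/-- the "bad" hyperplane through which segments from p hit H ∩ K -/
def badSet (p : E) (H K : Set E) : Set E :=
  {z | gg K p * gg H z - gg H p * gg K z = 0}

lemma comb_eq (p z : E) (t : ℝ) : p + t • (z - p) = (1 - t) • p + t • z := by
  rw [sub_smul, smul_sub, one_smul]
  abel

lemma badSet_spec {p z : E} {H K : Set E} {t : ℝ} (ht : t ≠ 0)
    (hmem : (p + t • (z - p)) ∈ H ∩ K) (hH : IsAffineHyperplane H) (hK : IsAffineHyperplane K) :
    z ∈ badSet p H K := by
  have h1 : gg H (p + t • (z - p)) = 0 := (gg_eq_zero_iff hH).mpr hmem.1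
  have h2 : gg K (p + t • (z - p)) = 0 := (gg_eq_zero_iff hK).mpr hmem.2
  rw [comb_eq, gg_affine H p z (1-t) t (by ring)] at h1
  rw [comb_eq, gg_affine K p z (1-t) t (by ring)] at h2
  show gg K p * gg H z - gg H p * gg K z = 0
  have h3 : t * (gg K p * gg H z - gg H p * gg K z) = 0 := by
    linear_combination gg K p * h1 - gg H p * h2
  rcases mul_eq_zero.mp h3 with h | h
  · exact absurd h ht
  · exact h

lemma badSet_hyper {p : E} {H K : Set E} (hH : IsAffineHyperplane H) (hK : IsAffineHyperplane K)
    (hne : H ≠ K) (hint : (H ∩ K).Nonempty) (hp : p ∉ H ∩ K) :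
    ∃ (L : E →ₗ[ℝ] ℝ) (d : ℝ), L ≠ 0 ∧ badSet p H K = {z | L z = d} := by
  obtain ⟨hfH, hHeq⟩ := hypF_spec hH
  obtain ⟨hfK, hKeq⟩ := hypF_spec hK
  refine ⟨gg K p • (hypF H).1 - gg H p • (hypF K).1,
    gg K p * (hypF H).2 - gg H p * (hypF K).2, ?_, ?_⟩
  · intro h0
    have hzero : ∀ x, gg K p * (hypF H).1 x = gg H p * (hypF K).1 x := by
      intro x
      have := LinearMap.congr_fun h0 x
      simp only [LinearMap.sub_apply, LinearMap.smul_apply, smul_eq_mul,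
        LinearMap.zero_apply] at this
      linarith
    by_cases ha : gg K p = 0
    · -- then gg H p ≠ 0 and f_K = 0, contradiction
      have hb : gg H p ≠ 0 := by
        intro hb0
        exact hp ⟨(gg_eq_zero_iff hH).mp hb0, (gg_eq_zero_iff hK).mp ha⟩
      apply hfK
      ext x
      have := hzero x
      rw [ha, zero_mul] at this
      have h2 : (hypF K).1 x = 0 := by
        rcases mul_eq_zero.mp this.symm with h | h
        · exact absurd h hb
        · exact h
      simp [h2]
    · -- f_H proportional to f_K forces H = K
      have hb : gg H p ≠ 0 := by
        intro hb0
        apply hfH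
        ext x
        have := hzero x
        rw [hb0, zero_mul] at this
        have h2 : (hypF H).1 x = 0 := by
          rcases mul_eq_zero.mp this with h | h
          · exact absurd h ha
          · exact h
        simp [h2]
      obtain ⟨q, hq⟩ := hint
      have hqH : (hypF H).1 q = (hypF H).2 := by
        have := (gg_eq_zero_iff hH).mpr hq.1
        rw [gg] at this
        linarith
      have hqK : (hypF K).1 q = (hypF K).2 := by
        have := (gg_eq_zero_iff hK).mpr hq.2
        rw [gg] at this
        linarith
      apply hne
      rw [hHeq, hKeq]
      ext x
      simp only [mem_setOf_eq]
      constructor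
      · intro hx
        have h5 := hzero x
        have h6 := hzero q
        rw [hqH, hqK] at h6
        have h7 : gg K p * (hypF H).2 = gg H p * (hypF K).2 := h6
        rw [hx] at h5
        rw [h7] at h5
        have := mul_left_cancel₀ hb h5.symm
        linarith [this]
      · intro hx
        have h5 := hzero x
        have h6 := hzero q
        rw [hqH, hqK] at h6
        rw [hx] at h5
        rw [← h6] at h5
        have := mul_left_cancel₀ ha h5
        linarith [this]
  · ext z
    simp only [badSet, mem_setOf_eq, LinearMap.sub_apply, LinearMap.smul_apply, smul_eq_mul, gg]
    constructor
    · intro h; nlinarith [h]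
    · intro h; nlinarith [h]

/-- the codimension ≥ 2 locus of an arrangement -/
def NN (𝒞 : Set (Set E)) : Set E := {q | ∃ H ∈ 𝒞, ∃ K ∈ 𝒞, H ≠ K ∧ q ∈ H ∩ K}

lemma segment_joined {X : Set E} {x z : E}
    (hseg : ∀ t : ℝ, 0 ≤ t → t ≤ 1 → x + t • (z - x) ∈ X) : JoinedIn X x z := by
  refine ⟨⟨⟨fun t => x + (t : ℝ) • (z - x), ?_⟩, ?_, ?_⟩, ?_⟩
  · exact continuous_const.add (continuous_subtype_val.smul continuous_const)
  · simp
  · simp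
  · intro t
    exact hseg t t.2.1 t.2.2

theorem X_preconnected {𝒞 : Set (Set E)} (h𝒞 : IsArrangement 𝒞) {b : Set E}
    (hbopen : IsOpen b) (hbconv : Convex ℝ b) : IsPreconnected (b \ NN 𝒞) := by
  classical
  set X := b \ NN 𝒞 with hX
  rcases X.eq_empty_or_nonempty with h | ⟨x₀, hx₀⟩
  · rw [h]; exact isPreconnected_empty
  have hjoin : ∀ x ∈ X, ∀ y ∈ X, JoinedIn X x y := by
    intro x hx y hy
    -- the finite family of bad hyperplanes
    set P : Set (Set E × Set E) :=
      {HK | HK.1 ∈ 𝒞 ∧ HK.2 ∈ 𝒞 ∧ HK.1 ≠ HK.2 ∧ (HK.1 ∩ HK.2).Nonempty} with hP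
    have hPfin : P.Finite := (h𝒞.1.prod h𝒞.1).subset (fun HK hHK => ⟨hHK.1, hHK.2.1⟩)
    set G : Set (Set E) := ((fun HK : Set E × Set E => badSet x HK.1 HK.2) '' P) ∪
      ((fun HK : Set E × Set E => badSet y HK.1 HK.2) '' P) with hG
    have hGfin : G.Finite := (hPfin.image _).union (hPfin.image _)
    have hnotmem : ∀ p ∈ X, ∀ HK ∈ P, p ∉ HK.1 ∩ HK.2 := by
      rintro p hp HK ⟨h1, h2, h3, -⟩ hmem
      exact hp.2 ⟨HK.1, h1, HK.2, h2, h3, hmem⟩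
    have hhyp : ∀ A ∈ G, ∃ (L : E →ₗ[ℝ] ℝ) (d : ℝ), L ≠ 0 ∧ A = {z | L z = d} := by
      rintro A (⟨HK, hHK, rfl⟩ | ⟨HK, hHK, rfl⟩)
      · exact badSet_hyper (h𝒞.2 _ hHK.1) (h𝒞.2 _ hHK.2.1) hHK.2.2.1 hHK.2.2.2
          (hnotmem x hx HK hHK)
      · exact badSet_hyper (h𝒞.2 _ hHK.1) (h𝒞.2 _ hHK.2.1) hHK.2.2.1 hHK.2.2.2
          (hnotmem y hy HK hHK)
    obtain ⟨z, hzb, hz⟩ := exists_avoid hGfin b hbopen ⟨x, hx.1⟩ hhyp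
    -- z avoids all pairwise intersections
    have hzX : z ∈ X := by
      refine ⟨hzb, ?_⟩
      rintro ⟨H, hH, K, hK, hne, hzm⟩
      apply hz (badSet x H K) (Or.inl ⟨(H, K), ⟨hH, hK, hne, ⟨z, hzm⟩⟩, rfl⟩)
      exact badSet_spec one_ne_zero (by simpa using hzm) (h𝒞.2 _ hH) (h𝒞.2 _ hK)
    have hseg1 : ∀ t : ℝ, 0 ≤ t → t ≤ 1 → x + t • (z - x) ∈ X := by
      intro t ht0 ht1
      constructor
      · rw [comb_eq]
        exact hbconv hx.1 hzb (by linarith) ht0 (by ring)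
      · rintro ⟨H, hH, K, hK, hne, hmem⟩
        rcases eq_or_ne t 0 with rfl | ht
        · simp only [zero_smul, add_zero] at hmem
          exact hx.2 ⟨H, hH, K, hK, hne, hmem⟩
        · apply hz (badSet x H K) (Or.inl ⟨(H, K), ⟨hH, hK, hne, ⟨_, hmem⟩⟩, rfl⟩)
          exact badSet_spec ht hmem (h𝒞.2 _ hH) (h𝒞.2 _ hK)
    have hseg2 : ∀ t : ℝ, 0 ≤ t → t ≤ 1 → z + t • (y - z) ∈ X := by
      intro t ht0 ht1
      constructor
      · rw [comb_eq]
        exact hbconv hzb hy.1 (by linarith) ht0 (by ring)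
      · rintro ⟨H, hH, K, hK, hne, hmem⟩
        rcases eq_or_ne t 1 with rfl | ht
        · have : z + (1:ℝ) • (y - z) = y := by module
          rw [this] at hmem
          exact hy.2 ⟨H, hH, K, hK, hne, hmem⟩
        · have h7 : y + (1 - t) • (z - y) = z + t • (y - z) := by module
          apply hz (badSet y H K) (Or.inr ⟨(H, K), ⟨hH, hK, hne, ⟨_, hmem⟩⟩, rfl⟩)
          exact badSet_spec (sub_ne_zero.mpr (Ne.symm ht)) (h7 ▸ hmem) (h𝒞.2 _ hH) (h𝒞.2 _ hK)
    exact (segment_joined hseg1).trans (segment_joined hseg2)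
  have hpath : IsPathConnected X := ⟨x₀, hx₀, fun {y} hy => hjoin x₀ hx₀ y hy⟩
  exact hpath.isConnected.isPreconnected

-- === Part 9 : main theorem ===

lemma innerSL_toLinearMap_ne_zero {α : E} (hα0 : α ≠ 0) :
    ((innerSL ℝ α).toLinearMap : E →ₗ[ℝ] ℝ) ≠ 0 := by
  intro h0
  have := LinearMap.congr_fun h0 α
  simp only [LinearMap.zero_apply, ContinuousLinearMap.coe_coe, innerSL_apply_apply] at this
  have h2 : ⟪α, α⟫ = 0 := by simpa using this
  have h3 : ⟪α, α⟫ ≠ 0 := by simpa using (inner_self_ne_zero (𝕜 := ℝ)).mpr hα0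
  exact h3 h2

lemma gg_inner_prop {H : Set E} (hH : IsAffineHyperplane H) {α : E} (hα0 : α ≠ 0)
    (hHeq : H = {x | ⟪α, x⟫ = 0}) :
    ∃ l : ℝ, l ≠ 0 ∧ ∀ x, gg H x = l * ⟪α, x⟫ := by
  have hsets : {x : E | ((innerSL ℝ α).toLinearMap : E →ₗ[ℝ] ℝ) x = 0} =
      {x | (hypF H).1 x = (hypF H).2} := by
    rw [← (hypF_spec hH).2, hHeq]
    ext x
    simp
  obtain ⟨l, hl, hprop⟩ := prop_aff (innerSL_toLinearMap_ne_zero hα0) hsets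
  refine ⟨l, hl, fun x => ?_⟩
  have := hprop x
  simpa [gg] using this


/-- For every chamber `b` of `ℬ`, the isotropy subgroup `W_b` acts freely and transitively
on the set of chambers of `C = A ∪ B` contained in `b`. -/
theorem isotropy_free_transitive_on_fiber
    (W : Subgroup (E ≃ₗᵢ[ℝ] E)) (hWfin : (W : Set (E ≃ₗᵢ[ℝ] E)).Finite)
    (hW : IsReflectionGroup W)
    (ℬ : Set (Set E)) (hB : IsArrangement ℬ) (hBW : WStable W ℬ)
    (hdisj : coxeterArrangement W ∩ ℬ = ∅)
    (b : Set E) (hb : b ∈ chambers ℬ) :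
    (∀ w ∈ W, (⇑w) '' b = b →
      ∀ c ∈ chambers (coxeterArrangement W ∪ ℬ), c ⊆ b → (⇑w) '' c = c → w = 1) ∧
    (∀ c₁ ∈ chambers (coxeterArrangement W ∪ ℬ), c₁ ⊆ b →
      ∀ c₂ ∈ chambers (coxeterArrangement W ∪ ℬ), c₂ ⊆ b →
        ∃ w ∈ W, (⇑w) '' b = b ∧ (⇑w) '' c₁ = c₂) := by
  classical
  set 𝒞 : Set (Set E) := coxeterArrangement W ∪ ℬ with h𝒞def
  have hAfin : (coxeterArrangement W).Finite := by
    apply (hWfin.image (fun w => {x | w x = x})).subset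
    rintro H ⟨w, hwW, -, rfl⟩
    exact mem_image_of_mem _ hwW
  have hAhyp : ∀ H ∈ coxeterArrangement W, IsAffineHyperplane H := by
    rintro H ⟨w, hwW, hrefl, rfl⟩
    obtain ⟨f, hf, heq⟩ := hrefl
    exact ⟨f, 0, hf, heq⟩
  have h𝒞 : IsArrangement 𝒞 := by
    refine ⟨hAfin.union hB.1, ?_⟩
    rintro H (hH | hH)
    · exact hAhyp H hH
    · exact hB.2 H hH
  have himg_inner : ∀ (u : E ≃ₗᵢ[ℝ] E) (α : E),
      (⇑u) '' {x | ⟪α, x⟫ = 0} = {x | ⟪u α, x⟫ = 0} := by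
    intro u α
    ext x
    simp only [mem_image, mem_setOf_eq]
    constructor
    · rintro ⟨z, hz, rfl⟩
      rw [LinearIsometryEquiv.inner_map_map]
      exact hz
    · intro hx
      refine ⟨u⁻¹ x, ?_, by simp⟩
      have : ⟪u α, u (u⁻¹ x)⟫ = ⟪α, u⁻¹ x⟫ := LinearIsometryEquiv.inner_map_map u α _
      rw [← this]
      simpa using hx
  have hCstab : ∀ u : E ≃ₗᵢ[ℝ] E, u ∈ W → ∀ K ∈ 𝒞, (⇑u) '' K ∈ 𝒞 := by
    intro u hu K hK
    rcases hK with hK | hK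
    · left
      obtain ⟨α, hα, rfl⟩ := coxeterArrangement_iff.mp hK
      exact coxeterArrangement_iff.mpr ⟨u α, Rts_smul_mem hα hu, (himg_inner u α)⟩
    · right
      exact hBW u hu K hK
  have hsubA : coxeterArrangement W ⊆ 𝒞 := subset_union_left
  constructor
  · -- freeness
    intro w hwW _ c hc _ hwc
    exact freeness_core hWfin hW h𝒞 hsubA hwW hc hwc
  · -- transitivity
    obtain ⟨xb, hxb, hbeq⟩ := (chambers_iff hB).mp hb
    intro c₁ hc₁ hc₁b c₂ hc₂ hc₂b
    obtain ⟨x₁, hx₁, rfl⟩ := (chambers_iff h𝒞).mp hc₁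
    obtain ⟨x₂, hx₂, rfl⟩ := (chambers_iff h𝒞).mp hc₂
    have hbopen : IsOpen b := by rw [hbeq]; exact isOpen_SC hB xb
    have hbconv : Convex ℝ b := by rw [hbeq]; exact convex_SC ℬ xb
    set X : Set E := b \ NN 𝒞 with hXdef
    have hXmem : ∀ p, p ∈ (⋃₀ 𝒞)ᶜ → p ∈ b → p ∈ X := by
      intro p hp hpb
      refine ⟨hpb, ?_⟩
      rintro ⟨H, hH, K, hK, hne, hmem⟩
      exact not_mem_sUnion_iff.mp hp H hH hmem.1
    have hx₁X : x₁ ∈ X := hXmem x₁ hx₁ (hc₁b (mem_SC_self h𝒞 hx₁))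
    have hx₂X : x₂ ∈ X := hXmem x₂ hx₂ (hc₂b (mem_SC_self h𝒞 hx₂))
    have himgmul : ∀ (s u : E ≃ₗᵢ[ℝ] E) (t : Set E), (⇑(s * u)) '' t = ⇑s '' (⇑u '' t) := by
      intro s u t
      rw [LinearIsometryEquiv.coe_mul, Set.image_comp]
    set O : Set (Set E) := {c | ∃ u : E ≃ₗᵢ[ℝ] E, u ∈ W ∧ (⇑u) '' b = b ∧
      (⇑u) '' (SC 𝒞 x₁) = c} with hOdef
    have hO_chamber : ∀ c ∈ O, ∃ xc, xc ∈ (⋃₀ 𝒞)ᶜ ∧ c = SC 𝒞 xc := by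
      rintro c ⟨u, hu, hub, rfl⟩
      exact ⟨u x₁, image_mem_compl u (fun K hK => hCstab u⁻¹ (inv_mem hu) K hK) hx₁,
        SC_image h𝒞 u (hCstab u hu) (fun K hK => hCstab u⁻¹ (inv_mem hu) K hK) x₁⟩
    have hOsub : O ⊆ chambers 𝒞 := by
      intro c hc
      obtain ⟨xc, hxc, hceq⟩ := hO_chamber c hc
      exact (chambers_iff h𝒞).mpr ⟨xc, hxc, hceq⟩
    have hOfin : O.Finite := (chambers_finite h𝒞).subset hOsub
    have hOmul : ∀ c ∈ O, ∀ s : E ≃ₗᵢ[ℝ] E, s ∈ W → (⇑s) '' b = b → (⇑s) '' c ∈ O := by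
      rintro c ⟨u, hu, hub, rfl⟩ s hs hsb
      refine ⟨s * u, mul_mem hs hu, ?_, ?_⟩
      · rw [himgmul, hub, hsb]
      · rw [himgmul]
    have hc₁O : SC 𝒞 x₁ ∈ O := ⟨1, one_mem W, by simp, by simp⟩
    set CL : Set E := ⋃ c ∈ O, closure c with hCLdef
    have hCLclosed : IsClosed CL := hOfin.isClosed_biUnion fun _ _ => isClosed_closure
    set Y : Set E := X ∩ CL with hYdef
    have hx₁Y : x₁ ∈ Y := ⟨hx₁X,
      mem_iUnion₂.mpr ⟨SC 𝒞 x₁, hc₁O, subset_closure (mem_SC_self h𝒞 hx₁)⟩⟩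
    -- the main local step
    have hYopen : ∀ z ∈ Y, ∃ r > 0, Metric.ball z r ∩ X ⊆ Y := by
      rintro z ⟨hzX, hzCL⟩
      obtain ⟨c, hcO, hzc⟩ := mem_iUnion₂.mp hzCL
      obtain ⟨xc, hxc, hceq⟩ := hO_chamber c hcO
      set Ks : Set (Set E) := {K ∈ 𝒞 | z ∉ K} with hKsdef
      have hKsfin : Ks.Finite := h𝒞.1.subset (sep_subset _ _)
      set V : Set E := b ∩ ⋂ K ∈ Ks, {p | 0 < gg K p * gg K z} with hVdef
      have hVopen : IsOpen V := hbopen.inter (hKsfin.isOpen_biInter fun K _ =>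
        isOpen_lt continuous_const ((gg_cont K).mul continuous_const))
      have hzV : z ∈ V := by
        refine ⟨hzX.1, mem_iInter₂.mpr ?_⟩
        intro K hK
        have : gg K z ≠ 0 := fun h0 => hK.2 ((gg_eq_zero_iff (h𝒞.2 K hK.1)).mp h0)
        exact mul_self_pos.mpr this
      obtain ⟨r', hr'pos, hball⟩ := Metric.isOpen_iff.mp hVopen z hzV
      by_cases hzU : z ∈ ⋃₀ 𝒞
      · -- z lies on exactly one hyperplane H, which is a reflecting one
        obtain ⟨H, hH𝒞, hzH⟩ := hzU
        have hHuniq : ∀ K ∈ 𝒞, K ≠ H → z ∉ K := by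
          intro K hK hne hzK
          exact hzX.2 ⟨K, hK, H, hH𝒞, hne, hzK, hzH⟩
        have hKmem : ∀ K ∈ 𝒞, K ≠ H → K ∈ Ks := fun K hK hne => ⟨hK, hHuniq K hK hne⟩
        have hHA : H ∈ coxeterArrangement W := by
          rcases (show H ∈ 𝒞 from hH𝒞) with h | h
          · exact h
          · exfalso
            have hzb' : z ∈ (⋃₀ ℬ)ᶜ := by
              have := SC_subset_compl hB xb
              rw [← hbeq] at this
              exact this hzX.1
            exact not_mem_sUnion_iff.mp hzb' H h hzH
        obtain ⟨α, hαRts, hHeq⟩ := coxeterArrangement_iff.mp hHA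
        have hα1 : ‖α‖ = 1 := hαRts.1
        have hα0 : α ≠ 0 := Rts_ne_zero hαRts
        have hαz : ⟪α, z⟫ = 0 := by
          have := hHeq ▸ hzH
          exact this
        set s := sref α with hsdef
        have hsW : s ∈ W := hαRts.2
        have hsz : s z = z := (sref_fix_iff hα0 z).mpr hαz
        have hsinv : (s⁻¹ : E ≃ₗᵢ[ℝ] E) = s := sref_inv α
        have hsb : (⇑s) '' b = b := by
          have h1 : (⇑s) '' b = SC ℬ (s xb) := by
            rw [hbeq]
            exact SC_image hB s (fun K hK => hBW s hsW K hK)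
              (fun K hK => hBW s⁻¹ (inv_mem hsW) K hK) xb
          have h2 : (⇑s) '' b ∈ chambers ℬ := (chambers_iff hB).mpr
            ⟨s xb, image_mem_compl s (fun K hK => hBW s⁻¹ (inv_mem hsW) K hK) hxb, h1⟩
          exact chambers_eq_of_mem hB h2 hb ⟨z, hzX.1, hsz⟩ hzX.1
        obtain ⟨l, hl0, hggH⟩ := gg_inner_prop (h𝒞.2 H hH𝒞) hα0 hHeq
        have hzcl : z ∈ closure (SC 𝒞 xc) := hceq ▸ hzc
        obtain ⟨p, hpc, hpdist⟩ := Metric.mem_closure_iff.mp hzcl r' hr'pos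
        have hpball : p ∈ Metric.ball z r' := by
          rw [Metric.mem_ball, dist_comm]
          exact hpdist
        have hpV := hball hpball
        have hpgen : p ∈ (⋃₀ 𝒞)ᶜ := SC_subset_compl h𝒞 xc hpc
        have hαp : ⟪α, p⟫ ≠ 0 := by
          intro h0
          exact (gg_ne_zero h𝒞 hpgen hH𝒞) (by rw [hggH p, h0, mul_zero])
        have hSCp : SC 𝒞 p = SC 𝒞 xc := SC_eq_of_mem hpc
        refine ⟨r', hr'pos, ?_⟩
        rintro q ⟨hqball, hqX⟩
        have hqV := hball hqball
        have hKsign : ∀ K ∈ 𝒞, K ≠ H → 0 < gg K q * gg K p := by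
          intro K hK hne
          have hKs := hKmem K hK hne
          have h1 : 0 < gg K q * gg K z := mem_iInter₂.mp hqV.2 K hKs
          have h2 : 0 < gg K p * gg K z := mem_iInter₂.mp hpV.2 K hKs
          exact sgn_trans (mul_comm (gg K p) (gg K z) ▸ h2) h1
        by_cases hqU : q ∈ ⋃₀ 𝒞
        · -- q lies on H as well : q is in the closure of the chamber of p
          obtain ⟨K₀, hK₀, hqK₀⟩ := hqU
          have hK₀H : K₀ = H := by
            by_contra hne
            have hKs := hKmem K₀ hK₀ hne
            have h1 : 0 < gg K₀ q * gg K₀ z := mem_iInter₂.mp hqV.2 K₀ hKs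
            have h2 : gg K₀ q = 0 := (gg_eq_zero_iff (h𝒞.2 K₀ hK₀)).mpr hqK₀
            rw [h2, zero_mul] at h1
            exact lt_irrefl 0 h1
          rw [hK₀H] at hqK₀
          have hαq : ⟪α, q⟫ = 0 := by
            have := hHeq ▸ hqK₀
            exact this
          have hqcl : q ∈ closure (SC 𝒞 p) := by
            rw [Metric.mem_closure_iff]
            intro ε hε
            obtain ⟨δ, hδpos, hδball⟩ := Metric.isOpen_iff.mp hVopen q (hball hqball)
            set m : ℝ := min (ε/2) (δ/2) with hm
            have hmpos : 0 < m := lt_min (by linarith) (by linarith)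
            set t : ℝ := (if 0 < ⟪α, p⟫ then 1 else -1) * m with htdef
            have htabs : |t| = m := by
              rw [htdef, abs_mul, abs_of_pos hmpos]
              split <;> simp
            have htne : t ≠ 0 := by
              intro h0
              rw [h0] at htabs
              simp at htabs
              linarith
            set qt : E := q + t • α with hqt
            have hdistqt : dist q qt = |t| := by
              rw [dist_eq_norm, hqt]
              have : q - (q + t • α) = -(t • α) := by abel
              rw [this, norm_neg, norm_smul, Real.norm_eq_abs, hα1, mul_one]
            have hqtV : qt ∈ V := by
              apply hδball
              rw [Metric.mem_ball, dist_comm, hdistqt, htabs]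
              calc m ≤ δ/2 := min_le_right _ _
                _ < δ := by linarith
            have hαqt : ⟪α, qt⟫ = t := by
              rw [hqt, inner_add_right, hαq, real_inner_smul_right]
              have : ⟪α, α⟫ = 1 := by
                rw [real_inner_self_eq_norm_sq, hα1]; norm_num
              rw [this]
              ring
            have htp : 0 < t * ⟪α, p⟫ := by
              rw [htdef]
              rcases lt_or_gt_of_ne hαp with h | h
              · rw [if_neg (by linarith)]
                nlinarith
              · rw [if_pos h]
                nlinarith
            have hqtSC : qt ∈ SC 𝒞 p := by
              intro K hK
              by_cases hKH : K = H
              · subst hKH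
                rw [hggH qt, hggH p, hαqt]
                nlinarith [mul_self_pos.mpr hl0]
              · have hKs := hKmem K hK hKH
                have h1 : 0 < gg K qt * gg K z := mem_iInter₂.mp hqtV.2 K hKs
                have h2 : 0 < gg K p * gg K z := mem_iInter₂.mp hpV.2 K hKs
                exact sgn_trans (mul_comm (gg K p) (gg K z) ▸ h2) h1
            refine ⟨qt, hqtSC, ?_⟩
            rw [hdistqt, htabs]
            calc m ≤ ε/2 := min_le_left _ _
              _ < ε := by linarith
          refine ⟨hqX, mem_iUnion₂.mpr ⟨c, hcO, ?_⟩⟩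
          rw [hceq, ← hSCp]
          exact hqcl
        · -- q is generic : q lies in the chamber of p or of s p
          have hαq : ⟪α, q⟫ ≠ 0 := by
            intro h0
            exact (gg_ne_zero h𝒞 hqU hH𝒞) (by rw [hggH q, h0, mul_zero])
          by_cases hsign : 0 < ⟪α, q⟫ * ⟪α, p⟫
          · have hqSC : q ∈ SC 𝒞 p := by
              intro K hK
              by_cases hKH : K = H
              · subst hKH
                rw [hggH q, hggH p]
                nlinarith [mul_self_pos.mpr hl0]
              · exact hKsign K hK hKH
            refine ⟨hqX, mem_iUnion₂.mpr ⟨c, hcO, subset_closure ?_⟩⟩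
            rw [hceq, ← hSCp]
            exact hqSC
          · have hsign' : ⟪α, q⟫ * ⟪α, p⟫ < 0 :=
              lt_of_le_of_ne (le_of_not_gt hsign) (mul_ne_zero hαq hαp)
            have hspball : s p ∈ Metric.ball z r' := by
              rw [Metric.mem_ball]
              have : dist (s p) z = dist p z := by
                conv_lhs => rw [← hsz]
                exact s.dist_map p z
              rw [this, dist_comm]
              exact hpdist
            have hspV := hball hspball
            have hαsp : ⟪α, s p⟫ = -⟪α, p⟫ := by
              rw [hsdef, sref_apply_unit hα1, inner_sub_right, real_inner_smul_right]
              have : ⟪α, α⟫ = 1 := by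
                rw [real_inner_self_eq_norm_sq, hα1]; norm_num
              rw [this]
              ring
            have hqSCsp : q ∈ SC 𝒞 (s p) := by
              intro K hK
              by_cases hKH : K = H
              · subst hKH
                rw [hggH q, hggH (s p), hαsp]
                nlinarith [mul_self_pos.mpr hl0]
              · have hKs := hKmem K hK hKH
                have h1 : 0 < gg K q * gg K z := mem_iInter₂.mp hqV.2 K hKs
                have h2 : 0 < gg K (s p) * gg K z := mem_iInter₂.mp hspV.2 K hKs
                exact sgn_trans (mul_comm (gg K (s p)) (gg K z) ▸ h2) h1
            have hscO : (⇑s) '' c ∈ O := hOmul c hcO s hsW hsb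
            have himg : (⇑s) '' c = SC 𝒞 (s p) := by
              rw [hceq, ← hSCp]
              exact SC_image h𝒞 s (hCstab s hsW) (fun K hK => hCstab s⁻¹ (inv_mem hsW) K hK) p
            refine ⟨hqX, mem_iUnion₂.mpr ⟨(⇑s) '' c, hscO, subset_closure ?_⟩⟩
            rw [himg]
            exact hqSCsp
      · -- z is generic
        have hzc' : z ∈ SC 𝒞 xc := mem_SC_of_closure h𝒞 hxc hzU (hceq ▸ hzc)
        refine ⟨r', hr'pos, ?_⟩
        rintro q ⟨hqball, hqX⟩
        have hqV := hball hqball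
        have hqSC : q ∈ SC 𝒞 z := by
          intro K hK
          have hKs : K ∈ Ks := ⟨hK, not_mem_sUnion_iff.mp hzU K hK⟩
          exact mem_iInter₂.mp hqV.2 K hKs
        refine ⟨hqX, mem_iUnion₂.mpr ⟨c, hcO, subset_closure ?_⟩⟩
        rw [hceq, ← SC_eq_of_mem hzc']
        exact hqSC
    -- conclude by preconnectedness of X
    choose! r hrpos hrsub using hYopen
    set U : Set E := ⋃ z ∈ Y, Metric.ball z (r z) with hUdef
    have hUopen : IsOpen U := isOpen_biUnion fun z _ => Metric.isOpen_ball
    have hXpre : IsPreconnected X := X_preconnected h𝒞 hbopen hbconv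
    have hx₂CL : x₂ ∈ CL := by
      by_contra hx₂CL
      have hcover : X ⊆ U ∪ CLᶜ := by
        intro p hp
        by_cases hpCL : p ∈ CL
        · left
          exact mem_biUnion ⟨hp, hpCL⟩ (Metric.mem_ball_self (hrpos p ⟨hp, hpCL⟩))
        · right
          exact hpCL
      have hXU : (X ∩ U).Nonempty :=
        ⟨x₁, hx₁X, mem_biUnion hx₁Y (Metric.mem_ball_self (hrpos x₁ hx₁Y))⟩
      have hXV : (X ∩ CLᶜ).Nonempty := ⟨x₂, hx₂X, hx₂CL⟩
      obtain ⟨q, hqX, hqU, hqV⟩ := hXpre U CLᶜ hUopen hCLclosed.isOpen_compl hcover hXU hXV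
      obtain ⟨z, hzY, hqball⟩ := mem_iUnion₂.mp hqU
      exact hqV ((hrsub z hzY ⟨hqball, hqX⟩).2)
    obtain ⟨c, hcO, hx₂c⟩ := mem_iUnion₂.mp hx₂CL
    obtain ⟨xc, hxc, hceq⟩ := hO_chamber c hcO
    have hx₂c' : x₂ ∈ c := by
      rw [hceq]
      exact mem_SC_of_closure h𝒞 hxc hx₂ (hceq ▸ hx₂c)
    have hceq₂ : c = SC 𝒞 x₂ := chambers_eq_of_mem h𝒞 (hOsub hcO) hc₂ hx₂c'
      (mem_SC_self h𝒞 hx₂)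
    obtain ⟨u, huW, hub, huc⟩ := hcO
    exact ⟨u, huW, hub, huc.trans hceq₂⟩
end

section
/- Let W be a finite Coxeter group with Coxeter arrangement A, B a W-stable arrangement disjoint from A, and C = A ∪ B. The map φ_B : Ch(C) → Ch(B) induces a bijection between the set of W-orbits of Ch(C) and the set of W-orbits of Ch(B). -/
open Set

variable {E : Type*} [NormedAddCommGroup E] [InnerProductSpace ℝ E] [FiniteDimensional ℝ E]

set_option maxHeartbeats 1000000

section Aux

set_option linter.unusedSectionVars false

variable {W : Subgroup (E ≃ₗᵢ[ℝ] E)} {𝒜 ℬ : Set (Set E)}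

/-- Sign constancy of a nonvanishing affine functional on a preconnected set. -/
lemma aux_sign_const {f : E →ₗ[ℝ] ℝ} {r : ℝ} {S : Set E} (hS : IsPreconnected S)
    (hd : ∀ z ∈ S, f z ≠ r) {p q : E} (hp : p ∈ S) (hq : q ∈ S) :
    0 < (f p - r) * (f q - r) := by
  have hfc : ContinuousOn f S := (f.continuous_of_finiteDimensional).continuousOn
  rcases lt_trichotomy (f p) r with h1 | h1 | h1
  · rcases lt_trichotomy (f q) r with h2 | h2 | h2
    · nlinarith
    · exact absurd h2 (hd q hq)
    · obtain ⟨z, hz, hz'⟩ := hS.intermediate_value hp hq hfc ⟨h1.le, h2.le⟩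
      exact absurd hz' (hd z hz)
  · exact absurd h1 (hd p hp)
  · rcases lt_trichotomy (f q) r with h2 | h2 | h2
    · obtain ⟨z, hz, hz'⟩ := hS.intermediate_value hq hp hfc ⟨h2.le, h1.le⟩
      exact absurd hz' (hd z hz)
    · exact absurd h2 (hd q hq)
    · nlinarith

lemma aux_hyperplane_closed {H : Set E} (h : IsAffineHyperplane H) : IsClosed H := by
  obtain ⟨f, r, _, rfl⟩ := h
  exact isClosed_eq f.continuous_of_finiteDimensional continuous_const

lemma aux_arrangement_isOpen (h : IsArrangement 𝒜) : IsOpen (⋃₀ 𝒜)ᶜ := by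
  rw [isOpen_compl_iff, sUnion_eq_biUnion]
  exact h.1.isClosed_biUnion fun H hH => aux_hyperplane_closed (h.2 H hH)

lemma aux_chamber_open (h : IsArrangement 𝒜) {c : Set E} (hc : c ∈ chambers 𝒜) :
    IsOpen c := by
  obtain ⟨x, _, rfl⟩ := hc
  exact (aux_arrangement_isOpen h).connectedComponentIn

lemma aux_chamber_nonempty {c : Set E} (hc : c ∈ chambers 𝒜) : c.Nonempty := by
  obtain ⟨x, hx, rfl⟩ := hc
  exact ⟨x, mem_connectedComponentIn hx⟩

lemma aux_chamber_subset {c : Set E} (hc : c ∈ chambers 𝒜) : c ⊆ (⋃₀ 𝒜)ᶜ := by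
  obtain ⟨x, hx, rfl⟩ := hc
  exact connectedComponentIn_subset _ _

lemma aux_chamber_preconnected {c : Set E} (hc : c ∈ chambers 𝒜) : IsPreconnected c := by
  obtain ⟨x, hx, rfl⟩ := hc
  exact isPreconnected_connectedComponentIn

lemma aux_chamber_eq_of_mem {c : Set E} (hc : c ∈ chambers 𝒜) {z : E} (hz : z ∈ c) :
    z ∈ (⋃₀ 𝒜)ᶜ ∧ c = connectedComponentIn (⋃₀ 𝒜)ᶜ z := by
  obtain ⟨x, hx, rfl⟩ := hc
  exact ⟨connectedComponentIn_subset _ _ hz, connectedComponentIn_eq hz⟩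

lemma aux_chambers_eq_of_inter {c c' : Set E} (hc : c ∈ chambers 𝒜) (hc' : c' ∈ chambers 𝒜)
    (h : (c ∩ c').Nonempty) : c = c' := by
  obtain ⟨z, hz, hz'⟩ := h
  rw [(aux_chamber_eq_of_mem hc hz).2, (aux_chamber_eq_of_mem hc' hz').2]

lemma aux_chamber_subset_chamber (hsub : ℬ ⊆ 𝒜) {c b : Set E}
    (hc : c ∈ chambers 𝒜) (hb : b ∈ chambers ℬ) {z : E} (hzc : z ∈ c) (hzb : z ∈ b) :
    c ⊆ b := by
  rw [(aux_chamber_eq_of_mem hc hzc).2, (aux_chamber_eq_of_mem hb hzb).2]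
  exact connectedComponentIn_mono _ (compl_subset_compl.2 (sUnion_subset_sUnion hsub))

/-- The side of the hyperplane `{f = r}` containing `x`. -/
def sideOf (f : E →ₗ[ℝ] ℝ) (r : ℝ) (x : E) : Set E := {v | 0 < (f v - r) * (f x - r)}

lemma sideOf_open (f : E →ₗ[ℝ] ℝ) (r : ℝ) (x : E) : IsOpen (sideOf f r x) :=
  isOpen_lt continuous_const (((f.continuous_of_finiteDimensional).sub continuous_const).mul
    continuous_const)

lemma sideOf_convex (f : E →ₗ[ℝ] ℝ) (r : ℝ) (x : E) : Convex ℝ (sideOf f r x) := by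
  rcases lt_trichotomy (f x - r) 0 with h | h | h
  · have : sideOf f r x = {v | f v < r} := by
      ext v
      simp only [sideOf, mem_setOf_eq]
      constructor
      · intro hv; nlinarith
      · intro hv; nlinarith
    rw [this]
    exact convex_halfSpace_lt f.isLinear r
  · have : sideOf f r x = ∅ := by
      ext v; simp [sideOf, h]
    rw [this]; exact convex_empty
  · have : sideOf f r x = {v | r < f v} := by
      ext v
      simp only [sideOf, mem_setOf_eq]
      constructor
      · intro hv; nlinarith
      · intro hv; nlinarith
    rw [this]
    exact convex_halfSpace_gt f.isLinear r

/-- A chamber is the intersection of the open sides (through a base point) of all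
hyperplanes of the arrangement. -/
lemma aux_chamber_eq_biInter {F : Set E → E →ₗ[ℝ] ℝ} {R : Set E → ℝ}
    (hFR : ∀ H ∈ 𝒜, H = {v | F H v = R H}) {x : E} (hx : x ∈ (⋃₀ 𝒜)ᶜ) :
    connectedComponentIn (⋃₀ 𝒜)ᶜ x = ⋂ H ∈ 𝒜, sideOf (F H) (R H) x := by
  have hxH : ∀ H ∈ 𝒜, F H x ≠ R H := by
    intro H hH hEq
    exact hx ⟨H, hH, by rw [hFR H hH]; exact hEq⟩
  apply subset_antisymm
  · intro v hv
    simp only [mem_iInter]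
    intro H hH
    have hpre : IsPreconnected (connectedComponentIn (⋃₀ 𝒜)ᶜ x) :=
      isPreconnected_connectedComponentIn
    have hne : ∀ z ∈ connectedComponentIn (⋃₀ 𝒜)ᶜ x, F H z ≠ R H := by
      intro z hz hEq
      exact (connectedComponentIn_subset _ _ hz) ⟨H, hH, by rw [hFR H hH]; exact hEq⟩
    exact aux_sign_const hpre hne hv (mem_connectedComponentIn hx)
  · have hconv : Convex ℝ (⋂ H ∈ 𝒜, sideOf (F H) (R H) x) :=
      convex_iInter₂ fun H _ => sideOf_convex (F H) (R H) x
    have hsubc : (⋂ H ∈ 𝒜, sideOf (F H) (R H) x) ⊆ (⋃₀ 𝒜)ᶜ := by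
      intro v hv hmem
      obtain ⟨H, hH, hvH⟩ := hmem
      have := mem_iInter₂.1 hv H hH
      have hv0 : F H v = R H := by rw [hFR H hH] at hvH; exact hvH
      simp only [sideOf, mem_setOf_eq, hv0, sub_self, zero_mul] at this
      exact lt_irrefl 0 this
    have hxi : x ∈ ⋂ H ∈ 𝒜, sideOf (F H) (R H) x := by
      simp only [mem_iInter]
      intro H hH
      have := hxH H hH
      simp only [sideOf, mem_setOf_eq]
      have h2 : F H x - R H ≠ 0 := sub_ne_zero.2 this
      exact mul_self_pos.2 h2
    exact hconv.isPreconnected.subset_connectedComponentIn hxi hsubc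

lemma aux_chamber_convex (h : IsArrangement 𝒜) {c : Set E} (hc : c ∈ chambers 𝒜) :
    Convex ℝ c := by
  classical
  have haff : ∀ H, H ∈ 𝒜 → ∃ (f : E →ₗ[ℝ] ℝ) (r : ℝ), f ≠ 0 ∧ H = {x | f x = r} :=
    fun H hH => h.2 H hH
  choose! g r _ hHg using haff
  obtain ⟨x, hx, rfl⟩ := hc
  rw [aux_chamber_eq_biInter hHg hx]
  exact convex_iInter₂ fun H _ => sideOf_convex (g H) (r H) x

/-- Images of connected components under a linear isometry equivalence. -/
lemma aux_image_ccIn (w : E ≃ₗᵢ[ℝ] E) {S : Set E} {x : E} (hx : x ∈ S) :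
    ⇑w '' connectedComponentIn S x = connectedComponentIn (⇑w '' S) (w x) := by
  have := w.toHomeomorph.image_connectedComponentIn (s := S) hx
  simpa using this

lemma WStable.sUnion_image (hBW : WStable W ℬ) {w : E ≃ₗᵢ[ℝ] E} (hw : w ∈ W) :
    ⇑w '' ⋃₀ ℬ = ⋃₀ ℬ := by
  apply subset_antisymm
  · rw [image_sUnion]
    apply sUnion_subset
    rintro _ ⟨H, hH, rfl⟩
    exact subset_sUnion_of_mem (hBW w hw H hH)
  · rintro v ⟨H, hH, hvH⟩
    have h1 : ⇑w⁻¹ '' H ∈ ℬ := hBW w⁻¹ (inv_mem hw) H hH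
    refine ⟨w⁻¹ v, ⟨⇑w⁻¹ '' H, h1, mem_image_of_mem _ hvH⟩, ?_⟩
    simp [LinearIsometryEquiv.coe_inv]

lemma WStable.chambers_image (hBW : WStable W ℬ) {w : E ≃ₗᵢ[ℝ] E} (hw : w ∈ W)
    {c : Set E} (hc : c ∈ chambers ℬ) : ⇑w '' c ∈ chambers ℬ := by
  obtain ⟨x, hx, rfl⟩ := hc
  have hcompl : ⇑w '' (⋃₀ ℬ)ᶜ = (⋃₀ ℬ)ᶜ := by
    rw [image_compl_eq w.bijective, hBW.sUnion_image hw]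
  refine ⟨w x, ?_, ?_⟩
  · rw [← hcompl]; exact mem_image_of_mem _ hx
  · rw [aux_image_ccIn w hx, hcompl]

lemma aux_coxeter_arrangement (hWfin : (W : Set (E ≃ₗᵢ[ℝ] E)).Finite) :
    IsArrangement (coxeterArrangement W) := by
  constructor
  · apply Set.Finite.subset (hWfin.image (fun w => {x | w x = x}))
    rintro H ⟨w, hw, _, rfl⟩
    exact ⟨w, hw, rfl⟩
  · rintro H ⟨w, hw, ⟨f, hf, hEq⟩, rfl⟩
    exact ⟨f, 0, hf, hEq⟩

lemma aux_coxeter_stable : WStable W (coxeterArrangement W) := by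
  rintro w hw H ⟨u, hu, ⟨f, hf, hffix⟩, rfl⟩
  have hset : ⇑w '' {x | u x = x} = {x | (w * u * w⁻¹) x = x} := by
    ext v
    simp only [mem_image, mem_setOf_eq, LinearIsometryEquiv.coe_mul, Function.comp_apply]
    constructor
    · rintro ⟨z, hz, rfl⟩
      simp [LinearIsometryEquiv.coe_inv, hz]
    · intro hv
      refine ⟨w⁻¹ v, ?_, by simp [LinearIsometryEquiv.coe_inv]⟩
      have := congrArg (⇑w⁻¹) hv
      simpa [LinearIsometryEquiv.coe_inv] using this
  refine ⟨w * u * w⁻¹, mul_mem (mul_mem hw hu) (inv_mem hw), ?_, hset⟩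
  rw [IsReflection, ← hset, hffix]
  refine ⟨f.comp (w.symm.toLinearEquiv : E ≃ₗ[ℝ] E).toLinearMap, ?_, ?_⟩
  · intro hzero
    obtain ⟨v, hv⟩ : ∃ v, f v ≠ 0 := by
      by_contra hall
      push_neg at hall
      exact hf (LinearMap.ext fun v => hall v)
    have := congrFun (congrArg (⇑) hzero) (w v)
    simp at this
    exact hv this
  · ext v
    simp only [mem_image, mem_setOf_eq, LinearMap.coe_comp, Function.comp_apply,
      LinearEquiv.coe_coe, LinearIsometryEquiv.coe_toLinearEquiv]
    constructor
    · rintro ⟨z, hz, rfl⟩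
      simpa using hz
    · intro hv
      exact ⟨w.symm v, hv, by simp⟩

/-- Every reflecting hyperplane of `W` carries a reflection in `W` flipping the sides. -/
lemma aux_reflection_exists {H : Set E} (hH : H ∈ coxeterArrangement W) :
    ∃ u f, u ∈ W ∧ (f : E →ₗ[ℝ] ℝ) ≠ 0 ∧ H = {x | f x = 0} ∧
      (∀ x ∈ H, u x = x) ∧ (∀ y, f (u y) = - f y) := by
  obtain ⟨u, hu, ⟨f, hf, hfix⟩, rfl⟩ := hH
  refine ⟨u, f, hu, hf, hfix, fun x hx => hx, ?_⟩
  have hKset : {x | u x = x} = ((LinearMap.ker f : Submodule ℝ E) : Set E) := by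
    rw [hfix]; rfl
  have hrange : LinearMap.range f = ⊤ := by
    rcases f.surjective_or_eq_zero with h | h
    · exact LinearMap.range_eq_top.2 h
    · exact absurd h hf
  have hdimo : Module.finrank ℝ ((LinearMap.ker f)ᗮ) = 1 := by
    have h1 := LinearMap.finrank_range_add_finrank_ker f
    rw [hrange] at h1
    simp only [finrank_top] at h1
    have h2 := Submodule.finrank_add_finrank_orthogonal (K := LinearMap.ker f)
    have h3 : Module.finrank ℝ ℝ = 1 := Module.finrank_self ℝ
    omega
  obtain ⟨n, hn, hn0⟩ : ∃ n ∈ (LinearMap.ker f)ᗮ, n ≠ 0 := by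
    rw [← Submodule.ne_bot_iff]
    intro hbot
    rw [hbot] at hdimo
    simp at hdimo
  have hspan : (Submodule.span ℝ {n}) = (LinearMap.ker f)ᗮ := by
    apply Submodule.eq_of_le_of_finrank_le ((Submodule.span_singleton_le_iff_mem _ _).2 hn)
    rw [hdimo, finrank_span_singleton hn0]
  have hufix : ∀ k ∈ LinearMap.ker f, u k = k := by
    intro k hk
    have : k ∈ {x | u x = x} := by rw [hKset]; exact hk
    exact this
  have hun : u n ∈ (LinearMap.ker f)ᗮ := by
    intro k hk
    have h1 : inner ℝ k (u n) = (inner ℝ (u k) (u n) : ℝ) := by rw [hufix k hk]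
    rw [h1, LinearIsometryEquiv.inner_map_map]
    exact hn k hk
  obtain ⟨a, ha⟩ : ∃ a : ℝ, a • n = u n := by
    rw [← hspan] at hun
    exact Submodule.mem_span_singleton.1 hun
  have hnn : ‖n‖ ≠ 0 := norm_ne_zero_iff.2 hn0
  have habs : |a| = 1 := by
    have hnorm : ‖a • n‖ = ‖n‖ := by rw [ha, u.norm_map]
    rw [norm_smul, Real.norm_eq_abs] at hnorm
    have h3 : |a| * ‖n‖ = 1 * ‖n‖ := by rw [hnorm, one_mul]
    exact mul_right_cancel₀ hnn h3
  have haval : a = 1 ∨ a = -1 := (abs_eq (by norm_num)).1 habs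
  have hunn : u n = -n := by
    rcases haval with h | h
    · exfalso
      rw [h, one_smul] at ha
      have hnK : n ∈ LinearMap.ker f := by
        have : n ∈ {x | u x = x} := ha.symm
        rw [hKset] at this; exact this
      have hdisj := Submodule.orthogonal_disjoint (LinearMap.ker f)
      have h0 : n ∈ LinearMap.ker f ⊓ (LinearMap.ker f)ᗮ := ⟨hnK, hn⟩
      rw [hdisj.eq_bot] at h0
      exact hn0 h0
    · rw [← ha, h, neg_one_smul]
  intro y
  obtain ⟨k, hk, m, hm, rfl⟩ := (LinearMap.ker f).exists_add_mem_mem_orthogonal y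
  obtain ⟨c, hc⟩ : ∃ c : ℝ, c • n = m := by
    rw [← hspan] at hm
    exact Submodule.mem_span_singleton.1 hm
  have hfk : f k = 0 := hk
  have hsimp : u (k + c • n) = k + c • (-n) := by
    rw [map_add, map_smul, hunn, hufix k hk]
  rw [← hc, hsimp]
  simp [hfk]

/-- Inside any nonempty open set one can avoid finitely many affine hyperplanes. -/
lemma aux_exists_avoid {𝒮 : Set (Set E)} (hfin : 𝒮.Finite) :
    (∀ S ∈ 𝒮, ∃ (f : E →ₗ[ℝ] ℝ) (r : ℝ), f ≠ 0 ∧ S ⊆ {x | f x = r}) →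
    ∀ {U : Set E}, IsOpen U → U.Nonempty →
    ∃ x ∈ U, ∀ S ∈ 𝒮, x ∉ S := by
  classical
  refine Set.Finite.induction_on 𝒮 hfin ?_ @?_
  · intro _ _ _ hne
    obtain ⟨x, hx⟩ := hne
    exact ⟨x, hx, fun S hS => absurd hS (notMem_empty S)⟩
  · intro S 𝒮 hSne h𝒮fin IH hthin U hU hne
    obtain ⟨f, r, hf, hsub⟩ := hthin S (mem_insert _ _)
    have hthin' : ∀ T ∈ 𝒮, ∃ (f : E →ₗ[ℝ] ℝ) (r : ℝ), f ≠ 0 ∧ T ⊆ {x | f x = r} :=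
      fun T hT => hthin T (mem_insert_of_mem _ hT)
    have hU' : IsOpen (U \ {x | f x = r}) :=
      hU.sdiff (isClosed_eq f.continuous_of_finiteDimensional continuous_const)
    have hne' : (U \ {x | f x = r}).Nonempty := by
      by_contra hempty
      push_neg at hempty
      rw [diff_eq_empty] at hempty
      obtain ⟨x0, hx0⟩ := hne
      obtain ⟨v, hv⟩ : ∃ v, f v ≠ 0 := by
        by_contra hall
        push_neg at hall
        exact hf (LinearMap.ext fun v => hall v)
      obtain ⟨ε, hε, hball⟩ := Metric.isOpen_iff.1 hU x0 hx0
      set t : ℝ := ε / (2 * (‖v‖ + 1)) with ht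
      have hvn : (0:ℝ) < ‖v‖ + 1 := by positivity
      have htpos : 0 < t := by positivity
      have hmem : x0 + t • v ∈ U := by
        apply hball
        rw [Metric.mem_ball, dist_eq_norm]
        have hsimp : x0 + t • v - x0 = t • v := by abel
        rw [hsimp, norm_smul, Real.norm_eq_abs, abs_of_pos htpos]
        calc t * ‖v‖ ≤ t * (‖v‖ + 1) := by nlinarith
          _ = ε / 2 := by rw [ht]; field_simp
          _ < ε := by linarith
      have h1 : f x0 = r := hempty hx0
      have h2 : f (x0 + t • v) = r := hempty hmem
      rw [map_add, h1, map_smul] at h2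
      simp only [smul_eq_mul] at h2
      have h3 : t * f v = 0 := by linarith
      rcases mul_eq_zero.1 h3 with h | h
      · exact absurd h (ne_of_gt htpos)
      · exact hv h
    obtain ⟨x, hx, hxS⟩ := IH hthin' hU' hne'
    refine ⟨x, hx.1, ?_⟩
    intro T hT
    rcases mem_insert_iff.1 hT with rfl | hT'
    · intro hxT
      exact hx.2 (hsub hxT)
    · exact hxS T hT'


private lemma aux_arith_same {a p q : ℝ} (h1 : 0 < a * p) (h2 : 0 < p * q) : 0 < a * q := by
  have hp : p ≠ 0 := by
    intro h
    rw [h, mul_zero] at h1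
    exact lt_irrefl 0 h1
  nlinarith [mul_pos h1 h2, mul_self_pos.2 hp]

private lemma aux_arith_two {S α β : ℝ} (hS : S ≠ 0) (hα : α < 0) (hβ : β < 0) :
    0 < S * α * (S * β) := by
  nlinarith [mul_self_pos.2 hS, mul_pos_of_neg_of_neg hα hβ]

private lemma aux_arith_mixed {S α β : ℝ} (hS : S ≠ 0) (hα : 0 < α) (hβ : β < 0) :
    S * α * (S * β) < 0 := by
  nlinarith [mul_self_pos.2 hS, mul_pos hα (neg_pos.2 hβ)]

/-- Two chambers of the full arrangement contained in the same chamber of `ℬ` are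
conjugate under `W`. -/
lemma aux_key (W : Subgroup (E ≃ₗᵢ[ℝ] E)) (hWfin : (W : Set (E ≃ₗᵢ[ℝ] E)).Finite)
    (ℬ : Set (Set E)) (hB : IsArrangement ℬ) (hBW : WStable W ℬ)
    {b c c' : Set E} (hb : b ∈ chambers ℬ)
    (hc : c ∈ chambers (coxeterArrangement W ∪ ℬ))
    (hc' : c' ∈ chambers (coxeterArrangement W ∪ ℬ))
    (hcb : c ⊆ b) (hc'b : c' ⊆ b) : ∃ w ∈ W, c' = ⇑w '' c := by
  classical
  set A := coxeterArrangement W with hAdef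
  set 𝒞 := A ∪ ℬ with h𝒞def
  have hAarr : IsArrangement A := aux_coxeter_arrangement hWfin
  have h𝒞arr : IsArrangement 𝒞 :=
    ⟨hAarr.1.union hB.1, by rintro H (h | h); exacts [hAarr.2 H h, hB.2 H h]⟩
  have h𝒞W : WStable W 𝒞 := by
    rintro w hw H (h | h)
    · exact Or.inl (aux_coxeter_stable w hw H h)
    · exact Or.inr (hBW w hw H h)
  choose! u f hu hf hHf hufix huf using
    fun H (hH : H ∈ A) => aux_reflection_exists (W := W) hH
  choose! g r hg hHg using fun H (hH : H ∈ ℬ) => hB.2 H hH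
  set F : Set E → E →ₗ[ℝ] ℝ := fun H => if H ∈ A then f H else g H with hFdef
  set R : Set E → ℝ := fun H => if H ∈ A then 0 else r H with hRdef
  have hFA : ∀ H ∈ A, F H = f H ∧ R H = 0 := by
    intro H hH
    constructor <;> simp [hFdef, hRdef, if_pos hH]
  have hFR : ∀ H ∈ 𝒞, H = {v | F H v = R H} := by
    intro H hH
    by_cases hHA : H ∈ A
    · rw [(hFA H hHA).1, (hFA H hHA).2]
      exact hHf H hHA
    · rcases hH with h | h
      · exact absurd h hHA
      · have h1 : F H = g H := by simp [hFdef, if_neg hHA]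
        have h2 : R H = r H := by simp [hRdef, if_neg hHA]
        rw [h1, h2]
        exact hHg H h
  -- basic chamber facts
  have hfne : ∀ {d : Set E}, d ∈ chambers 𝒞 → ∀ {z : E}, z ∈ d → ∀ H ∈ A, f H z ≠ 0 := by
    intro d hd z hz H hH h0
    exact (aux_chamber_subset hd hz) ⟨H, Or.inl hH, by rw [hHf H hH]; exact h0⟩
  have hsgn : ∀ {d : Set E}, d ∈ chambers 𝒞 → ∀ H ∈ A, ∀ {p q : E}, p ∈ d → q ∈ d →
      0 < f H p * f H q := by
    intro d hd H hH p q hp hq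
    have h1 := aux_sign_const (f := f H) (r := 0) (aux_chamber_preconnected hd)
      (fun z hz h0 => hfne hd hz H hH (by simpa using h0)) hp hq
    simpa using h1
  have hsgnB : ∀ H ∈ 𝒞, H ∈ ℬ → ∀ {p q : E}, p ∈ b → q ∈ b →
      0 < (F H p - R H) * (F H q - R H) := by
    intro H hH hHB p q hp hq
    refine aux_sign_const (aux_chamber_preconnected hb) ?_ hp hq
    intro z hz h0
    exact (aux_chamber_subset hb hz) ⟨H, hHB, by rw [hFR H hH]; exact h0⟩
  -- the separating set
  set sep : Set E → Set E → Set (Set E) := fun d d' =>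
    {H | H ∈ A ∧ ∀ p ∈ d, ∀ q ∈ d', f H p * f H q < 0} with hsepdef
  have hsep_mem : ∀ d d' H, H ∈ sep d d' ↔
      (H ∈ A ∧ ∀ p ∈ d, ∀ q ∈ d', f H p * f H q < 0) := fun d d' H => Iff.rfl
  have hsepA : ∀ d d', sep d d' ⊆ A := fun d d' H hH => ((hsep_mem d d' H).1 hH).1
  have hsepfin : ∀ d d', (sep d d').Finite := fun d d' => hAarr.1.subset (hsepA d d')
  have hsep_iff : ∀ {d d' : Set E}, d ∈ chambers 𝒞 → d' ∈ chambers 𝒞 →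
      ∀ {p q : E}, p ∈ d → q ∈ d' → ∀ H ∈ A,
      (H ∈ sep d d' ↔ f H p * f H q < 0) := by
    intro d d' hd hd' p q hp hq H hH
    rw [hsep_mem]
    constructor
    · intro hmem; exact hmem.2 p hp q hq
    · intro hpq
      refine ⟨hH, fun p' hp' q' hq' => ?_⟩
      have h1 := hsgn hd H hH hp' hp
      have h2 := hsgn hd' H hH hq' hq
      nlinarith
  clear_value sep F R
  -- main induction on the number of separating hyperplanes
  suffices hmain : ∀ n : ℕ, ∀ d d' : Set E, d ∈ chambers 𝒞 → d' ∈ chambers 𝒞 →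
      d ⊆ b → d' ⊆ b → (sep d d').ncard = n → ∃ w ∈ W, d' = ⇑w '' d by
    exact hmain _ c c' hc hc' hcb hc'b rfl
  intro n
  induction n using Nat.strong_induction_on with
  | _ n IH =>
  intro d d' hd hd' hdb hd'b hcard
  obtain ⟨x, hxd⟩ := aux_chamber_nonempty hd
  have hx𝒞 : x ∈ (⋃₀ 𝒞)ᶜ := (aux_chamber_eq_of_mem hd hxd).1
  rcases Nat.eq_zero_or_pos n with rfl | hn
  -- base case : no separating hyperplane
  · have hsempty : sep d d' = ∅ := (Set.ncard_eq_zero (hsepfin d d')).1 hcard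
    obtain ⟨y, hyd'⟩ := aux_chamber_nonempty hd'
    have hy𝒞 : y ∈ (⋃₀ 𝒞)ᶜ := (aux_chamber_eq_of_mem hd' hyd').1
    have hside : ∀ H ∈ 𝒞, sideOf (F H) (R H) x = sideOf (F H) (R H) y := by
      intro H hH
      have hprod : 0 < (F H x - R H) * (F H y - R H) := by
        by_cases hHA : H ∈ A
        · have h1 : ¬ (f H x * f H y < 0) := by
            intro hlt
            have h2 : H ∈ sep d d' := (hsep_iff hd hd' hxd hyd' H hHA).2 hlt
            rw [hsempty] at h2
            exact h2
          have h2 : f H x ≠ 0 := hfne hd hxd H hHA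
          have h3 : f H y ≠ 0 := hfne hd' hyd' H hHA
          rw [(hFA H hHA).1, (hFA H hHA).2]
          simp only [sub_zero]
          rcases lt_trichotomy (f H x * f H y) 0 with h | h | h
          · exact absurd h h1
          · exfalso; rcases mul_eq_zero.1 h with h | h
            exacts [h2 h, h3 h]
          · exact h
        · have hHB : H ∈ ℬ := by
            rcases hH with h | h
            exacts [absurd h hHA, h]
          exact hsgnB H hH hHB (hdb hxd) (hd'b hyd')
      ext v
      simp only [sideOf, mem_setOf_eq]
      constructor
      · intro hv
        nlinarith [mul_pos hv hprod, sq_nonneg (F H x - R H), sq_nonneg (F H y - R H)]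
      · intro hv
        nlinarith [mul_pos hv hprod, sq_nonneg (F H x - R H), sq_nonneg (F H y - R H)]
    have hdd' : d = d' := by
      rw [(aux_chamber_eq_of_mem hd hxd).2, (aux_chamber_eq_of_mem hd' hyd').2,
        aux_chamber_eq_biInter hFR hx𝒞, aux_chamber_eq_biInter hFR hy𝒞]
      exact iInter₂_congr hside
    refine ⟨1, one_mem W, ?_⟩
    rw [LinearIsometryEquiv.coe_one, image_id]
    exact hdd'.symm
  -- inductive step
  · have hsne : (sep d d').Nonempty := by
      apply Set.nonempty_of_ncard_ne_zero
      omega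
    -- choose a generic point y in d'
    set 𝒩 : Set (Set E) := (fun p : Set E × Set E =>
        {v | (f p.1 x • f p.2 - f p.2 x • f p.1) v = 0}) ''
        ((A ×ˢ A) ∩ {p | p.1 ≠ p.2}) with h𝒩def
    have h𝒩fin : 𝒩.Finite := ((hAarr.1.prod hAarr.1).inter_of_left _).image _
    have h𝒩thin : ∀ N ∈ 𝒩, ∃ (h : E →ₗ[ℝ] ℝ) (ρ : ℝ), h ≠ 0 ∧ N ⊆ {v | h v = ρ} := by
      rintro N ⟨⟨H, H'⟩, ⟨⟨hHA, hH'A⟩, hne'⟩, rfl⟩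
      refine ⟨f H x • f H' - f H' x • f H, 0, ?_, fun v hv => hv⟩
      intro h0
      have hfx : f H x ≠ 0 := hfne hd hxd H hHA
      have heq : ∀ v, f H x * f H' v = f H' x * f H v := by
        intro v
        have h1 := LinearMap.ext_iff.1 h0 v
        simp only [LinearMap.sub_apply, LinearMap.smul_apply, smul_eq_mul,
          LinearMap.zero_apply, sub_eq_zero] at h1
        exact h1
      have hf'x : f H' x ≠ 0 := by
        intro h'
        apply hf H' hH'A
        apply LinearMap.ext
        intro v
        have h1 := heq v
        rw [h'] at h1
        simp only [zero_mul] at h1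
        have h2 : f H' v = 0 := by
          rcases mul_eq_zero.1 h1 with h | h
          · exact absurd h hfx
          · exact h
        simpa using h2
      have hker : {v : E | f H v = 0} = {v : E | f H' v = 0} := by
        ext v
        simp only [mem_setOf_eq]
        constructor
        · intro hv
          have h1 := heq v
          rw [hv, mul_zero] at h1
          rcases mul_eq_zero.1 h1 with h | h
          · exact absurd h hfx
          · exact h
        · intro hv
          have h1 := heq v
          rw [hv, mul_zero] at h1
          rcases mul_eq_zero.1 h1.symm with h | h
          · exact absurd h hf'x
          · exact h
      exact hne' (by rw [hHf H hHA, hHf H' hH'A, hker])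
    clear_value 𝒩
    obtain ⟨y, hyd', hy𝒩⟩ := aux_exists_avoid h𝒩fin h𝒩thin
      (aux_chamber_open h𝒞arr hd') (aux_chamber_nonempty hd')
    have hy𝒞 : y ∈ (⋃₀ 𝒞)ᶜ := (aux_chamber_eq_of_mem hd' hyd').1
    -- the segment from x to y
    set γ : ℝ → E := fun t => x + t • (y - x) with hγdef
    have hγf : ∀ (L : E →ₗ[ℝ] ℝ) (t : ℝ), L (γ t) = L x + t * (L y - L x) := by
      intro L t
      rw [hγdef]
      simp only [map_add, map_smul, map_sub, smul_eq_mul]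
    have hγ1 : γ 1 = y := by rw [hγdef]; simp
    have hγb : ∀ t : ℝ, 0 ≤ t → t ≤ 1 → γ t ∈ b := fun t h0 h1 =>
      (aux_chamber_convex hB hb).add_smul_sub_mem (hdb hxd) (hd'b hyd') ⟨h0, h1⟩
    clear_value γ
    -- crossing parameters
    set T : Set E → ℝ := fun H => f H x / (f H x - f H y) with hTdef
    have hTH : ∀ H, T H = f H x / (f H x - f H y) := fun H => rfl
    clear_value T
    have hcross : ∀ H ∈ sep d d', f H x * f H y < 0 := fun H hH =>
      ((hsep_mem _ _ H).1 hH).2 x hxd y hyd'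
    have hsubne : ∀ H ∈ sep d d', f H x - f H y ≠ 0 := by
      intro H hH h0
      rw [sub_eq_zero] at h0
      have h1 := hcross H hH
      rw [h0] at h1
      nlinarith [mul_self_nonneg (f H y)]
    have hTform : ∀ H ∈ sep d d', ∀ t : ℝ, f H (γ t) = (f H x - f H y) * (T H - t) := by
      intro H hH t
      have hne2 := hsubne H hH
      rw [hγf, hTH H]
      field_simp
      ring
    have hT01 : ∀ H ∈ sep d d', 0 < T H ∧ T H < 1 := by
      intro H hH
      have hxy := hcross H hH
      rw [hTdef]
      rcases mul_neg_iff.1 hxy with ⟨h1, h2⟩ | ⟨h1, h2⟩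
      · constructor
        · exact div_pos h1 (by linarith)
        · rw [div_lt_one (by linarith)]; linarith
      · constructor
        · exact div_pos_iff.2 (Or.inr ⟨h1, by linarith⟩)
        · rw [div_lt_iff_of_neg (by linarith)]; linarith
    have hposA : ∀ H ∈ A, H ∉ sep d d' → 0 < f H x * f H y := by
      intro H hHA hHn
      have h2 : f H x ≠ 0 := hfne hd hxd H hHA
      have h3 : f H y ≠ 0 := hfne hd' hyd' H hHA
      rcases lt_trichotomy (f H x * f H y) 0 with h | h | h
      · exact absurd ((hsep_iff hd hd' hxd hyd' H hHA).2 h) hHn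
      · exfalso; rcases mul_eq_zero.1 h with h | h
        exacts [h2 h, h3 h]
      · exact h
    have hnosep : ∀ H ∈ A, H ∉ sep d d' → ∀ t : ℝ, 0 ≤ t → t ≤ 1 →
        0 < f H (γ t) * f H x := by
      intro H hHA hHn t h0 h1
      have hprod := hposA H hHA hHn
      have h2 : 0 < f H x * f H x := mul_self_pos.2 (hfne hd hxd H hHA)
      rw [hγf]
      rcases le_or_gt (f H x * f H x) (f H x * f H y) with hcmp | hcmp
      · nlinarith [mul_nonneg h0 (sub_nonneg.2 hcmp)]
      · nlinarith [mul_nonneg (sub_nonneg.2 h1) (sub_nonneg.2 hcmp.le)]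
    -- crossing parameters are distinct
    have hdist : ∀ H ∈ sep d d', ∀ H' ∈ sep d d', H ≠ H' → T H ≠ T H' := by
      intro H hH H' hH' hne' hTeq
      have hHA := hsepA _ _ hH
      have hH'A := hsepA _ _ hH'
      have h1 : f H (γ (T H)) = 0 := by rw [hTform H hH]; ring
      have h2 : f H' (γ (T H)) = 0 := by rw [hTeq, hTform H' hH']; ring
      refine hy𝒩 {v | (f H x • f H' - f H' x • f H) v = 0}
        (by rw [h𝒩def]; exact ⟨(H, H'), ⟨⟨hHA, hH'A⟩, hne'⟩, rfl⟩) ?_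
      show (f H x • f H' - f H' x • f H) y = 0
      have h3 : (f H x • f H' - f H' x • f H) (γ (T H)) = 0 := by
        simp only [LinearMap.sub_apply, LinearMap.smul_apply, smul_eq_mul, h1, h2]
        ring
      have h4 : (f H x • f H' - f H' x • f H) x = 0 := by
        simp only [LinearMap.sub_apply, LinearMap.smul_apply, smul_eq_mul]
        ring
      have h5 := hγf (f H x • f H' - f H' x • f H) (T H)
      rw [h3, h4] at h5
      have hT0 := (hT01 H hH).1
      have h8 : T H * ((f H x • f H' - f H' x • f H) y) = 0 := by linarith
      rcases mul_eq_zero.1 h8 with h | h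
      · exact absurd h (ne_of_gt hT0)
      · exact h
    -- the first crossed hyperplane H0
    obtain ⟨H0, hH0, hmin⟩ := Set.exists_min_image (sep d d') T (hsepfin d d') hsne
    have hH0A : H0 ∈ A := hsepA _ _ hH0
    have ht00 : 0 < T H0 := (hT01 H0 hH0).1
    have ht01 : T H0 < 1 := (hT01 H0 hH0).2
    -- the next crossing time τ
    have hTsetfin : (insert (1:ℝ) (T '' (sep d d' \ {H0}))).Finite :=
      (((hsepfin d d').diff (t := {H0})).image T).insert 1
    obtain ⟨τ, hτT, hτmin⟩ := Set.exists_min_image _ id hTsetfin ⟨1, mem_insert _ _⟩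
    simp only [id] at hτmin
    have hτ1 : τ ≤ 1 := hτmin 1 (mem_insert _ _)
    have hτgt : T H0 < τ := by
      rcases mem_insert_iff.1 hτT with rfl | hmem
      · exact ht01
      · obtain ⟨H, hH, rfl⟩ := hmem
        have hHsep : H ∈ sep d d' := hH.1
        have h1 : T H0 ≤ T H := hmin H hHsep
        have h2 : T H ≠ T H0 := hdist H hHsep H0 hH0 (by simpa using hH.2)
        exact lt_of_le_of_ne h1 (Ne.symm h2)
    have hτle : ∀ H ∈ sep d d', H ≠ H0 → τ ≤ T H := by
      intro H hH hne4
      exact hτmin (T H) (mem_insert_of_mem _ ⟨H, ⟨hH, by simpa using hne4⟩, rfl⟩)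
    set ts := (T H0 + τ) / 2 with htsdef
    have htst0 : T H0 < ts := by rw [htsdef]; linarith
    have htsτ : ts < τ := by rw [htsdef]; linarith
    have hts1 : ts < 1 := by rw [htsdef]; linarith
    have hts0 : 0 < ts := by rw [htsdef]; linarith
    -- the new chamber lies on the segment just after T H0
    have hz𝒞 : γ ts ∈ (⋃₀ 𝒞)ᶜ := by
      rintro ⟨H, hH, hzH⟩
      by_cases hHA : H ∈ A
      · by_cases hHs : H ∈ sep d d'
        · have h1 : f H (γ ts) = (f H x - f H y) * (T H - ts) := hTform H hHs ts
          have h2 : f H (γ ts) = 0 := by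
            rw [hHf H hHA] at hzH; exact hzH
          have h3 : T H - ts ≠ 0 := by
            rcases eq_or_ne H H0 with rfl | hne6
            · intro h4; nlinarith
            · have := hτle H hHs hne6; intro h4; nlinarith
          rw [h1] at h2
          exact (mul_ne_zero (hsubne H hHs) h3) h2
        · have h1 := hnosep H hHA hHs ts hts0.le hts1.le
          have h2 : f H (γ ts) = 0 := by
            rw [hHf H hHA] at hzH; exact hzH
          rw [h2, zero_mul] at h1
          exact lt_irrefl 0 h1
      · have hHB : H ∈ ℬ := by
          rcases hH with h | h
          exacts [absurd h hHA, h]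
        exact (aux_chamber_subset hb (hγb ts hts0.le hts1.le)) ⟨H, hHB, hzH⟩
    have hc1 : connectedComponentIn (⋃₀ 𝒞)ᶜ (γ ts) ∈ chambers 𝒞 := ⟨γ ts, hz𝒞, rfl⟩
    have hzc1 : γ ts ∈ connectedComponentIn (⋃₀ 𝒞)ᶜ (γ ts) := mem_connectedComponentIn hz𝒞
    have hc1b : connectedComponentIn (⋃₀ 𝒞)ᶜ (γ ts) ⊆ b :=
      aux_chamber_subset_chamber subset_union_right hc1 hb hzc1 (hγb ts hts0.le hts1.le)
    -- the reflection in H0 maps d to the new chamber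
    have hu0W : u H0 ∈ W := hu H0 hH0A
    have hpH0 : γ (T H0) ∈ H0 := by
      have h9 : γ (T H0) ∈ {x : E | f H0 x = 0} := by
        show f H0 (γ (T H0)) = 0
        rw [hTform H0 hH0]; ring
      rwa [← hHf H0 hH0A] at h9
    have hup : u H0 (γ (T H0)) = γ (T H0) := hufix H0 hH0A _ hpH0
    have hpb : γ (T H0) ∈ b := hγb (T H0) ht00.le ht01.le
    have hVopen : IsOpen (⋂ H ∈ (𝒞 \ {H0}), sideOf (F H) (R H) (γ ts)) :=
      Set.Finite.isOpen_biInter (h𝒞arr.1.diff (t := {H0})) fun H _ => sideOf_open _ _ _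
    have hsgnz : ∀ H ∈ 𝒞, H ≠ H0 →
        0 < (F H (γ (T H0)) - R H) * (F H (γ ts) - R H) := by
      intro H hH hne6
      by_cases hHA : H ∈ A
      · rw [(hFA H hHA).1, (hFA H hHA).2]
        simp only [sub_zero]
        by_cases hHs : H ∈ sep d d'
        · rw [hTform H hHs (T H0), hTform H hHs ts]
          have hτH := hτle H hHs hne6
          have hA1 : 0 < T H - T H0 := by linarith
          have hA2 : 0 < T H - ts := by linarith
          nlinarith [mul_self_pos.2 (hsubne H hHs), mul_pos hA1 hA2]
        · have h1 := hnosep H hHA hHs (T H0) ht00.le ht01.le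
          have h2 := hnosep H hHA hHs ts hts0.le hts1.le
          have h3 : 0 < f H x * f H x := mul_self_pos.2 (hfne hd hxd H hHA)
          nlinarith
      · have hHB : H ∈ ℬ := by
          rcases hH with h | h
          exacts [absurd h hHA, h]
        exact hsgnB H hH hHB hpb (hγb ts hts0.le hts1.le)
    have hpV : γ (T H0) ∈ ⋂ H ∈ (𝒞 \ {H0}), sideOf (F H) (R H) (γ ts) := by
      simp only [mem_iInter]
      intro H hH
      exact hsgnz H hH.1 (by simpa using hH.2)
    have hGcont : Continuous (fun t : ℝ => u H0 (γ t)) := by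
      apply Continuous.comp (u H0).continuous
      rw [hγdef]
      exact continuous_const.add (continuous_id.smul continuous_const)
    have hO : IsOpen ((fun t : ℝ => u H0 (γ t)) ⁻¹'
        (⋂ H ∈ (𝒞 \ {H0}), sideOf (F H) (R H) (γ ts))) := hVopen.preimage hGcont
    have ht0O : T H0 ∈ (fun t : ℝ => u H0 (γ t)) ⁻¹'
        (⋂ H ∈ (𝒞 \ {H0}), sideOf (F H) (R H) (γ ts)) := by
      rw [mem_preimage, hup]
      exact hpV
    obtain ⟨ε, hε, hball⟩ := Metric.isOpen_iff.1 hO (T H0) ht0O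
    set t' := max (T H0 / 2) (T H0 - ε / 2) with ht'def
    have ht'lt : t' < T H0 := by
      rw [ht'def]
      apply max_lt
      · linarith
      · linarith
    have ht'0 : 0 ≤ t' := le_trans (by linarith) (le_max_left _ _)
    have ht'V : u H0 (γ t') ∈ ⋂ H ∈ (𝒞 \ {H0}), sideOf (F H) (R H) (γ ts) := by
      apply hball
      rw [Metric.mem_ball, Real.dist_eq, abs_lt]
      constructor
      · have h1 := le_max_right (T H0 / 2) (T H0 - ε / 2)
        rw [ht'def]; linarith
      · linarith
    have hγt'd : γ t' ∈ d := by
      rw [(aux_chamber_eq_of_mem hd hxd).2, aux_chamber_eq_biInter hFR hx𝒞]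
      simp only [mem_iInter]
      intro H hH
      show 0 < (F H (γ t') - R H) * (F H x - R H)
      by_cases hHA : H ∈ A
      · rw [(hFA H hHA).1, (hFA H hHA).2]
        simp only [sub_zero]
        by_cases hHs : H ∈ sep d d'
        · rw [hTform H hHs t']
          have h1 : T H0 ≤ T H := hmin H hHs
          have h2 : 0 < (f H x - f H y) * f H x := by
            nlinarith [hcross H hHs, mul_self_pos.2 (hfne hd hxd H hHA)]
          nlinarith [mul_pos h2 (show (0:ℝ) < T H - t' by linarith)]
        · exact hnosep H hHA hHs t' ht'0 (by linarith)
      · have hHB : H ∈ ℬ := by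
          rcases hH with h | h
          exacts [absurd h hHA, h]
        exact hsgnB H hH hHB (hγb t' ht'0 (by linarith)) (hdb hxd)
    have huc1 : u H0 (γ t') ∈ connectedComponentIn (⋃₀ 𝒞)ᶜ (γ ts) := by
      rw [aux_chamber_eq_biInter hFR hz𝒞]
      simp only [mem_iInter]
      intro H hH
      rcases eq_or_ne H H0 with rfl | hne6
      · show 0 < (F H (u H (γ t')) - R H) * (F H (γ ts) - R H)
        rw [(hFA H hH0A).1, (hFA H hH0A).2]
        simp only [sub_zero]
        rw [huf H hH0A (γ t'), hTform H hH0 t', hTform H hH0 ts]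
        nlinarith [mul_self_pos.2 (hsubne H hH0),
          mul_pos (sub_pos.2 ht'lt) (sub_pos.2 htst0)]
      · have h1 := mem_iInter.1 ht'V H
        have h2 := mem_iInter.1 h1 ⟨hH, by simpa using hne6⟩
        exact h2
    have himg : ⇑(u H0) '' d ∈ chambers 𝒞 := WStable.chambers_image h𝒞W hu0W hd
    have hc1eq : connectedComponentIn (⋃₀ 𝒞)ᶜ (γ ts) = ⇑(u H0) '' d :=
      aux_chambers_eq_of_inter hc1 himg ⟨u H0 (γ t'), huc1, mem_image_of_mem _ hγt'd⟩
    -- the separating set shrinks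
    have hzc1' : γ ts ∈ connectedComponentIn (⋃₀ 𝒞)ᶜ (γ ts) := hzc1
    have hsepnew : sep (connectedComponentIn (⋃₀ 𝒞)ᶜ (γ ts)) d' = sep d d' \ {H0} := by
      ext H
      constructor
      · intro hmem
        have hHA : H ∈ A := ((hsep_mem _ _ H).1 hmem).1
        have hlt : f H (γ ts) * f H y < 0 := ((hsep_mem _ _ H).1 hmem).2 _ hzc1' y hyd'
        by_cases hHs : H ∈ sep d d'
        · refine ⟨hHs, ?_⟩
          simp only [mem_singleton_iff]
          rintro rfl
          have h1 := hTform H hH0 ts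
          have h2 : f H y = (f H x - f H y) * (T H - 1) := by
            have h2' := hTform H hH0 1
            rw [hγ1] at h2'
            exact h2'
          rw [h1] at hlt
          nth_rewrite 2 [h2] at hlt
          have hpos2 := aux_arith_two (hsubne H hH0)
            (show T H - ts < 0 by linarith) (show T H - 1 < 0 by linarith)
          linarith
        · exfalso
          have h1 := hnosep H hHA hHs ts hts0.le hts1.le
          have h2 := hposA H hHA hHs
          have h4 := aux_arith_same h1 h2
          linarith
      · rintro ⟨hHs, hne6⟩
        simp only [mem_singleton_iff] at hne6
        have hHA := hsepA _ _ hHs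
        refine (hsep_iff hc1 hd' hzc1' hyd' H hHA).2 ?_
        have h2 : f H y = (f H x - f H y) * (T H - 1) := by
          have h2' := hTform H hHs 1
          rw [hγ1] at h2'
          exact h2'
        have hτH := hτle H hHs hne6
        have h3 : 0 < T H - ts := by linarith
        have h4 : T H < 1 := (hT01 H hHs).2
        rw [hTform H hHs ts]
        nth_rewrite 2 [h2]
        exact aux_arith_mixed (hsubne H hHs) h3 (by linarith)
    have hssub : sep (connectedComponentIn (⋃₀ 𝒞)ᶜ (γ ts)) d' ⊂ sep d d' := by
      rw [hsepnew]
      constructor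
      · exact diff_subset
      · intro hsub
        exact (hsub hH0).2 rfl
    have hlt' : (sep (connectedComponentIn (⋃₀ 𝒞)ᶜ (γ ts)) d').ncard < n := by
      rw [← hcard]
      exact Set.ncard_lt_ncard hssub (hsepfin d d')
    obtain ⟨w, hwW, hweq⟩ := IH _ hlt' _ d' hc1 hd' hc1b hd'b rfl
    refine ⟨w * u H0, mul_mem hwW hu0W, ?_⟩
    rw [hweq, hc1eq, LinearIsometryEquiv.coe_mul, Set.image_comp]

end Aux

/-- The map `φ_B : Ch(C) → Ch(B)` induces a bijection from the set of `W`-orbits of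
`Ch(C)` onto the set of `W`-orbits of `Ch(B)` (an orbit is sent to its image under
`φ_B`, which is again an orbit). -/
theorem orbit_bijection
    (W : Subgroup (E ≃ₗᵢ[ℝ] E)) (hWfin : (W : Set (E ≃ₗᵢ[ℝ] E)).Finite)
    (hW : IsReflectionGroup W)
    (ℬ : Set (Set E)) (hB : IsArrangement ℬ) (hBW : WStable W ℬ)
    (hdisj : coxeterArrangement W ∩ ℬ = ∅)
    (φB : Set E → Set E)
    (hφB : ∀ c ∈ chambers (coxeterArrangement W ∪ ℬ),
      φB c ∈ chambers ℬ ∧ c ⊆ φB c) :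
    Set.BijOn (fun O => φB '' O)
      {O : Set (Set E) | ∃ c ∈ chambers (coxeterArrangement W ∪ ℬ),
        O = {c' : Set E | ∃ w ∈ W, c' = (⇑w) '' c}}
      {O : Set (Set E) | ∃ b ∈ chambers ℬ,
        O = {b' : Set E | ∃ w ∈ W, b' = (⇑w) '' b}} := by
  classical
  have hAarr : IsArrangement (coxeterArrangement W) := aux_coxeter_arrangement hWfin
  have h𝒞arr : IsArrangement (coxeterArrangement W ∪ ℬ) :=
    ⟨hAarr.1.union hB.1, by rintro H (h | h); exacts [hAarr.2 H h, hB.2 H h]⟩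
  have h𝒞W : WStable W (coxeterArrangement W ∪ ℬ) := by
    rintro w hw H (h | h)
    · exact Or.inl (aux_coxeter_stable w hw H h)
    · exact Or.inr (hBW w hw H h)
  -- uniqueness of the chamber of ℬ containing a chamber of 𝒞
  have huniq : ∀ c ∈ chambers (coxeterArrangement W ∪ ℬ), ∀ b ∈ chambers ℬ,
      c ⊆ b → φB c = b := by
    intro c hc b hb hcb
    obtain ⟨z, hz⟩ := aux_chamber_nonempty hc
    exact aux_chambers_eq_of_inter (hφB c hc).1 hb ⟨z, (hφB c hc).2 hz, hcb hz⟩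
  -- equivariance of φB
  have hequiv : ∀ c ∈ chambers (coxeterArrangement W ∪ ℬ), ∀ w ∈ W,
      φB (⇑w '' c) = ⇑w '' (φB c) := by
    intro c hc w hw
    have h1 : ⇑w '' c ∈ chambers (coxeterArrangement W ∪ ℬ) :=
      WStable.chambers_image h𝒞W hw hc
    have h2 : ⇑w '' (φB c) ∈ chambers ℬ := WStable.chambers_image hBW hw (hφB c hc).1
    exact huniq _ h1 _ h2 (image_mono (hφB c hc).2)
  -- composing images
  have himg : ∀ (a b : E ≃ₗᵢ[ℝ] E) (s : Set E), ⇑a '' (⇑b '' s) = ⇑(a * b) '' s := by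
    intro a b s
    rw [LinearIsometryEquiv.coe_mul, Set.image_comp]
  -- orbit of an orbit element
  have horb : ∀ (c d : Set E), (∃ w ∈ W, d = ⇑w '' c) →
      {e : Set E | ∃ w ∈ W, e = ⇑w '' d} = {e : Set E | ∃ w ∈ W, e = ⇑w '' c} := by
    rintro c d ⟨v, hv, rfl⟩
    ext e
    simp only [mem_setOf_eq]
    constructor
    · rintro ⟨w, hw, rfl⟩
      exact ⟨w * v, mul_mem hw hv, (himg w v c)⟩
    · rintro ⟨w, hw, rfl⟩
      refine ⟨w * v⁻¹, mul_mem hw (inv_mem hv), ?_⟩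
      rw [himg, mul_assoc, inv_mul_cancel, mul_one]
  -- image of an orbit of a chamber under φB
  have himage_orbit : ∀ c ∈ chambers (coxeterArrangement W ∪ ℬ),
      φB '' {e : Set E | ∃ w ∈ W, e = ⇑w '' c} =
        {e : Set E | ∃ w ∈ W, e = ⇑w '' (φB c)} := by
    intro c hc
    ext e
    simp only [mem_image, mem_setOf_eq]
    constructor
    · rintro ⟨d, ⟨w, hw, rfl⟩, rfl⟩
      exact ⟨w, hw, (hequiv c hc w hw)⟩
    · rintro ⟨w, hw, rfl⟩
      exact ⟨⇑w '' c, ⟨w, hw, rfl⟩, hequiv c hc w hw⟩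
  refine ⟨?_, ?_, ?_⟩
  -- MapsTo
  · rintro O ⟨c, hc, rfl⟩
    exact ⟨φB c, (hφB c hc).1, himage_orbit c hc⟩
  -- InjOn
  · rintro O₁ ⟨c₁, hc₁, rfl⟩ O₂ ⟨c₂, hc₂, rfl⟩ hEq
    simp only at hEq
    have h1 : φB c₂ ∈ φB '' {e : Set E | ∃ w ∈ W, e = ⇑w '' c₂} :=
      ⟨c₂, ⟨1, one_mem W, by rw [LinearIsometryEquiv.coe_one, image_id]⟩, rfl⟩
    rw [← hEq] at h1
    obtain ⟨d, ⟨w, hw, rfl⟩, hd⟩ := h1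
    have hdch : ⇑w '' c₁ ∈ chambers (coxeterArrangement W ∪ ℬ) :=
      WStable.chambers_image h𝒞W hw hc₁
    have hbch : φB c₂ ∈ chambers ℬ := (hφB c₂ hc₂).1
    have h2 : ⇑w '' c₁ ⊆ φB c₂ := by
      rw [← hd]
      exact (hφB _ hdch).2
    have h3 : c₂ ⊆ φB c₂ := (hφB c₂ hc₂).2
    obtain ⟨v, hv, hveq⟩ := aux_key W hWfin ℬ hB hBW hbch hdch hc₂ h2 h3
    have h4 : c₂ = ⇑(v * w) '' c₁ := by rw [hveq, himg]
    exact (horb c₁ c₂ ⟨v * w, mul_mem hv hw, h4⟩).symm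
  -- SurjOn
  · rintro O ⟨b, hbCh, rfl⟩
    have hAthin : ∀ S ∈ coxeterArrangement W, ∃ (h : E →ₗ[ℝ] ℝ) (ρ : ℝ),
        h ≠ 0 ∧ S ⊆ {x | h x = ρ} := by
      intro S hS
      obtain ⟨fS, hfS, hSf⟩ : IsLinearHyperplane S := by
        obtain ⟨w, hw, hr, rfl⟩ := hS
        exact hr
      exact ⟨fS, 0, hfS, by rw [hSf]⟩
    obtain ⟨x, hxb, hxA⟩ := aux_exists_avoid hAarr.1 hAthin
      (aux_chamber_open hB hbCh) (aux_chamber_nonempty hbCh)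
    have hx𝒞 : x ∈ (⋃₀ (coxeterArrangement W ∪ ℬ))ᶜ := by
      rintro ⟨H, hH, hxH⟩
      rcases hH with h | h
      · exact hxA H h hxH
      · exact (aux_chamber_subset hbCh hxb) ⟨H, h, hxH⟩
    have hcCh : connectedComponentIn (⋃₀ (coxeterArrangement W ∪ ℬ))ᶜ x ∈
        chambers (coxeterArrangement W ∪ ℬ) := ⟨x, hx𝒞, rfl⟩
    have hcb : connectedComponentIn (⋃₀ (coxeterArrangement W ∪ ℬ))ᶜ x ⊆ b :=
      aux_chamber_subset_chamber subset_union_right hcCh hbCh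
        (mem_connectedComponentIn hx𝒞) hxb
    have hφ : φB (connectedComponentIn (⋃₀ (coxeterArrangement W ∪ ℬ))ᶜ x) = b :=
      huniq _ hcCh b hbCh hcb
    refine ⟨{e : Set E | ∃ w ∈ W, e = ⇑w '' connectedComponentIn
      (⋃₀ (coxeterArrangement W ∪ ℬ))ᶜ x}, ⟨_, hcCh, rfl⟩, ?_⟩
    simp only
    rw [himage_orbit _ hcCh, hφ]
end

section
/- Let W be a finite Coxeter group with Coxeter arrangement A, and B a W-stable arrangement disjoint from A. For x ∈ V not on any hyperplane of B, let b be the chamber of B containing x and z(x) = (1/|W_b|) Σ_{w ∈ W_b} wx. Then the isotropy subgroup W_{z(x)} = {w ∈ W : w z(x) = z(x)} equals W_b. In particular W_{z(x)} depends only on the chamber b containing x. -/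
open Set

variable {E : Type*} [NormedAddCommGroup E] [InnerProductSpace ℝ E] [FiniteDimensional ℝ E]

/-- For `x` off the hyperplanes of `ℬ`, lying in the chamber `b` of `ℬ`, the isotropy
subgroup of the average `z(x) = (1/|W_b|) Σ_{w ∈ W_b} w x` equals `W_b`.  In particular it
depends only on the chamber `b` containing `x`. -/
theorem isotropy_of_average_eq_isotropy_of_chamber
    (W : Subgroup (E ≃ₗᵢ[ℝ] E)) (hWfin : (W : Set (E ≃ₗᵢ[ℝ] E)).Finite)
    (hW : IsReflectionGroup W)
    (ℬ : Set (Set E)) (hB : IsArrangement ℬ) (hBW : WStable W ℬ)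
    (hdisj : coxeterArrangement W ∩ ℬ = ∅)
    (b : Set E) (hb : b ∈ chambers ℬ) (x : E) (hx : x ∈ b)
    (hWbfin : {w : E ≃ₗᵢ[ℝ] E | w ∈ W ∧ (⇑w) '' b = b}.Finite) :
    ∀ z : E,
      z = ((hWbfin.toFinset.card : ℝ))⁻¹ • ∑ w ∈ hWbfin.toFinset, w x →
      {w : E ≃ₗᵢ[ℝ] E | w ∈ W ∧ w z = z} = {w : E ≃ₗᵢ[ℝ] E | w ∈ W ∧ (⇑w) '' b = b} := by
  classical
  intro z hz
  obtain ⟨hBfin, hBaff⟩ := hB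
  set S : Set E := ⋃₀ ℬ with hSdef
  obtain ⟨x₀, hx₀, hbeq⟩ := hb
  have hbSc : b ⊆ Sᶜ := hbeq ▸ connectedComponentIn_subset _ _
  have hbconn : IsPreconnected b := hbeq ▸ isPreconnected_connectedComponentIn
  have hcomp : ∀ y ∈ b, b = connectedComponentIn Sᶜ y := by
    intro y hy
    rw [hbeq] at hy ⊢
    exact connectedComponentIn_eq hy
  -- choose defining functionals for hyperplanes in ℬ
  choose f c hf hHeq using fun H : ℬ => hBaff H H.2
  have hne0 : ∀ H : ℬ, ∀ y ∈ b, f H y ≠ c H := by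
    intro H y hy hyc
    exact hbSc hy ⟨H, H.2, by rw [hHeq H]; exact hyc⟩
  -- the convex set C
  set C : Set E := ⋂ H : ℬ, {y : E | 0 < (f H y - c H) * (f H x - c H)} with hCdef
  have hxC : x ∈ C := by
    refine mem_iInter.2 fun H => ?_
    exact mul_self_pos.2 (sub_ne_zero.2 (hne0 H x hx))
  have hCconv : Convex ℝ C := by
    refine convex_iInter fun H => ?_
    rcases lt_or_gt_of_ne (sub_ne_zero.2 (hne0 H x hx)) with ht | ht
    · have : {y : E | 0 < (f H y - c H) * (f H x - c H)} = {y : E | f H y < c H} := by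
        ext y
        simp only [mem_setOf_eq, mul_pos_iff]
        constructor
        · rintro (⟨h1, h2⟩ | ⟨h1, h2⟩) <;> linarith
        · intro hy; exact Or.inr ⟨by linarith, ht⟩
      rw [this]
      exact convex_halfSpace_lt (f H).isLinear _
    · have : {y : E | 0 < (f H y - c H) * (f H x - c H)} = {y : E | c H < f H y} := by
        ext y
        simp only [mem_setOf_eq, mul_pos_iff]
        constructor
        · rintro (⟨h1, h2⟩ | ⟨h1, h2⟩) <;> linarith
        · intro hy; exact Or.inl ⟨by linarith, ht⟩
      rw [this]
      exact convex_halfSpace_gt (f H).isLinear _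
  have hCS : C ⊆ Sᶜ := by
    intro y hy hyS
    obtain ⟨H, hH, hyH⟩ := hyS
    have h1 : y ∈ {p : E | f ⟨H, hH⟩ p = c ⟨H, hH⟩} := by
      rw [← hHeq ⟨H, hH⟩]; exact hyH
    rw [mem_setOf_eq] at h1
    have h2 := mem_iInter.1 hy ⟨H, hH⟩
    rw [mem_setOf_eq, h1, sub_self, zero_mul] at h2
    exact lt_irrefl 0 h2
  have hCb : C ⊆ b := by
    rw [hcomp x hx]
    exact hCconv.isPreconnected.subset_connectedComponentIn hxC hCS
  have hbCsub : b ⊆ C := by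
    intro y hy
    refine mem_iInter.2 fun H => ?_
    have gcont : ContinuousOn (fun p : E => f H p - c H) b :=
      (((f H).continuous_of_finiteDimensional).sub continuous_const).continuousOn
    have hivt : ∀ p q : E, p ∈ b → q ∈ b → f H p - c H < 0 → 0 < f H q - c H → False := by
      intro p q hp hq h1 h2
      obtain ⟨r, hr, hr0⟩ :=
        hbconn.intermediate_value hp hq gcont ⟨le_of_lt h1, le_of_lt h2⟩
      exact hne0 H r hr (by linarith [sub_eq_zero.1 hr0])
    rcases lt_or_gt_of_ne (sub_ne_zero.2 (hne0 H x hx)) with ht | ht <;>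
      rcases lt_or_gt_of_ne (sub_ne_zero.2 (hne0 H y hy)) with hs | hs
    · exact mul_pos_of_neg_of_neg hs ht
    · exact absurd (hivt x y hx hy ht hs) not_false
    · exact absurd (hivt y x hy hx hs ht) not_false
    · exact mul_pos hs ht
  have hbconv : Convex ℝ b := by
    rw [Subset.antisymm hbCsub hCb]
    exact hCconv
  -- the finset T = W_b
  set T := hWbfin.toFinset with hTdef
  have hmemT : ∀ w : E ≃ₗᵢ[ℝ] E, w ∈ T ↔ w ∈ W ∧ (⇑w) '' b = b := fun w =>
    hWbfin.mem_toFinset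
  have honeT : (1 : E ≃ₗᵢ[ℝ] E) ∈ T := (hmemT 1).2 ⟨one_mem W, by
    simp [LinearIsometryEquiv.coe_one]⟩
  have hcardpos : (0 : ℝ) < (T.card : ℝ) := by
    exact_mod_cast Finset.card_pos.2 ⟨1, honeT⟩
  -- z ∈ b
  have hzb : z ∈ b := by
    rw [hz, Finset.smul_sum]
    refine hbconv.sum_mem (fun w _ => by positivity) ?_ ?_
    · rw [Finset.sum_const, nsmul_eq_mul, mul_inv_cancel₀ (ne_of_gt hcardpos)]
    · intro w hw
      obtain ⟨-, hwb⟩ := (hmemT w).1 hw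
      exact hwb ▸ mem_image_of_mem _ hx
  have hbz : b = connectedComponentIn Sᶜ z := hcomp z hzb
  -- invariance of Sᶜ
  have hScinv : ∀ u, u ∈ W → ∀ y ∈ Sᶜ, u y ∈ Sᶜ := by
    intro u hu y hy huy
    obtain ⟨H, hH, hyH⟩ := huy
    refine hy ⟨(⇑u⁻¹) '' H, hBW u⁻¹ (inv_mem hu) H hH, ⟨u y, hyH, ?_⟩⟩
    simp
  -- any u ∈ W fixing z maps b into b
  have himg : ∀ u, u ∈ W → u z = z → (⇑u) '' b ⊆ b := by
    intro u hu huz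
    have hsub : (⇑u) '' b ⊆ connectedComponentIn Sᶜ z := by
      refine IsPreconnected.subset_connectedComponentIn
        (hbconn.image _ u.continuous.continuousOn) ⟨z, hzb, huz⟩ ?_
      rintro - ⟨y, hy, rfl⟩
      exact hScinv u hu y (hbSc hy)
    rwa [← hbz] at hsub
  ext w
  simp only [mem_setOf_eq]
  constructor
  · rintro ⟨hw, hwz⟩
    refine ⟨hw, ?_⟩
    have h1 : (⇑w) '' b ⊆ b := himg w hw hwz
    have h2 : (⇑w⁻¹) '' b ⊆ b := by
      refine himg w⁻¹ (inv_mem hw) ?_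
      have := congrArg (⇑w⁻¹) hwz
      simpa using this.symm
    refine Subset.antisymm h1 ?_
    intro y hy
    have : w (w⁻¹ y) ∈ (⇑w) '' b := mem_image_of_mem _ (h2 (mem_image_of_mem _ hy))
    simpa using this
  · rintro ⟨hw, hwb⟩
    refine ⟨hw, ?_⟩
    -- closure of T under left multiplication by w and w⁻¹
    have hinvb : (⇑w⁻¹) '' b = b := by
      conv_lhs => rw [← hwb]
      rw [← image_comp]
      simp
    have hmul : ∀ u ∈ T, w * u ∈ T := by
      intro u hu
      obtain ⟨hu1, hu2⟩ := (hmemT u).1 hu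
      refine (hmemT _).2 ⟨mul_mem hw hu1, ?_⟩
      rw [LinearIsometryEquiv.coe_mul, image_comp, hu2, hwb]
    have hinvmul : ∀ u ∈ T, w⁻¹ * u ∈ T := by
      intro u hu
      obtain ⟨hu1, hu2⟩ := (hmemT u).1 hu
      refine (hmemT _).2 ⟨mul_mem (inv_mem hw) hu1, ?_⟩
      rw [LinearIsometryEquiv.coe_mul, image_comp, hu2, hinvb]
    rw [hz, map_smul, map_sum]
    congr 1
    refine Finset.sum_nbij' (fun u => w * u) (fun u => w⁻¹ * u) hmul hinvmul
      (fun u _ => by group) (fun u _ => by group) ?_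
    intro u _
    simp [LinearIsometryEquiv.coe_mul]
end

section
/- Let W = S_m act on H_0 = {x ∈ R^m : x_1 + ... + x_m = 0} by permuting coordinates, let A be the braid arrangement in H_0 (hyperplanes x_i = x_j, i < j), and let B be the essentialized semiorder arrangement (hyperplanes x_i = x_j + 1 for i ≠ j), so that C = A ∪ B is the essentialized Catalan arrangement. Then the number of chambers of C contained in the chamber a : x_1 > x_2 > ... > x_m of A equals the Catalan number C_m = (1/(m+1))·binom(2m, m), and hence |Ch(C)| = m!·C_m = (2m)(2m−1)···(m+2). -/
open Set Finset

/-- The chambers of (the portion of space cut out by) a locally closed set `F`: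
connected components of `F`. -/
def chambersOf {X : Type*} [TopologicalSpace X] (F : Set X) : Set (Set X) :=
  {c | ∃ x ∈ F, c = connectedComponentIn F x}

/-- The complement, inside `H₀ = {Σ xᵢ = 0}`, of the essentialized Catalan arrangement
`C = A ∪ B` (hyperplanes `xᵢ = xⱼ` and `xᵢ = xⱼ + 1`, `i ≠ j`). -/
def catalanComplement (m : ℕ) : Set (Fin m → ℝ) :=
  {x | ∑ i, x i = 0 ∧ ∀ i j : Fin m, i ≠ j → x i ≠ x j ∧ x i ≠ x j + 1}


/-- Monotone subdiagonal sequences that are eventually the identity. -/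
abbrev CatSeq (m : ℕ) : Type :=
  {f : ℕ → ℕ // Monotone f ∧ (∀ i, f i ≤ i) ∧ ∀ i, m ≤ i → f i = i}

instance catSeqFinite (m : ℕ) : Finite (CatSeq m) := by
  have hinj : Function.Injective
      (fun f : CatSeq m => (fun i : Fin m => (⟨f.1 i, lt_of_le_of_lt (f.2.2.1 i) i.isLt⟩ : Fin m)
        : Fin m → Fin m)) := by
    intro f g h
    apply Subtype.ext; funext t
    rcases lt_or_ge t m with ht | ht
    · have := congrFun h ⟨t, ht⟩
      simpa [Fin.ext_iff] using this
    · rw [f.2.2.2 t ht, g.2.2.2 t ht]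
  exact Finite.of_injective _ hinj

noncomputable instance (m : ℕ) : Fintype (CatSeq m) := Fintype.ofFinite _

/-- The function underlying the first-return recomposition. -/
def recomposeFun (k : ℕ) (f g : ℕ → ℕ) : ℕ → ℕ := fun j =>
  if j < k then (if j = 0 then 0 else f (j - 1)) else g (j - k) + k

lemma recomposeFun_apply_lt {k : ℕ} (f g : ℕ → ℕ) {j : ℕ} (h0 : j ≠ 0) (hj : j < k) :
    recomposeFun k f g j = f (j - 1) := by
  rw [recomposeFun, if_pos hj, if_neg h0]

lemma recomposeFun_apply_zero {k : ℕ} (f g : ℕ → ℕ) (hk : 0 < k) :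
    recomposeFun k f g 0 = 0 := by
  rw [recomposeFun, if_pos hk, if_pos rfl]

lemma recomposeFun_apply_ge {k : ℕ} (f g : ℕ → ℕ) {j : ℕ} (hj : k ≤ j) :
    recomposeFun k f g j = g (j - k) + k := by
  have : ¬ j < k := by omega
  rw [recomposeFun, if_neg this]

/-- map realizing the first-return decomposition -/
def recompose (n : ℕ) (x : Σ i : Fin (n + 1), CatSeq i × CatSeq (n - i)) : CatSeq (n + 1) := by
  obtain ⟨i, f, g⟩ := x
  refine ⟨recomposeFun ((i : ℕ) + 1) f.1 g.1, ?_, ?_, ?_⟩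
  · intro a b hab
    rcases lt_or_ge a ((i:ℕ)+1) with ha | ha <;> rcases lt_or_ge b ((i:ℕ)+1) with hb | hb
    · rcases eq_or_ne a 0 with rfl | ha0
      · rw [recomposeFun_apply_zero _ _ (by omega)]
        exact Nat.zero_le _
      · rw [recomposeFun_apply_lt _ _ ha0 ha, recomposeFun_apply_lt _ _ (by omega) hb]
        exact f.2.1 (by omega)
    · rw [recomposeFun_apply_ge _ _ hb]
      rcases eq_or_ne a 0 with rfl | ha0
      · rw [recomposeFun_apply_zero _ _ (by omega)]
        exact Nat.zero_le _
      · rw [recomposeFun_apply_lt _ _ ha0 ha]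
        have := f.2.2.1 (a - 1)
        omega
    · omega
    · rw [recomposeFun_apply_ge _ _ ha, recomposeFun_apply_ge _ _ hb]
      have := g.2.1 (show a - ((i:ℕ)+1) ≤ b - ((i:ℕ)+1) by omega)
      omega
  · intro j
    rcases lt_or_ge j ((i:ℕ)+1) with hj | hj
    · rcases eq_or_ne j 0 with rfl | hj0
      · rw [recomposeFun_apply_zero _ _ (by omega)]
      · rw [recomposeFun_apply_lt _ _ hj0 hj]
        have := f.2.2.1 (j - 1); omega
    · rw [recomposeFun_apply_ge _ _ hj]
      have := g.2.2.1 (j - ((i:ℕ)+1)); omega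
  · intro j hj
    have hi : (i:ℕ) < n + 1 := i.isLt
    rw [recomposeFun_apply_ge _ _ (by omega)]
    have := g.2.2.2 (j - ((i:ℕ)+1)) (by omega)
    omega

lemma recompose_val (n : ℕ) (i : Fin (n + 1)) (f : CatSeq i) (g : CatSeq (n - i)) :
    (recompose n ⟨i, f, g⟩).1 = recomposeFun ((i : ℕ) + 1) f.1 g.1 := rfl

lemma recompose_not_fix (n : ℕ) (i : Fin (n + 1)) (f : CatSeq i) (g : CatSeq (n - i))
    {t : ℕ} (h0 : 0 < t) (ht : t < (i : ℕ) + 1) : (recompose n ⟨i, f, g⟩).1 t ≠ t := by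
  rw [recompose_val, recomposeFun_apply_lt _ _ (by omega) ht]
  have := f.2.2.1 (t - 1)
  omega

lemma recompose_fix (n : ℕ) (i : Fin (n + 1)) (f : CatSeq i) (g : CatSeq (n - i)) :
    (recompose n ⟨i, f, g⟩).1 ((i : ℕ) + 1) = (i : ℕ) + 1 := by
  rw [recompose_val, recomposeFun_apply_ge _ _ le_rfl, Nat.sub_self]
  have := g.2.2.1 0
  omega

lemma recompose_injective (n : ℕ) : Function.Injective (recompose n) := by
  intro x y h
  obtain ⟨i, f, g⟩ := x
  obtain ⟨j, f', g'⟩ := y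
  have hij : i = j := by
    by_contra hne
    have hne' : (i : ℕ) ≠ (j : ℕ) := fun hc => hne (Fin.ext hc)
    rcases lt_or_gt_of_ne hne' with hlt | hlt
    · have h1 := recompose_fix n i f g
      rw [h] at h1
      exact recompose_not_fix n j f' g' (by omega) (by omega) h1
    · have h1 := recompose_fix n j f' g'
      rw [← h] at h1
      exact recompose_not_fix n i f g (by omega) (by omega) h1
  subst hij
  have hv : ∀ t, (recompose n ⟨i, f, g⟩).1 t = (recompose n ⟨i, f', g'⟩).1 t := by
    intro t; rw [h]
  refine congrArg (fun p => (⟨i, p⟩ : Σ i : Fin (n + 1), CatSeq i × CatSeq (n - i))) ?_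
  have h1 : f = f' := by
    apply Subtype.ext; funext t
    rcases lt_or_ge t (i:ℕ) with ht | ht
    · have := hv (t + 1)
      rw [recompose_val, recompose_val, recomposeFun_apply_lt _ _ (by omega) (by omega),
        recomposeFun_apply_lt _ _ (by omega) (by omega)] at this
      simpa using this
    · rw [f.2.2.2 t ht, f'.2.2.2 t ht]
  have h2 : g = g' := by
    apply Subtype.ext; funext t
    rcases lt_or_ge t (n - (i:ℕ)) with ht | ht
    · have := hv (t + ((i:ℕ) + 1))
      rw [recompose_val, recompose_val, recomposeFun_apply_ge _ _ (by omega),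
        recomposeFun_apply_ge _ _ (by omega)] at this
      simpa using this
    · rw [g.2.2.2 t ht, g'.2.2.2 t ht]
  rw [h1, h2]

lemma recompose_surjective (n : ℕ) : Function.Surjective (recompose n) := by
  intro F
  have hmono := F.2.1
  have hle := F.2.2.1
  have htail := F.2.2.2
  set f := F.1 with hfdef
  have hex : ∃ t, 0 < t ∧ f t = t := ⟨n + 1, by omega, htail (n+1) le_rfl⟩
  classical
  set k := Nat.find hex with hkdef
  obtain ⟨hk0, hkfix⟩ : 0 < k ∧ f k = k := Nat.find_spec hex
  have hkle : k ≤ n + 1 := Nat.find_le ⟨by omega, htail (n+1) le_rfl⟩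
  have hmin : ∀ t, 0 < t → t < k → f t ≠ t := fun t h0 htk hc => Nat.find_min hex htk ⟨h0, hc⟩
  have hlt : ∀ t, 0 < t → t < k → f t < t := fun t h0 htk =>
    lt_of_le_of_ne (hle t) (hmin t h0 htk)
  have hfk : ∀ s, k ≤ s → k ≤ f s := by
    intro s hs
    have := hmono hs
    omega
  refine ⟨⟨⟨k - 1, by omega⟩, ?_, ?_⟩, ?_⟩
  · -- f' : CatSeq (k-1)
    refine ⟨fun t => if t < k - 1 then f (t + 1) else t, ?_, ?_, ?_⟩
    · intro a b hab
      dsimp only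
      rcases lt_or_ge a (k-1) with ha | ha <;> rcases lt_or_ge b (k-1) with hb | hb
      · rw [if_pos ha, if_pos hb]; exact hmono (by omega)
      · have hb' : ¬ b < k - 1 := by omega
        rw [if_pos ha, if_neg hb']
        have := hlt (a+1) (by omega) (by omega); omega
      · omega
      · have ha' : ¬ a < k - 1 := by omega
        have hb' : ¬ b < k - 1 := by omega
        rw [if_neg ha', if_neg hb']; exact hab
    · intro t
      dsimp only
      rcases lt_or_ge t (k-1) with ht | ht
      · rw [if_pos ht]; have := hlt (t+1) (by omega) (by omega); omega
      · have ht' : ¬ t < k - 1 := by omega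
        rw [if_neg ht']
    · intro t ht
      dsimp only
      have ht2 : k - 1 ≤ t := ht
      have ht' : ¬ t < k - 1 := by omega
      rw [if_neg ht']
  · -- g' : CatSeq (n - (k-1))
    refine ⟨fun t => if t < n - (k - 1) then f (t + k) - k else t, ?_, ?_, ?_⟩
    · intro a b hab
      dsimp only
      rcases lt_or_ge a (n - (k-1)) with ha | ha <;> rcases lt_or_ge b (n - (k-1)) with hb | hb
      · rw [if_pos ha, if_pos hb]
        have h1 := hmono (show a + k ≤ b + k by omega)
        have h2 := hfk (a + k) (by omega)
        omega
      · have hb' : ¬ b < n - (k-1) := by omega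
        rw [if_pos ha, if_neg hb']
        have := hle (a + k); omega
      · omega
      · have ha' : ¬ a < n - (k-1) := by omega
        have hb' : ¬ b < n - (k-1) := by omega
        rw [if_neg ha', if_neg hb']; exact hab
    · intro t
      dsimp only
      rcases lt_or_ge t (n - (k-1)) with ht | ht
      · rw [if_pos ht]; have := hle (t + k); omega
      · have ht' : ¬ t < n - (k-1) := by omega
        rw [if_neg ht']
    · intro t ht
      dsimp only
      have ht2 : n - (k - 1) ≤ t := ht
      have ht' : ¬ t < n - (k-1) := by omega
      rw [if_neg ht']
  · -- recompose of this equals F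
    apply Subtype.ext
    rw [recompose_val]
    funext t
    rw [← hfdef]
    have hkk : ((⟨k - 1, by omega⟩ : Fin (n + 1)) : ℕ) + 1 = k := by
      simp only [Fin.val_mk]; omega
    rw [hkk]
    rcases lt_or_ge t k with ht | ht
    · rcases eq_or_ne t 0 with rfl | ht0
      · rw [recomposeFun_apply_zero _ _ (by omega)]
        have := hle 0; omega
      · rw [recomposeFun_apply_lt _ _ ht0 ht]
        dsimp only
        rw [if_pos (by omega)]
        congr 1; omega
    · rw [recomposeFun_apply_ge _ _ ht]
      dsimp only
      have hfkt := hfk t ht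
      rcases lt_or_ge t (n + 1) with htn | htn
      · rw [if_pos (by omega)]
        have he : t - k + k = t := by omega
        rw [he]
        omega
      · rw [if_neg (by omega)]
        rw [htail t (by omega)]
        omega

lemma card_catSeq : ∀ m : ℕ, Nat.card (CatSeq m) = catalan m := by
  intro m
  induction m using Nat.strong_induction_on with
  | _ m IH =>
    match m with
    | 0 =>
      haveI : Unique (CatSeq 0) :=
        { default := ⟨id, monotone_id, fun i => le_rfl, fun i _ => rfl⟩
          uniq := fun f => Subtype.ext (funext fun i => f.2.2.2 i (Nat.zero_le i)) }
      simp [Nat.card_unique, catalan_zero]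
    | (n + 1) =>
      have e : (Σ i : Fin (n + 1), CatSeq i × CatSeq (n - i)) ≃ CatSeq (n + 1) :=
        Equiv.ofBijective _ ⟨recompose_injective n, recompose_surjective n⟩
      rw [← Nat.card_congr e]
      rw [Nat.card_eq_fintype_card, Fintype.card_sigma]
      rw [catalan_succ]
      congr 1; funext i
      rw [Fintype.card_prod, ← Nat.card_eq_fintype_card, ← Nat.card_eq_fintype_card,
        IH i (by omega), IH (n - i) (by omega)]

/-- The open region of the Catalan arrangement complement determined by the ordering `σ`
(so that `x (σ 0) > x (σ 1) > ⋯`) and by the pattern `f` (for `j < i`, `x (σ j) > x (σ i) + 1`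
exactly when `j < f i`). -/
def region (m : ℕ) (σ : Equiv.Perm (Fin m)) (f : ℕ → ℕ) : Set (Fin m → ℝ) :=
  {x | ∑ i, x i = 0 ∧ ∀ i j : Fin m, j < i →
    x (σ i) < x (σ j) ∧ ((j : ℕ) < f (i : ℕ) → x (σ i) + 1 < x (σ j)) ∧
      (f (i : ℕ) ≤ (j : ℕ) → x (σ j) < x (σ i) + 1)}

lemma combo_lt {a b u1 v1 u2 v2 : ℝ} (ha : 0 ≤ a) (hb : 0 ≤ b) (hab : a + b = 1)
    (h1 : u1 < v1) (h2 : u2 < v2) : a * u1 + b * u2 < a * v1 + b * v2 := by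
  rcases eq_or_lt_of_le ha with rfl | ha'
  · have hb1 : b = 1 := by linarith
    simp [hb1]
    linarith
  · have e1 : a * u1 < a * v1 := by exact (mul_lt_mul_iff_right₀ ha').2 h1
    have e2 : b * u2 ≤ b * v2 := mul_le_mul_of_nonneg_left h2.le hb
    linarith

lemma region_convex (m : ℕ) (σ : Equiv.Perm (Fin m)) (f : ℕ → ℕ) :
    Convex ℝ (region m σ f) := by
  intro x hx y hy a b ha hb hab
  obtain ⟨hx0, hxp⟩ := hx
  obtain ⟨hy0, hyp⟩ := hy
  constructor
  · simp only [Pi.add_apply, Pi.smul_apply, smul_eq_mul]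
    rw [Finset.sum_add_distrib, ← Finset.mul_sum, ← Finset.mul_sum, hx0, hy0]
    ring
  · intro i j hij
    obtain ⟨ha1, ha2, ha3⟩ := hxp i j hij
    obtain ⟨hb1, hb2, hb3⟩ := hyp i j hij
    simp only [Pi.add_apply, Pi.smul_apply, smul_eq_mul]
    refine ⟨combo_lt ha hb hab ha1 hb1, fun hlt => ?_, fun hle => ?_⟩
    · have h := combo_lt ha hb hab (ha2 hlt) (hb2 hlt)
      have e : a * (x (σ i) + 1) + b * (y (σ i) + 1) = a * x (σ i) + b * y (σ i) + (a + b) := by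
        ring
      rw [e, hab] at h
      linarith
    · have h := combo_lt ha hb hab (ha3 hle) (hb3 hle)
      have e : a * (x (σ i) + 1) + b * (y (σ i) + 1) = a * x (σ i) + b * y (σ i) + (a + b) := by
        ring
      rw [e, hab] at h
      linarith

lemma region_subset (m : ℕ) (σ : Equiv.Perm (Fin m)) (f : ℕ → ℕ) :
    region m σ f ⊆ catalanComplement m := by
  intro x hx
  refine ⟨hx.1, fun a b hab => ?_⟩
  set i := σ.symm a with hi
  set j := σ.symm b with hj
  have hA : a = σ i := by rw [hi, Equiv.apply_symm_apply]
  have hB : b = σ j := by rw [hj, Equiv.apply_symm_apply]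
  have hij : i ≠ j := fun h => hab (by rw [hA, hB, h])
  rcases hij.lt_or_gt with h | h
  · -- i < j : x (σ j) < x (σ i), i.e. x b < x a
    obtain ⟨h1, h2, h3⟩ := hx.2 j i h
    rcases lt_or_ge (i : ℕ) (f (j : ℕ)) with hc | hc
    · have := h2 hc
      constructor <;> [skip; skip] <;> rw [hA, hB] <;> linarith
    · have := h3 hc
      constructor <;> rw [hA, hB] <;> linarith
  · -- j < i : x (σ i) < x (σ j), x a < x b ≤ x b + 1
    obtain ⟨h1, h2, h3⟩ := hx.2 i j h
    constructor <;> rw [hA, hB] <;> linarith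

lemma pos_on_preconnected {m : ℕ} {s : Set (Fin m → ℝ)} (hs : IsPreconnected s)
    {h : (Fin m → ℝ) → ℝ} (hc : Continuous h) (hne : ∀ y ∈ s, h y ≠ 0)
    {x y : Fin m → ℝ} (hx : x ∈ s) (hy : y ∈ s) (hp : 0 < h x) : 0 < h y := by
  by_contra hn
  have h0 : (0 : ℝ) ∈ Icc (h y) (h x) := ⟨by linarith [not_lt.1 hn], hp.le⟩
  obtain ⟨z, hz, hz0⟩ := hs.intermediate_value hy hx hc.continuousOn h0
  exact hne z hz hz0

lemma region_eq_component {m : ℕ} {σ : Equiv.Perm (Fin m)} {f : ℕ → ℕ} {x : Fin m → ℝ}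
    (hx : x ∈ region m σ f) :
    region m σ f = connectedComponentIn (catalanComplement m) x := by
  apply Set.Subset.antisymm
  · exact (region_convex m σ f).isPreconnected.subset_connectedComponentIn hx
      (region_subset m σ f)
  · intro y hy
    have hxF : x ∈ catalanComplement m := region_subset m σ f hx
    have hsub : connectedComponentIn (catalanComplement m) x ⊆ catalanComplement m :=
      connectedComponentIn_subset _ _
    have hyF : y ∈ catalanComplement m := hsub hy
    have hs : IsPreconnected (connectedComponentIn (catalanComplement m) x) :=
      isPreconnected_connectedComponentIn
    have hxc : x ∈ connectedComponentIn (catalanComplement m) x := mem_connectedComponentIn hxF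
    refine ⟨hyF.1, fun i j hij => ?_⟩
    have hne : σ j ≠ σ i := σ.injective.ne hij.ne
    obtain ⟨h1, h2, h3⟩ := hx.2 i j hij
    have c1 : Continuous fun w : Fin m → ℝ => w (σ j) - w (σ i) :=
      (continuous_apply _).sub (continuous_apply _)
    have p1 : 0 < y (σ j) - y (σ i) := by
      refine pos_on_preconnected hs c1 (fun w hw => ?_) hxc hy (by linarith)
      exact sub_ne_zero.2 ((hsub hw).2 (σ j) (σ i) hne).1
    refine ⟨by linarith, fun hlt => ?_, fun hle => ?_⟩
    · have c2 : Continuous fun w : Fin m → ℝ => w (σ j) - (w (σ i) + 1) :=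
        (continuous_apply _).sub ((continuous_apply _).add continuous_const)
      have p2 : 0 < y (σ j) - (y (σ i) + 1) := by
        refine pos_on_preconnected hs c2 (fun w hw => ?_) hxc hy (by linarith [h2 hlt])
        exact sub_ne_zero.2 ((hsub hw).2 (σ j) (σ i) hne).2
      linarith
    · have c3 : Continuous fun w : Fin m → ℝ => w (σ i) + 1 - w (σ j) :=
        ((continuous_apply _).add continuous_const).sub (continuous_apply _)
      have p3 : 0 < y (σ i) + 1 - y (σ j) := by
        refine pos_on_preconnected hs c3 (fun w hw => ?_) hxc hy (by linarith [h3 hle])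
        have := ((hsub hw).2 (σ j) (σ i) hne).2
        intro hc
        exact this (by linarith)
      linarith

lemma perm_eq_one_of_strictMono {m : ℕ} (σ : Equiv.Perm (Fin m)) (h : StrictMono ⇑σ) :
    σ = 1 := by
  have le_ap : ∀ (τ : Equiv.Perm (Fin m)), StrictMono ⇑τ → ∀ i : Fin m, (i : ℕ) ≤ (τ i : ℕ) := by
    intro τ hτ i
    have key : ∀ v, ∀ hv : v < m, v ≤ ((τ ⟨v, hv⟩ : Fin m) : ℕ) := by
      intro v
      induction v using Nat.strong_induction_on with
      | _ v IH =>
        intro hv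
        rcases Nat.eq_zero_or_pos v with rfl | hp
        · exact Nat.zero_le _
        · have h' : v - 1 < m := by omega
          have h1 := IH (v - 1) (by omega) h'
          have h2 : τ ⟨v - 1, h'⟩ < τ ⟨v, hv⟩ := by
            apply hτ
            rw [Fin.lt_def]
            simp only [Fin.val_mk]
            omega
          rw [Fin.lt_def] at h2
          omega
    have := key (i : ℕ) i.isLt
    simpa [Fin.eta] using this
  have hinv : StrictMono ⇑σ.symm := by
    intro a b hab
    by_contra hc
    have hle : σ.symm b ≤ σ.symm a := not_lt.1 hc
    have := h.monotone hle
    rw [Equiv.apply_symm_apply, Equiv.apply_symm_apply] at this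
    exact absurd this (not_le.2 hab)
  apply Equiv.ext
  intro i
  have e1 : (i : ℕ) ≤ (σ i : ℕ) := le_ap σ h i
  have e2 : (i : ℕ) ≤ (σ.symm i : ℕ) := le_ap σ.symm hinv i
  have e3 : σ i ≤ σ (σ.symm i) := h.monotone (by rw [Fin.le_def]; exact e2)
  rw [Equiv.apply_symm_apply] at e3
  rw [Fin.le_def] at e3
  have : (σ i : ℕ) = (i : ℕ) := le_antisymm e3 e1
  simpa [Fin.ext_iff] using this

lemma exists_region {m : ℕ} {x : Fin m → ℝ} (hxF : x ∈ catalanComplement m) :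
    ∃ (σ : Equiv.Perm (Fin m)) (f : ℕ → ℕ),
      (Monotone f ∧ (∀ t, f t ≤ t) ∧ ∀ t, m ≤ t → f t = t) ∧ x ∈ region m σ f := by
  classical
  have hinj : Function.Injective x := by
    intro a b hab
    by_contra hne
    exact (hxF.2 a b hne).1 hab
  set τ := Tuple.sort x with hτ
  have hmono : Monotone (x ∘ τ) := Tuple.monotone_sort x
  have hg : StrictMono (x ∘ τ) := hmono.strictMono_of_injective (hinj.comp τ.injective)
  set σ : Equiv.Perm (Fin m) := Fin.revPerm.trans τ with hσ
  have hσa : ∀ a : Fin m, σ a = τ (Fin.rev a) := fun a => rfl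
  have hanti : ∀ i j : Fin m, j < i → x (σ i) < x (σ j) := by
    intro i j hji
    rw [hσa, hσa]
    exact hg (by rwa [Fin.rev_lt_rev])
  -- the pattern function
  set Q : Fin m → Set ℕ :=
    fun i => {s | ∀ j : Fin m, j < i → s ≤ (j : ℕ) → x (σ j) < x (σ i) + 1} with hQ
  have hQw : ∀ i : Fin m, (i : ℕ) ∈ Q i := by
    intro i j hji hij
    exact absurd (lt_of_le_of_lt hij hji) (lt_irrefl _)
  have hQne : ∀ i : Fin m, (Q i).Nonempty := fun i => ⟨i, hQw i⟩
  set f : ℕ → ℕ := fun t => if h : t < m then sInf (Q ⟨t, h⟩) else t with hf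
  have hfap : ∀ t, f t = if h : t < m then sInf (Q ⟨t, h⟩) else t := fun t => rfl
  have hfi : ∀ i : Fin m, f (i : ℕ) = sInf (Q i) := by
    intro i
    rw [hfap, dif_pos i.isLt, Fin.eta]
  have hfle : ∀ i : Fin m, f (i : ℕ) ≤ (i : ℕ) := by
    intro i; rw [hfi]; exact Nat.sInf_le (hQw i)
  have hspec : ∀ i : Fin m, sInf (Q i) ∈ Q i := fun i => Nat.sInf_mem (hQne i)
  have h2 : ∀ i j : Fin m, j < i → f (i : ℕ) ≤ (j : ℕ) → x (σ j) < x (σ i) + 1 := by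
    intro i j hji hle
    rw [hfi] at hle
    exact hspec i j hji hle
  have h1 : ∀ i j : Fin m, j < i → (j : ℕ) < f (i : ℕ) → x (σ i) + 1 < x (σ j) := by
    intro i j hji hlt
    rw [hfi] at hlt
    have hnm : ¬ ∀ j' : Fin m, j' < i → (j : ℕ) ≤ (j' : ℕ) → x (σ j') < x (σ i) + 1 :=
      Nat.notMem_of_lt_sInf hlt
    push_neg at hnm
    obtain ⟨j', hj'i, hjj', hxj'⟩ := hnm
    have hne : x (σ j') ≠ x (σ i) + 1 :=
      (hxF.2 (σ j') (σ i) (σ.injective.ne hj'i.ne)).2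
    have hgt : x (σ i) + 1 < x (σ j') := lt_of_le_of_ne hxj' (Ne.symm hne)
    rcases eq_or_lt_of_le hjj' with he | hlt'
    · have : j = j' := Fin.ext he
      rwa [this]
    · have : x (σ j') < x (σ j) := hanti j' j (by rwa [Fin.lt_def])
      linarith
  have hfmono : Monotone f := by
    intro a b hab
    rw [hfap a, hfap b]
    by_cases hb : b < m
    · have ha : a < m := lt_of_le_of_lt hab hb
      rw [dif_pos ha, dif_pos hb]
      apply Nat.sInf_le
      intro j hja hle
      have hjb : j < (⟨b, hb⟩ : Fin m) := lt_of_lt_of_le hja (by exact hab)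
      have := hspec ⟨b, hb⟩ j hjb hle
      have hx2 : x (σ ⟨b, hb⟩) ≤ x (σ ⟨a, ha⟩) := by
        rcases eq_or_lt_of_le hab with he | hlt
        · simp [he]
        · exact (hanti ⟨b, hb⟩ ⟨a, ha⟩ hlt).le
      linarith
    · rw [dif_neg hb]
      by_cases ha : a < m
      · rw [dif_pos ha]
        exact le_trans (Nat.sInf_le (hQw ⟨a, ha⟩)) hab
      · rw [dif_neg ha]; exact hab
  have hfdiag : ∀ t, f t ≤ t := by
    intro t
    rw [hfap t]
    by_cases ht : t < m
    · rw [dif_pos ht]; exact Nat.sInf_le (hQw ⟨t, ht⟩)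
    · rw [dif_neg ht]
  have hftail : ∀ t, m ≤ t → f t = t := by
    intro t ht
    rw [hfap t, dif_neg (by omega)]
  exact ⟨σ, f, ⟨hfmono, hfdiag, hftail⟩,
    ⟨hxF.1, fun i j hij => ⟨hanti i j hij, h1 i j hij, h2 i j hij⟩⟩⟩

lemma region_unique {m : ℕ} {σ σ' : Equiv.Perm (Fin m)} {f f' : ℕ → ℕ}
    (hf : ∀ t, f t ≤ t) (hf' : ∀ t, f' t ≤ t) {x : Fin m → ℝ}
    (hx : x ∈ region m σ f) (hx' : x ∈ region m σ' f') :
    σ = σ' ∧ ∀ i : Fin m, f (i : ℕ) = f' (i : ℕ) := by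
  have hσ : σ = σ' := by
    have hρ : StrictMono ⇑(σ'.trans σ.symm) := by
      intro a b hab
      simp only [Equiv.trans_apply]
      rcases lt_trichotomy (σ.symm (σ' a)) (σ.symm (σ' b)) with h | h | h
      · exact h
      · exfalso
        have : σ' a = σ' b := by
          have := congrArg σ h
          rwa [Equiv.apply_symm_apply, Equiv.apply_symm_apply] at this
        exact hab.ne (σ'.injective this)
      · exfalso
        have e1 : x (σ (σ.symm (σ' a))) < x (σ (σ.symm (σ' b))) :=
          (hx.2 _ _ h).1
        rw [Equiv.apply_symm_apply, Equiv.apply_symm_apply] at e1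
        have e2 : x (σ' b) < x (σ' a) := (hx'.2 b a hab).1
        linarith
    have := perm_eq_one_of_strictMono _ hρ
    have h2 : σ'.trans σ.symm = 1 := this
    apply Equiv.ext
    intro a
    have := congrArg (fun e : Equiv.Perm (Fin m) => σ (e a)) h2
    simpa [Equiv.trans_apply, Equiv.apply_symm_apply] using this.symm
  subst hσ
  refine ⟨rfl, fun i => ?_⟩
  by_contra hne
  rcases Nat.lt_or_ge (f (i : ℕ)) (f' (i : ℕ)) with hlt | hge
  · have hj : f (i : ℕ) < m := by
      have := hf' (i : ℕ)
      have := i.isLt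
      omega
    set j : Fin m := ⟨f (i : ℕ), hj⟩ with hjdef
    have hji : j < i := by
      rw [Fin.lt_def]
      have := hf' (i : ℕ)
      simp only [hjdef]
      omega
    have e1 := (hx.2 i j hji).2.2 (by simp [hjdef])
    have e2 := (hx'.2 i j hji).2.1 (by simp [hjdef]; omega)
    linarith
  · have hlt : f' (i : ℕ) < f (i : ℕ) := by omega
    have hj : f' (i : ℕ) < m := by
      have := hf (i : ℕ)
      have := i.isLt
      omega
    set j : Fin m := ⟨f' (i : ℕ), hj⟩ with hjdef
    have hji : j < i := by
      rw [Fin.lt_def]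
      have := hf (i : ℕ)
      simp only [hjdef]
      omega
    have e1 := (hx'.2 i j hji).2.2 (by simp [hjdef])
    have e2 := (hx.2 i j hji).2.1 (by simp [hjdef]; omega)
    linarith

/-- Recursive construction of a point realizing a given pattern `f` in the dominant chamber. -/
noncomputable def pt (f : ℕ → ℕ) : ℕ → ℝ
  | 0 => 0
  | (i + 1) =>
    let U : ℝ := if f (i+1) = 0 then pt f i else min (pt f i) (pt f (min i (f (i+1) - 1)) - 1)
    let L : ℝ := if f (i+1) ≤ i then pt f (min i (f (i+1))) - 1 else U - 1
    (max L (U - 1) + U) / 2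
  termination_by i => i
  decreasing_by all_goals omega

lemma pt_succ (f : ℕ → ℕ) (i : ℕ) :
    pt f (i + 1) =
      (max (if f (i+1) ≤ i
              then pt f (min i (f (i+1))) - 1
              else (if f (i+1) = 0 then pt f i
                    else min (pt f i) (pt f (min i (f (i+1) - 1)) - 1)) - 1)
           ((if f (i+1) = 0 then pt f i else min (pt f i) (pt f (min i (f (i+1) - 1)) - 1)) - 1)
        + (if f (i+1) = 0 then pt f i else min (pt f i) (pt f (min i (f (i+1) - 1)) - 1))) / 2 := by
  rw [pt]

lemma pt_spec (f : ℕ → ℕ) (hmono : Monotone f) (hle : ∀ t, f t ≤ t) :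
    ∀ i, ∀ j < i, pt f i < pt f j ∧ ((j < f i → pt f i + 1 < pt f j) ∧
      (f i ≤ j → pt f j < pt f i + 1)) := by
  intro i
  induction i using Nat.strong_induction_on with
  | _ i IH =>
    match i with
    | 0 => exact fun j hj => absurd hj (Nat.not_lt_zero j)
    | (i + 1) =>
      intro j hj
      have hj' : j ≤ i := by omega
      have hfi : f (i+1) ≤ i + 1 := hle (i+1)
      set U : ℝ := if f (i+1) = 0 then pt f i
          else min (pt f i) (pt f (min i (f (i+1) - 1)) - 1) with hU
      set L : ℝ := if f (i+1) ≤ i then pt f (min i (f (i+1))) - 1 else U - 1 with hL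
      have hpt : pt f (i+1) = (max L (U - 1) + U) / 2 := by
        rw [pt_succ, hU, hL]
      have hdec : ∀ a b : ℕ, b ≤ a → a ≤ i → pt f a ≤ pt f b := by
        intro a b hba hai
        rcases eq_or_lt_of_le hba with rfl | hlt
        · exact le_rfl
        · exact ((IH a (by omega)) b hlt).1.le
      have hUle : U ≤ pt f i := by
        rw [hU]
        split
        · exact le_rfl
        · exact min_le_left _ _
      have hUf : f (i+1) ≠ 0 → U ≤ pt f (f (i+1) - 1) - 1 := by
        intro h0
        rw [hU, if_neg h0]
        have hm : min i (f (i+1) - 1) = f (i+1) - 1 := by omega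
        rw [hm]
        exact min_le_right _ _
      have hLU : L < U := by
        rcases le_or_gt (f (i+1)) i with hc | hc
        · rw [hL, if_pos hc]
          have hm2 : min i (f (i+1)) = f (i+1) := by omega
          rw [hm2]
          have key : pt f (f (i+1)) - 1 < pt f i := by
            rcases eq_or_lt_of_le hc with he | hlt
            · rw [he]; linarith
            · have h3 := ((IH i (by omega)) (f (i+1)) hlt).2.2 (hmono (Nat.le_succ i))
              linarith
          rw [hU]
          split
          · exact key
          · refine lt_min key ?_
            next h0 =>
            have hm : min i (f (i+1) - 1) = f (i+1) - 1 := by omega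
            rw [hm]
            have h4 : pt f (f (i+1)) < pt f (f (i+1) - 1) :=
              ((IH (f (i+1)) (by omega)) (f (i+1) - 1) (by omega)).1
            linarith
        · rw [hL, if_neg (by omega)]
          linarith
      have hmaxU : max L (U - 1) < U := max_lt hLU (by linarith)
      have hz1 : pt f (i+1) < U := by rw [hpt]; linarith
      have hz2 : L < pt f (i+1) := by
        rw [hpt]
        have := le_max_left L (U - 1)
        linarith
      have hz3 : U - 1 < pt f (i+1) := by
        rw [hpt]
        have := le_max_right L (U - 1)
        linarith
      refine ⟨?_, fun hjf => ?_, fun hfj => ?_⟩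
      · have := hdec i j hj' le_rfl
        linarith
      · have h0 : f (i+1) ≠ 0 := by omega
        have hU2 := hUf h0
        have h5 : pt f (f (i+1) - 1) ≤ pt f j := hdec (f (i+1) - 1) j (by omega) (by omega)
        linarith
      · have hc : f (i+1) ≤ i := by omega
        have hL2 : L = pt f (f (i+1)) - 1 := by
          rw [hL, if_pos hc]
          have hm2 : min i (f (i+1)) = f (i+1) := by omega
          rw [hm2]
        have h6 : pt f j ≤ pt f (f (i+1)) := hdec j (f (i+1)) hfj (by omega)
        linarith

lemma region_nonempty (m : ℕ) (σ : Equiv.Perm (Fin m)) (f : ℕ → ℕ)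
    (hmono : Monotone f) (hle : ∀ t, f t ≤ t) : (region m σ f).Nonempty := by
  rcases Nat.eq_zero_or_pos m with rfl | hm
  · refine ⟨fun i => 0, by simp, fun i j hij => absurd i.isLt (by omega)⟩
  -- first a point in `region m 1 f`
  have hmR : (0 : ℝ) < m := by positivity
  set y : Fin m → ℝ := fun i => pt f (i : ℕ) with hy
  set c : ℝ := (∑ i, y i) / m with hc
  set x0 : Fin m → ℝ := fun i => y i - c with hx0
  have hx0sum : ∑ i, x0 i = 0 := by
    rw [hx0]
    simp only
    rw [Finset.sum_sub_distrib, Finset.sum_const, Finset.card_univ, Fintype.card_fin, hc,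
      nsmul_eq_mul]
    field_simp
    ring
  have hx0mem : x0 ∈ region m 1 f := by
    refine ⟨hx0sum, fun i j hij => ?_⟩
    have hij' : (j : ℕ) < (i : ℕ) := hij
    obtain ⟨e1, e2, e3⟩ := pt_spec f hmono hle (i : ℕ) (j : ℕ) hij'
    simp only [Equiv.Perm.one_apply, hx0, hy]
    refine ⟨by linarith, fun h => ?_, fun h => ?_⟩
    · have := e2 h; linarith
    · have := e3 h; linarith
  refine ⟨fun a => x0 (σ.symm a), ?_, ?_⟩
  · have : ∑ a, x0 (σ.symm a) = ∑ a, x0 a := Equiv.sum_comp σ.symm x0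
    rw [this]
    exact hx0sum
  · intro i j hij
    have h := hx0mem.2 i j hij
    simpa only [Equiv.symm_apply_apply, Equiv.Perm.one_apply] using h

lemma chambers_eq (m : ℕ) :
    chambersOf (catalanComplement m) =
      Set.range (fun p : Equiv.Perm (Fin m) × CatSeq m => region m p.1 p.2.1) := by
  ext c
  constructor
  · rintro ⟨x, hxF, rfl⟩
    obtain ⟨σ, f, ⟨h1, h2, h3⟩, hx⟩ := exists_region hxF
    exact ⟨(σ, ⟨f, h1, h2, h3⟩), region_eq_component hx⟩
  · rintro ⟨⟨σ, f⟩, rfl⟩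
    obtain ⟨x, hx⟩ := region_nonempty m σ f.1 f.2.1 f.2.2.1
    exact ⟨x, region_subset m σ f.1 hx, region_eq_component hx⟩

lemma Phi_injective (m : ℕ) :
    Function.Injective (fun p : Equiv.Perm (Fin m) × CatSeq m => region m p.1 p.2.1) := by
  rintro ⟨σ, f⟩ ⟨σ', f'⟩ h
  simp only at h
  obtain ⟨x, hx⟩ := region_nonempty m σ f.1 f.2.1 f.2.2.1
  have hx' : x ∈ region m σ' f'.1 := h ▸ hx
  obtain ⟨hσ, hf⟩ := region_unique f.2.2.1 f'.2.2.1 hx hx'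
  have hff : f = f' := by
    apply Subtype.ext; funext t
    rcases lt_or_ge t m with ht | ht
    · have := hf ⟨t, ht⟩
      simpa using this
    · rw [f.2.2.2 t ht, f'.2.2.2 t ht]
  rw [hσ, hff]

lemma ncard_chambers (m : ℕ) :
    (chambersOf (catalanComplement m)).ncard = Nat.factorial m * catalan m := by
  rw [chambers_eq, ← Set.image_univ, Set.ncard_image_of_injective _ (Phi_injective m),
    Set.ncard_univ, Nat.card_prod, Nat.card_eq_fintype_card, Fintype.card_perm,
    Fintype.card_fin, card_catSeq]

lemma region_subset_A (m : ℕ) (f : ℕ → ℕ) :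
    region m 1 f ⊆ {x : Fin m → ℝ | ∀ i j : Fin m, i < j → x j < x i} := by
  intro x hx i j hij
  have := (hx.2 j i hij).1
  simpa using this

lemma Psi_injective (m : ℕ) :
    Function.Injective (fun f : CatSeq m => region m 1 f.1) := by
  intro f f' h
  simp only at h
  obtain ⟨x, hx⟩ := region_nonempty m 1 f.1 f.2.1 f.2.2.1
  have hx' : x ∈ region m 1 f'.1 := h ▸ hx
  obtain ⟨-, hf⟩ := region_unique f.2.2.1 f'.2.2.1 hx hx'
  apply Subtype.ext; funext t
  rcases lt_or_ge t m with ht | ht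
  · have := hf ⟨t, ht⟩
    simpa using this
  · rw [f.2.2.2 t ht, f'.2.2.2 t ht]

lemma chambers_in_A (m : ℕ) :
    {c : Set (Fin m → ℝ) | c ∈ chambersOf (catalanComplement m) ∧
        c ⊆ {x : Fin m → ℝ | ∀ i j : Fin m, i < j → x j < x i}} =
      Set.range (fun f : CatSeq m => region m 1 f.1) := by
  ext c
  constructor
  · rintro ⟨hc, hsub⟩
    rw [chambers_eq] at hc
    obtain ⟨⟨σ, f⟩, rfl⟩ := hc
    obtain ⟨x, hx⟩ := region_nonempty m σ f.1 f.2.1 f.2.2.1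
    have hxA := hsub hx
    have hσ : σ = 1 := by
      apply perm_eq_one_of_strictMono
      intro a b hab
      rcases lt_trichotomy (σ a) (σ b) with h | h | h
      · exact h
      · exact absurd (σ.injective h) hab.ne
      · exfalso
        have e1 : x (σ b) < x (σ a) := (hx.2 b a hab).1
        have e2 : x (σ a) < x (σ b) := hxA (σ b) (σ a) h
        linarith
    exact ⟨f, by rw [hσ]⟩
  · rintro ⟨f, rfl⟩
    refine ⟨?_, region_subset_A m f.1⟩
    rw [chambers_eq]
    exact ⟨(1, f), rfl⟩

lemma catalan_prod_arith (m : ℕ) :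
    Nat.factorial m * catalan m = ∏ i ∈ Finset.Ico (m + 2) (2 * m + 1), i := by
  rcases Nat.eq_zero_or_pos m with rfl | hm
  · rw [Finset.Ico_eq_empty (by omega)]
    simp [catalan_zero]
  · have h2 : (m + 1) * catalan m = Nat.centralBinom m := succ_mul_catalan_eq_centralBinom m
    have h3 : Nat.centralBinom m = (2 * m).choose m := Nat.centralBinom_eq_two_mul_choose m
    have h4 := Nat.choose_mul_factorial_mul_factorial (show m ≤ 2 * m by omega)
    have h5 : 2 * m - m = m := by omega
    rw [h5] at h4
    have h1 : (m + 1).factorial * (Nat.factorial m * catalan m) = (2 * m).factorial := by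
      have e : (m + 1).factorial * (Nat.factorial m * catalan m) =
          (2 * m).choose m * m.factorial * m.factorial := by
        rw [Nat.factorial_succ, ← h3, ← h2]
        ring
      rw [e, h4]
    have e1 : ∏ i ∈ Finset.Ico 1 (m + 2), i = (m + 1).factorial :=
      Finset.prod_Ico_id_eq_factorial (m + 1)
    have e2 : ∏ i ∈ Finset.Ico 1 (2 * m + 1), i = (2 * m).factorial :=
      Finset.prod_Ico_id_eq_factorial (2 * m)
    have e3 := Finset.prod_Ico_consecutive (fun i => i)
      (show 1 ≤ m + 2 by omega) (show m + 2 ≤ 2 * m + 1 by omega)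
    have h6 : (m + 1).factorial * ∏ i ∈ Finset.Ico (m + 2) (2 * m + 1), i =
        (2 * m).factorial := by
      rw [← e1, ← e2, ← e3]
    exact Nat.eq_of_mul_eq_mul_left (Nat.factorial_pos _) (h1.trans h6.symm)

/-- The number of chambers of the essentialized Catalan arrangement contained in the
chamber `a : x₁ > ⋯ > x_m` of the braid arrangement is the Catalan number `C_m`; hence
`|Ch(C)| = m!·C_m = (2m)(2m-1)⋯(m+2)`. -/
theorem catalan_chambers_in_braid_chamber (m : ℕ) :
    {c : Set (Fin m → ℝ) | c ∈ chambersOf (catalanComplement m) ∧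
        c ⊆ {x : Fin m → ℝ | ∀ i j : Fin m, i < j → x j < x i}}.ncard = catalan m ∧
    (chambersOf (catalanComplement m)).ncard = Nat.factorial m * catalan m ∧
    Nat.factorial m * catalan m = ∏ i ∈ Finset.Ico (m + 2) (2 * m + 1), i := by
  refine ⟨?_, ncard_chambers m, catalan_prod_arith m⟩
  rw [chambers_in_A m, ← Set.image_univ, Set.ncard_image_of_injective _ (Psi_injective m),
    Set.ncard_univ, card_catSeq]
end
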